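/- arXiv:2301.04287 — 8 statements merged into one kernel-verified Lean document; each statement's English description precedes it below -/
import Mathlib

section
/- If χ_1 = χ_2 = ⋯ = χ_{n+1}, then |S_n(χ,b) + ((q-1)^n / q)·χ_1(b)| ≤ q^{(n+1)/2}. -/
open Finset

/-- The twisted inverted `n`-variable Kloosterman sum
`S_n(χ,b) = ∑_{x_1⋯x_{n+1}=b, x_1+⋯+x_{n+1}≠0} χ_1(x_1)⋯χ_{n+1}(x_{n+1}) ψ(1/(x_1+⋯+x_{n+1}))`. -/
noncomputable def invKloosSum {F : Type} [Field F] [Fintype F] [DecidableEq F]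
    (ψ : AddChar F ℂ) (n : ℕ) (χ : Fin (n + 1) → (Fˣ →* ℂ)) (b : Fˣ) : ℂ :=
  ∑ x ∈ Finset.univ.filter
      (fun x : Fin (n + 1) → Fˣ => (∏ i, x i) = b ∧ (∑ i, (x i : F)) ≠ 0),
    (∏ i, χ i (x i)) * ψ ((∑ i, (x i : F))⁻¹)

section Aux

variable {F : Type} [Field F] [Fintype F] [DecidableEq F]

noncomputable instance : Fintype (MulChar F ℂ) := Fintype.ofFinite _

instance : NeZero (Monoid.exponent Fˣ) := ⟨Monoid.exponent_ne_zero_of_finite⟩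

lemma card_mulChar : (Fintype.card (MulChar F ℂ)) = (Fintype.card F) - 1 := by
  have h1 : Nat.card (MulChar F ℂ) = Nat.card Fˣ :=
    MulChar.card_eq_card_units_of_hasEnoughRootsOfUnity F ℂ
  rw [Nat.card_eq_fintype_card, Nat.card_eq_fintype_card] at h1
  rw [h1, Fintype.card_units]

/-- Orthogonality over the dual group. -/
lemma sum_mulChar_apply (v : F) :
    ∑ χ : MulChar F ℂ, χ v = if v = 1 then (Fintype.card F : ℂ) - 1 else 0 := by
  by_cases hv : v = 1
  · rw [if_pos hv, hv]
    simp only [MulChar.map_one, Finset.sum_const, Finset.card_univ, nsmul_eq_mul, mul_one]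
    rw [card_mulChar, Nat.cast_sub Fintype.one_lt_card.le, Nat.cast_one]
  · rw [if_neg hv]
    obtain ⟨χ₀, hχ₀⟩ := MulChar.exists_apply_ne_one_of_hasEnoughRootsOfUnity F ℂ hv
    have key : χ₀ v * ∑ χ : MulChar F ℂ, χ v = ∑ χ : MulChar F ℂ, χ v := by
      rw [Finset.mul_sum]
      exact Fintype.sum_bijective (χ₀ * ·) (Group.mulLeft_bijective χ₀) _ _
        (fun χ => (MulChar.mul_apply χ₀ χ v).symm)
    by_contra hS
    exact hχ₀ (mul_right_cancel₀ hS (by rw [key, one_mul]))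

/-- Fourier inversion for ψ along the multiplicative group. -/
lemma sum_gauss_mul (ψ : AddChar F ℂ) (s : F) :
    ∑ χ : MulChar F ℂ, gaussSum χ ψ * χ s
      = if s = 0 then 0 else ((Fintype.card F : ℂ) - 1) * ψ s⁻¹ := by
  have h : ∀ χ : MulChar F ℂ, gaussSum χ ψ * χ s = ∑ t : F, ψ t * χ (t * s) := by
    intro χ
    rw [gaussSum, Finset.sum_mul]
    exact Finset.sum_congr rfl fun t _ => by rw [map_mul]; ring
  rw [Finset.sum_congr rfl fun χ _ => h χ, Finset.sum_comm]
  have h2 : ∀ t : F, ∑ χ : MulChar F ℂ, ψ t * χ (t * s)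
      = ψ t * (if t * s = 1 then (Fintype.card F : ℂ) - 1 else 0) := by
    intro t
    rw [← Finset.mul_sum, sum_mulChar_apply]
  rw [Finset.sum_congr rfl fun t _ => h2 t]
  by_cases hs : s = 0
  · simp [hs]
  · rw [if_neg hs, Finset.sum_eq_single s⁻¹]
    · rw [if_pos (by field_simp), mul_comm]
    · intro t _ ht
      rw [if_neg (fun h => ht (eq_inv_of_mul_eq_one_left h)), mul_zero]
    · intro h; exact absurd (Finset.mem_univ _) h

lemma gaussSum_mulShift_ne_zero (χ : MulChar F ℂ) (ψ : AddChar F ℂ) {a : F} (ha : a ≠ 0) :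
    gaussSum χ (AddChar.mulShift ψ a) = χ a⁻¹ * gaussSum χ ψ := by
  have := gaussSum_mulShift χ ψ (Units.mk0 a ha)
  calc gaussSum χ (AddChar.mulShift ψ a)
      = (χ a⁻¹ * χ a) * gaussSum χ (AddChar.mulShift ψ a) := by
        rw [← map_mul, inv_mul_cancel₀ ha, MulChar.map_one, one_mul]
    _ = χ a⁻¹ * gaussSum χ ψ := by
        rw [mul_assoc]
        rw [show ((Units.mk0 a ha : Fˣ) : F) = a from rfl] at this
        rw [this]

lemma gaussSum_mulShift_zero (χ : MulChar F ℂ) (ψ : AddChar F ℂ) :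
    gaussSum χ (AddChar.mulShift ψ 0)
      = if χ = 1 then (Fintype.card F : ℂ) - 1 else 0 := by
  rw [AddChar.mulShift_zero, gaussSum]
  simp only [AddChar.one_apply, mul_one]
  by_cases hχ : χ = 1
  · rw [if_pos hχ, hχ, MulChar.sum_one_eq_card_units, Fintype.card_units,
      Nat.cast_sub Fintype.one_lt_card.le, Nat.cast_one]
  · rw [if_neg hχ, MulChar.sum_eq_zero_of_ne_one hχ]

lemma gaussSum_one_eq (ψ : AddChar F ℂ) (hψ : ψ ≠ 1) : gaussSum (1 : MulChar F ℂ) ψ = -1 := by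
  have h0 : ∑ t : F, ψ t = 0 := AddChar.sum_eq_zero_of_ne_one hψ
  have : gaussSum (1 : MulChar F ℂ) ψ = (∑ t : F, ψ t) - ψ 0 := by
    rw [gaussSum, ← Finset.sum_erase_add _ _ (Finset.mem_univ (0 : F)),
        ← Finset.sum_erase_add _ (fun t => ψ t) (Finset.mem_univ (0 : F))]
    simp only [MulChar.map_zero, zero_mul, add_zero]
    rw [add_sub_cancel_right]
    refine Finset.sum_congr rfl fun t ht => ?_
    rw [MulChar.one_apply (isUnit_iff_ne_zero.mpr (Finset.ne_of_mem_erase ht)), one_mul]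
  rw [this, h0, AddChar.map_zero_eq_one, zero_sub]

lemma addChar_sum_eq_prod' (ψ : AddChar F ℂ) {k : Type} (s : Finset k) (f : k → F) :
    ψ (∑ i ∈ s, f i) = ∏ i ∈ s, ψ (f i) := by
  classical
  induction s using Finset.induction_on with
  | empty => simp [AddChar.map_zero_eq_one]
  | insert _ _ h ih =>
      rw [Finset.sum_insert h, Finset.prod_insert h, AddChar.map_add_eq_mul, ih]

lemma addChar_sum_eq_prod (ψ : AddChar F ℂ) {k : Type} [Fintype k] (f : k → F) :
    ψ (∑ i, f i) = ∏ i, ψ (f i) := addChar_sum_eq_prod' ψ Finset.univ f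

/-- Step 3: additive Fourier expansion of the inner character sum. -/
lemma step3 {ψ : AddChar F ℂ} (hψ : ψ.IsPrimitive) (lam mu : MulChar F ℂ) (n : ℕ) :
    (Fintype.card F : ℂ) * (∑ x : Fin (n+1) → F, (∏ i, lam (x i)) * mu (∑ i, x i))
      = ∑ a : F, gaussSum mu (AddChar.mulShift ψ (-a))
          * (gaussSum lam (AddChar.mulShift ψ a)) ^ (n+1) := by
  have expand : ∀ a : F,
      gaussSum mu (AddChar.mulShift ψ (-a)) * (gaussSum lam (AddChar.mulShift ψ a)) ^ (n+1)
        = ∑ s : F, ∑ x : Fin (n+1) → F,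
            (mu s * ((∏ i, lam (x i)))) * ψ (a * ((∑ i, x i) - s)) := by
    intro a
    rw [show (gaussSum lam (AddChar.mulShift ψ a)) ^ (n+1)
        = ∑ x : Fin (n+1) → F, ∏ i, (lam (x i) * ψ (a * x i)) from by
      rw [gaussSum]
      simp only [AddChar.mulShift_apply]
      exact Fintype.sum_pow _ (n+1)]
    rw [gaussSum, Finset.sum_mul_sum]
    refine Finset.sum_congr rfl fun s _ => Finset.sum_congr rfl fun x _ => ?_
    rw [Finset.prod_mul_distrib, ← addChar_sum_eq_prod, ← Finset.mul_sum,
      AddChar.mulShift_apply]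
    have harg : a * ((∑ i, x i) - s) = a * (∑ i, x i) + (-a) * s := by ring
    rw [harg, AddChar.map_add_eq_mul]
    ring
  rw [Finset.sum_congr rfl fun a _ => expand a]
  rw [Finset.sum_comm]
  have h1 : ∀ s : F, ∑ a : F, ∑ x : Fin (n+1) → F,
      (mu s * ((∏ i, lam (x i)))) * ψ (a * ((∑ i, x i) - s))
      = ∑ x : Fin (n+1) → F, (mu s * ((∏ i, lam (x i))))
          * (if (∑ i, x i) - s = 0 then (Fintype.card F : ℂ) else 0) := by
    intro s
    rw [Finset.sum_comm]
    refine Finset.sum_congr rfl fun x _ => ?_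
    rw [← Finset.mul_sum, AddChar.sum_mulShift _ hψ, apply_ite (Nat.cast : ℕ → ℂ),
      Nat.cast_zero]
  rw [Finset.sum_congr rfl fun s _ => h1 s, Finset.sum_comm, Finset.mul_sum]
  refine Finset.sum_congr rfl fun x _ => ?_
  symm
  refine (Finset.sum_eq_single (∑ i, x i) ?_ ?_).trans ?_
  · intro s _ hs
    rw [if_neg (fun h => hs (sub_eq_zero.mp h).symm), mul_zero]
  · intro h; exact absurd (Finset.mem_univ _) h
  · rw [if_pos (sub_self _)]
    ring

lemma step4 (ψ : AddChar F ℂ) (lam mu : MulChar F ℂ) (n : ℕ) :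
    ∑ a : F, gaussSum mu (AddChar.mulShift ψ (-a)) * (gaussSum lam (AddChar.mulShift ψ a)) ^ (n+1)
      = (if mu = 1 then (Fintype.card F : ℂ) - 1 else 0)
          * (if lam = 1 then (Fintype.card F : ℂ) - 1 else 0) ^ (n+1)
        + mu (-1) * (if mu * lam ^ (n+1) = 1 then (Fintype.card F : ℂ) - 1 else 0)
          * gaussSum mu ψ * (gaussSum lam ψ) ^ (n+1) := by
  rw [← Finset.sum_erase_add _ _ (Finset.mem_univ (0 : F)), add_comm]
  congr 1
  · rw [neg_zero, gaussSum_mulShift_zero, gaussSum_mulShift_zero]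
  · have hterm : ∀ a ∈ Finset.univ.erase (0 : F),
        gaussSum mu (AddChar.mulShift ψ (-a)) * (gaussSum lam (AddChar.mulShift ψ a)) ^ (n+1)
          = mu (-1) * (mu * lam ^ (n+1))⁻¹ a * gaussSum mu ψ * (gaussSum lam ψ) ^ (n+1) := by
      intro a ha
      have ha0 : a ≠ 0 := Finset.ne_of_mem_erase ha
      rw [gaussSum_mulShift_ne_zero mu ψ (neg_ne_zero.mpr ha0),
        gaussSum_mulShift_ne_zero lam ψ ha0, mul_pow]
      have h1 : mu (-a)⁻¹ = mu (-1) * mu a⁻¹ := by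
        rw [← map_mul]; congr 1; field_simp
      have h2 : (lam a⁻¹) ^ (n+1) = (lam ^ (n+1)) a⁻¹ :=
        (MulChar.pow_apply' lam (Nat.succ_ne_zero n) a⁻¹).symm
      rw [h1, h2]
      rw [MulChar.inv_apply' (mu * lam ^ (n+1)) a, MulChar.mul_apply]
      ring
    rw [Finset.sum_congr rfl hterm]
    have : ∑ a ∈ Finset.univ.erase (0 : F), (mu * lam ^ (n+1))⁻¹ a
        = if mu * lam ^ (n+1) = 1 then (Fintype.card F : ℂ) - 1 else 0 := by
      rw [Finset.sum_erase _ (by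
        rw [MulChar.map_zero])]
      by_cases hρ : (mu * lam ^ (n+1))⁻¹ = 1
      · rw [hρ, MulChar.sum_one_eq_card_units, if_pos (inv_eq_one.mp hρ),
          Fintype.card_units, Nat.cast_sub Fintype.one_lt_card.le, Nat.cast_one]
      · rw [MulChar.sum_eq_zero_of_ne_one hρ, if_neg (fun h => hρ (by rw [h, inv_one]))]
    calc ∑ a ∈ Finset.univ.erase (0:F),
          mu (-1) * (mu * lam ^ (n+1))⁻¹ a * gaussSum mu ψ * (gaussSum lam ψ) ^ (n+1)
        = mu (-1) * (∑ a ∈ Finset.univ.erase (0:F), (mu * lam ^ (n+1))⁻¹ a)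
            * gaussSum mu ψ * (gaussSum lam ψ) ^ (n+1) := by
          rw [Finset.mul_sum, Finset.sum_mul, Finset.sum_mul]
      _ = _ := by rw [this]

lemma abs_mulChar_eq_one (χ : MulChar F ℂ) {v : F} (hv : v ≠ 0) :
    ‖χ v‖ = 1 := by
  have h1 : (χ v) ^ (Fintype.card F - 1) = 1 := by
    rw [← map_pow, FiniteField.pow_card_sub_one_eq_one v hv, MulChar.map_one]
  exact Complex.norm_eq_one_of_pow_eq_one h1
    (Nat.sub_ne_zero_of_lt Fintype.one_lt_card)

lemma abs_psi_eq_one (ψ : AddChar F ℂ) (t : F) : ‖ψ t‖ = 1 := by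
  have h1 : (ψ t) ^ (Fintype.card F) = 1 := by
    rw [← AddChar.map_nsmul_eq_pow, nsmul_eq_mul, FiniteField.cast_card_eq_zero, zero_mul,
      AddChar.map_zero_eq_one]
  exact Complex.norm_eq_one_of_pow_eq_one h1 Fintype.card_ne_zero

lemma conj_gaussSum (χ : MulChar F ℂ) (ψ : AddChar F ℂ) :
    (starRingEnd ℂ) (gaussSum χ ψ) = gaussSum χ⁻¹ ψ⁻¹ := by
  rw [gaussSum, gaussSum, map_sum]
  refine Finset.sum_congr rfl fun t _ => ?_
  rw [map_mul]
  congr 1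
  · rw [← MulChar.star_apply']; rfl
  · rw [AddChar.inv_apply', Complex.inv_eq_conj (abs_psi_eq_one ψ t)]

lemma abs_gaussSum_le (χ : MulChar F ℂ) {ψ : AddChar F ℂ} (hψ : ψ ≠ 1) :
    ‖gaussSum χ ψ‖ ≤ Real.sqrt (Fintype.card F) := by
  by_cases hχ : χ = 1
  · rw [hχ, gaussSum_one_eq ψ hψ]
    rw [show ‖(-1:ℂ)‖ = 1 by simp,
      show (1:ℝ) = Real.sqrt 1 from (Real.sqrt_one).symm]
    exact Real.sqrt_le_sqrt (by exact_mod_cast (Fintype.one_lt_card (α := F)).le)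
  · have hprim : ψ.IsPrimitive := AddChar.IsPrimitive.of_ne_one hψ
    have key := gaussSum_mul_gaussSum_eq_card hχ hprim
    rw [← conj_gaussSum, Complex.mul_conj] at key
    have h2 : Complex.normSq (gaussSum χ ψ) = (Fintype.card F : ℝ) := by
      exact_mod_cast key
    rw [Complex.norm_def, h2]

lemma step1 (ψ : AddChar F ℂ) (b : Fˣ) (n : ℕ) :
    ((Fintype.card F : ℂ) - 1) * (∑ x : Fin (n+1) → F,
        if (∏ i, x i) = (b:F) ∧ (∑ i, x i) ≠ 0 then ψ ((∑ i, x i)⁻¹) else 0)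
      = ∑ mu : MulChar F ℂ, gaussSum mu ψ *
          ∑ x : Fin (n+1) → F, (if (∏ i, x i) = (b:F) then 1 else 0) * mu (∑ i, x i) := by
  rw [Finset.sum_congr rfl fun (mu : MulChar F ℂ) _ => Finset.mul_sum Finset.univ
    (fun x : Fin (n+1) → F => (if (∏ i, x i) = (b:F) then 1 else 0) * mu (∑ i, x i))
    (gaussSum mu ψ), Finset.sum_comm, Finset.mul_sum]
  refine Finset.sum_congr rfl fun x _ => ?_
  have h1 : ∑ mu : MulChar F ℂ, gaussSum mu ψ *
      ((if (∏ i, x i) = (b:F) then 1 else 0) * mu (∑ i, x i))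
      = (if (∏ i, x i) = (b:F) then 1 else 0) *
        ∑ mu : MulChar F ℂ, gaussSum mu ψ * mu (∑ i, x i) := by
    rw [Finset.mul_sum]; exact Finset.sum_congr rfl fun mu _ => by ring
  rw [h1, sum_gauss_mul]
  by_cases hp : (∏ i, x i) = (b:F)
  · by_cases hs : (∑ i, x i) = 0
    · have hc1 : ¬((∏ i, x i) = (b:F) ∧ (∑ i, x i) ≠ 0) := fun hc => hc.2 hs
      rw [if_neg hc1, if_pos hp, if_pos hs]; ring
    · have hc1 : (∏ i, x i) = (b:F) ∧ (∑ i, x i) ≠ 0 := ⟨hp, hs⟩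
      rw [if_pos hc1, if_pos hp, if_neg hs]; ring
  · have hc1 : ¬((∏ i, x i) = (b:F) ∧ (∑ i, x i) ≠ 0) := fun hc => hp hc.1
    rw [if_neg hc1, if_neg hp]; ring

lemma step2 (ψ : AddChar F ℂ) (b : Fˣ) (n : ℕ) (mu : MulChar F ℂ) :
    ((Fintype.card F : ℂ) - 1) * (∑ x : Fin (n+1) → F,
        (if (∏ i, x i) = (b:F) then 1 else 0) * mu (∑ i, x i))
      = ∑ lam : MulChar F ℂ, lam ((b⁻¹ : Fˣ) : F) *
          ∑ x : Fin (n+1) → F, (∏ i, lam (x i)) * mu (∑ i, x i) := by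
  rw [Finset.sum_congr rfl fun (lam : MulChar F ℂ) _ => Finset.mul_sum Finset.univ
    (fun x : Fin (n+1) → F => (∏ i, lam (x i)) * mu (∑ i, x i)) (lam ((b⁻¹ : Fˣ) : F)),
    Finset.sum_comm, Finset.mul_sum]
  refine Finset.sum_congr rfl fun x _ => ?_
  have h1 : ∀ lam : MulChar F ℂ, lam ((b⁻¹ : Fˣ) : F) * ((∏ i, lam (x i)) * mu (∑ i, x i))
      = lam ((∏ i, x i) * ((b:F))⁻¹) * mu (∑ i, x i) := by
    intro lam
    rw [map_mul, map_prod]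
    have : ((b⁻¹ : Fˣ) : F) = ((b:F))⁻¹ := by
      rw [← Units.val_inv_eq_inv_val]
    rw [this]; ring
  rw [Finset.sum_congr rfl fun lam _ => h1 lam, ← Finset.sum_mul, sum_mulChar_apply]
  have hb : (b : F) ≠ 0 := Units.ne_zero b
  by_cases hp : (∏ i, x i) = (b:F)
  · rw [if_pos hp, if_pos ((mul_inv_eq_one₀ hb).mpr hp)]; ring
  · rw [if_neg hp, if_neg (fun h => hp ((mul_inv_eq_one₀ hb).mp h))]; ring

lemma master {ψ : AddChar F ℂ} (hψ : ψ ≠ 1) (b : Fˣ) (n : ℕ) :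
    (Fintype.card F : ℂ) * ((Fintype.card F : ℂ) - 1) * (∑ x : Fin (n+1) → F,
        if (∏ i, x i) = (b:F) ∧ (∑ i, x i) ≠ 0 then ψ ((∑ i, x i)⁻¹) else 0)
      + ((Fintype.card F : ℂ) - 1) ^ (n+1)
      = ∑ lam : MulChar F ℂ, lam ((b⁻¹ : Fˣ) : F) * ((lam ^ (n+1))⁻¹ (-1)
          * gaussSum ((lam ^ (n+1))⁻¹) ψ ^ 2 * gaussSum lam ψ ^ (n+1)) := by
  have hprim : ψ.IsPrimitive := AddChar.IsPrimitive.of_ne_one hψ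
  set q : ℂ := (Fintype.card F : ℂ) with hqdef
  have hq1 : q - 1 ≠ 0 := sub_ne_zero.mpr (by
    rw [hqdef]; exact_mod_cast (Fintype.one_lt_card (α := F)).ne')
  apply mul_left_cancel₀ hq1
  set T : ℂ := ∑ x : Fin (n+1) → F,
      if (∏ i, x i) = (b:F) ∧ (∑ i, x i) ≠ 0 then ψ ((∑ i, x i)⁻¹) else 0 with hT
  set W : MulChar F ℂ → ℂ := fun mu => ∑ x : Fin (n+1) → F,
      (if (∏ i, x i) = (b:F) then 1 else 0) * mu (∑ i, x i) with hW
  set Z : MulChar F ℂ → MulChar F ℂ → ℂ := fun lam mu =>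
      ∑ x : Fin (n+1) → F, (∏ i, lam (x i)) * mu (∑ i, x i) with hZ
  have e1 : (q - 1) * T = ∑ mu : MulChar F ℂ, gaussSum mu ψ * W mu := step1 ψ b n
  have e2 : ∀ mu : MulChar F ℂ, (q - 1) * W mu
      = ∑ lam : MulChar F ℂ, lam ((b⁻¹ : Fˣ) : F) * Z lam mu := fun mu => step2 ψ b n mu
  have e3 : ∀ lam mu : MulChar F ℂ, q * Z lam mu
      = (if mu = 1 then q - 1 else 0) * (if lam = 1 then q - 1 else 0) ^ (n+1)
        + mu (-1) * (if mu * lam ^ (n+1) = 1 then q - 1 else 0)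
          * gaussSum mu ψ * (gaussSum lam ψ) ^ (n+1) :=
    fun lam mu => (step3 hprim lam mu n).trans (step4 ψ lam mu n)
  have big : (q - 1) * ((q - 1) * (q * T))
      = ∑ mu : MulChar F ℂ, ∑ lam : MulChar F ℂ,
          gaussSum mu ψ * (lam ((b⁻¹ : Fˣ) : F) * (q * Z lam mu)) := by
    calc (q - 1) * ((q - 1) * (q * T))
        = q * ((q-1) * ((q-1) * T)) := by ring
      _ = q * ((q-1) * ∑ mu : MulChar F ℂ, gaussSum mu ψ * W mu) := by rw [e1]
      _ = ∑ mu : MulChar F ℂ, gaussSum mu ψ * (q * ((q-1) * W mu)) := by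
          rw [Finset.mul_sum, Finset.mul_sum]
          exact Finset.sum_congr rfl fun mu _ => by ring
      _ = ∑ mu : MulChar F ℂ, gaussSum mu ψ *
            (q * ∑ lam : MulChar F ℂ, lam ((b⁻¹ : Fˣ) : F) * Z lam mu) := by
          exact Finset.sum_congr rfl fun mu _ => by rw [e2 mu]
      _ = ∑ mu : MulChar F ℂ, ∑ lam : MulChar F ℂ,
            gaussSum mu ψ * (lam ((b⁻¹ : Fˣ) : F) * (q * Z lam mu)) := by
          refine Finset.sum_congr rfl fun mu _ => ?_
          rw [Finset.mul_sum, Finset.mul_sum]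
          exact Finset.sum_congr rfl fun lam _ => by ring
  rw [Finset.sum_congr rfl (fun (mu : MulChar F ℂ) _ => Finset.sum_congr rfl
    (fun (lam : MulChar F ℂ) _ => by rw [e3 lam mu])) ] at big
  have split : ∀ (mu lam : MulChar F ℂ),
      gaussSum mu ψ * (lam ((b⁻¹ : Fˣ) : F) *
        ((if mu = 1 then q - 1 else 0) * (if lam = 1 then q - 1 else 0) ^ (n+1)
          + mu (-1) * (if mu * lam ^ (n+1) = 1 then q - 1 else 0)
            * gaussSum mu ψ * (gaussSum lam ψ) ^ (n+1)))
      = gaussSum mu ψ * lam ((b⁻¹ : Fˣ) : F) *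
          (if mu = 1 then q - 1 else 0) * (if lam = 1 then q - 1 else 0) ^ (n+1)
        + gaussSum mu ψ * lam ((b⁻¹ : Fˣ) : F) * mu (-1)
            * (if mu * lam ^ (n+1) = 1 then q - 1 else 0)
            * gaussSum mu ψ * (gaussSum lam ψ) ^ (n+1) := fun mu lam => by ring
  rw [Finset.sum_congr rfl (fun (mu : MulChar F ℂ) _ => Finset.sum_congr rfl
    (fun (lam : MulChar F ℂ) _ => split mu lam)),
    Finset.sum_congr rfl (fun (mu : MulChar F ℂ) _ =>
      Finset.sum_add_distrib), Finset.sum_add_distrib] at big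
  have p1 : (∑ mu : MulChar F ℂ, ∑ lam : MulChar F ℂ,
      gaussSum mu ψ * lam ((b⁻¹ : Fˣ) : F) *
        (if mu = 1 then q - 1 else 0) * (if lam = 1 then q - 1 else 0) ^ (n+1))
      = -((q-1) ^ (n+2)) := by
    have inner : ∀ mu : MulChar F ℂ, ∑ lam : MulChar F ℂ,
        gaussSum mu ψ * lam ((b⁻¹ : Fˣ) : F) *
          (if mu = 1 then q - 1 else 0) * (if lam = 1 then q - 1 else 0) ^ (n+1)
        = gaussSum mu ψ * (if mu = 1 then q - 1 else 0) * (q-1) ^ (n+1) := by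
      intro mu
      rw [Finset.sum_eq_single (1 : MulChar F ℂ)]
      · rw [if_pos rfl, MulChar.one_apply (Units.isUnit b⁻¹)]
        ring
      · intro lam _ hlam
        rw [if_neg hlam, zero_pow (Nat.succ_ne_zero n), mul_zero]
      · intro h; exact absurd (Finset.mem_univ _) h
    rw [Finset.sum_congr rfl fun mu _ => inner mu, Finset.sum_eq_single (1 : MulChar F ℂ)]
    · rw [if_pos rfl, gaussSum_one_eq ψ hψ]
      ring
    · intro mu _ hmu
      rw [if_neg hmu, mul_zero, zero_mul]
    · intro h; exact absurd (Finset.mem_univ _) h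
  have p2 : (∑ mu : MulChar F ℂ, ∑ lam : MulChar F ℂ,
      gaussSum mu ψ * lam ((b⁻¹ : Fˣ) : F) * mu (-1)
        * (if mu * lam ^ (n+1) = 1 then q - 1 else 0)
        * gaussSum mu ψ * (gaussSum lam ψ) ^ (n+1))
      = (q - 1) * ∑ lam : MulChar F ℂ, lam ((b⁻¹ : Fˣ) : F) * ((lam ^ (n+1))⁻¹ (-1)
          * gaussSum ((lam ^ (n+1))⁻¹) ψ ^ 2 * gaussSum lam ψ ^ (n+1)) := by
    rw [Finset.sum_comm, Finset.mul_sum]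
    refine Finset.sum_congr rfl fun lam _ => ?_
    rw [Finset.sum_eq_single ((lam ^ (n+1))⁻¹ : MulChar F ℂ)]
    · rw [if_pos (inv_mul_cancel _)]
      ring
    · intro mu _ hmu
      rw [if_neg (fun h => hmu (eq_inv_of_mul_eq_one_left h)), mul_zero, zero_mul, zero_mul]
    · intro h; exact absurd (Finset.mem_univ _) h
  rw [p1, p2] at big
  calc (q-1) * (q * (q-1) * T + (q-1)^(n+1))
      = (q - 1) * ((q - 1) * (q * T)) + (q-1)^(n+2) := by ring
    _ = -((q-1)^(n+2)) + (q-1) * (∑ lam : MulChar F ℂ, lam ((b⁻¹ : Fˣ) : F) *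
          ((lam ^ (n+1))⁻¹ (-1) * gaussSum ((lam ^ (n+1))⁻¹) ψ ^ 2
            * gaussSum lam ψ ^ (n+1))) + (q-1)^(n+2) := by rw [big]
    _ = _ := by ring

lemma unit_sum {k : ℕ} (g : (Fin k → F) → ℂ) (hg : ∀ x : Fin k → F, (∃ i, x i = 0) → g x = 0) :
    ∑ x : Fin k → Fˣ, g (fun i => (x i : F)) = ∑ x : Fin k → F, g x := by
  classical
  rw [← Finset.sum_filter_of_ne (p := fun x : Fin k → F => ∀ i, x i ≠ 0)
    (fun x _ hx i hxi => hx (hg x ⟨i, hxi⟩))]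
  refine Finset.sum_bij (fun (x : Fin k → Fˣ) _ => fun i => ((x i : F))) ?_ ?_ ?_ ?_
  · intro x _
    simp only [Finset.mem_filter, Finset.mem_univ, true_and]
    exact fun i => Units.ne_zero (x i)
  · intro x _ y _ h
    funext i
    exact Units.ext (congrFun h i)
  · intro y hy
    simp only [Finset.mem_filter, Finset.mem_univ, true_and] at hy
    exact ⟨fun i => Units.mk0 (y i) (hy i), Finset.mem_univ _, rfl⟩
  · intro x _
    rfl

end Aux

theorem stmt0 (p m n : ℕ) (hp : p.Prime) (hm : 0 < m) (hn : 1 ≤ n)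
    (F : Type) [Field F] [Fintype F] [DecidableEq F]
    (hq : Fintype.card F = p ^ m)
    (ψ : AddChar F ℂ) (hψ : ∃ a : F, ψ a ≠ 1)
    (χ : Fin (n + 1) → (Fˣ →* ℂ)) (b : Fˣ)
    (hχ : ∀ i j, χ i = χ j) :
    ‖invKloosSum ψ n χ b
        + (((Fintype.card F : ℂ) - 1) ^ n / (Fintype.card F : ℂ)) * χ 0 b‖
      ≤ (Fintype.card F : ℝ) ^ (((n : ℝ) + 1) / 2) := by
  classical
  obtain ⟨a0, ha0⟩ := hψ
  have hψ1 : ψ ≠ 1 := fun h => ha0 (by rw [h]; rfl)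
  -- notation
  set qn : ℕ := Fintype.card F with hqn
  have hq2 : 2 ≤ qn := Fintype.one_lt_card
  have hq0C : (qn : ℂ) ≠ 0 := Nat.cast_ne_zero.mpr (by omega)
  have hq1C : (qn : ℂ) - 1 ≠ 0 := sub_ne_zero.mpr (by exact_mod_cast (by omega : qn ≠ 1))
  -- the untwisted sum over units
  set Tu : ℂ := ∑ x ∈ Finset.univ.filter
      (fun x : Fin (n + 1) → Fˣ => (∏ i, x i) = b ∧ (∑ i, (x i : F)) ≠ 0),
      ψ ((∑ i, (x i : F))⁻¹) with hTu
  -- invKloosSum = χ 0 b * Tu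
  have hIK : invKloosSum ψ n χ b = χ 0 b * Tu := by
    rw [invKloosSum, hTu, Finset.mul_sum]
    refine Finset.sum_congr rfl fun x hx => ?_
    rw [Finset.mem_filter] at hx
    have h1 : (∏ i, χ i (x i)) = χ 0 b := by
      rw [show (∏ i, χ i (x i)) = ∏ i, χ 0 (x i) from
        Finset.prod_congr rfl fun i _ => by rw [hχ i 0],
        ← map_prod (χ 0), hx.2.1]
    rw [h1]
  -- Tu equals the full-domain sum
  set T : ℂ := ∑ x : Fin (n+1) → F,
      if (∏ i, x i) = (b:F) ∧ (∑ i, x i) ≠ 0 then ψ ((∑ i, x i)⁻¹) else 0 with hTdef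
  have hTuT : Tu = T := by
    rw [hTu, Finset.sum_filter, hTdef]
    have := unit_sum (F := F) (k := n+1)
      (fun x : Fin (n+1) → F =>
        if (∏ i, x i) = (b:F) ∧ (∑ i, x i) ≠ 0 then ψ ((∑ i, x i)⁻¹) else 0)
      (fun x hex => by
        obtain ⟨i, hi⟩ := hex
        have hP : ¬((∏ j, x j) = (b:F)) := fun h =>
          Units.ne_zero b (h.symm.trans (Finset.prod_eq_zero (Finset.mem_univ i) hi))
        simp only [hP, false_and, if_false])
    rw [← this]
    refine Finset.sum_congr rfl fun x _ => ?_
    dsimp only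
    have hcoe : (∏ i, ((x i : F))) = ((∏ i, x i : Fˣ) : F) := by
      rw [← Units.coeHom_apply, map_prod]
      rfl
    have hcond : ((∏ i, ((x i : F))) = (b:F) ∧ (∑ i, ((x i : F))) ≠ 0)
        ↔ ((∏ i, x i) = b ∧ (∑ i, ((x i : F))) ≠ 0) := by
      rw [hcoe]
      exact and_congr_left fun _ => ⟨fun h => Units.ext h, fun h => congrArg _ h⟩
    by_cases hc : (∏ i, x i) = b ∧ (∑ i, ((x i : F))) ≠ 0
    · rw [if_pos hc, if_pos (hcond.mpr hc)]
    · rw [if_neg hc, if_neg (fun h => hc (hcond.mp h))]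
  -- the master identity
  set S : ℂ := ∑ lam : MulChar F ℂ, lam ((b⁻¹ : Fˣ) : F) * ((lam ^ (n+1))⁻¹ (-1)
      * gaussSum ((lam ^ (n+1))⁻¹) ψ ^ 2 * gaussSum lam ψ ^ (n+1)) with hS
  have hM : (qn : ℂ) * ((qn : ℂ) - 1) * T + ((qn : ℂ) - 1) ^ (n+1) = S := master hψ1 b n
  have hdiv : T + ((qn:ℂ)-1)^n/(qn:ℂ) = S / ((qn:ℂ) * ((qn:ℂ)-1)) := by
    rw [eq_div_iff (mul_ne_zero hq0C hq1C)]
    have hexp : (T + ((qn:ℂ)-1)^n/(qn:ℂ)) * ((qn:ℂ)*((qn:ℂ)-1))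
        = (qn:ℂ)*((qn:ℂ)-1)*T + (((qn:ℂ)-1)^n/(qn:ℂ)) * (qn:ℂ) * ((qn:ℂ)-1) := by ring
    rw [hexp, div_mul_cancel₀ _ hq0C, ← pow_succ]
    exact hM
  -- rewrite the goal
  have hgoal : invKloosSum ψ n χ b + (((qn : ℂ) - 1) ^ n / (qn : ℂ)) * χ 0 b
      = χ 0 b * (S / ((qn:ℂ) * ((qn:ℂ)-1))) := by
    rw [hIK, hTuT, ← hdiv]
    ring
  rw [hgoal, norm_mul]
  -- |χ 0 b| = 1
  have habschi : ‖χ 0 b‖ = 1 := by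
    have h1 : (χ 0 b) ^ (Fintype.card Fˣ) = 1 := by
      rw [← map_pow, pow_card_eq_one, map_one]
    exact Complex.norm_eq_one_of_pow_eq_one h1 Fintype.card_ne_zero
  rw [habschi, one_mul, norm_div]
  -- compute |q(q-1)|
  have habsq : ‖(qn:ℂ) * ((qn:ℂ)-1)‖ = (qn:ℝ) * ((qn:ℝ)-1) := by
    rw [norm_mul, Complex.norm_natCast]
    congr 1
    rw [show ((qn:ℂ) - 1) = (((qn - 1 : ℕ) : ℂ)) by push_cast [Nat.cast_sub (by omega : 1 ≤ qn)]; ring,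
      Complex.norm_natCast, Nat.cast_sub (by omega : 1 ≤ qn), Nat.cast_one]
  rw [habsq]
  -- bound |S|
  have habsS : ‖S‖ ≤ ((qn:ℝ) - 1) * Real.sqrt qn ^ (n+3) := by
    have hterm : ∀ lam : MulChar F ℂ,
        ‖lam ((b⁻¹ : Fˣ) : F) * ((lam ^ (n+1))⁻¹ (-1)
          * gaussSum ((lam ^ (n+1))⁻¹) ψ ^ 2 * gaussSum lam ψ ^ (n+1))‖
        ≤ Real.sqrt qn ^ (n+3) := by
      intro lam
      rw [norm_mul, norm_mul, norm_mul, norm_pow, norm_pow,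
        abs_mulChar_eq_one _ (Units.ne_zero b⁻¹),
        abs_mulChar_eq_one _ (neg_ne_zero.mpr (one_ne_zero (α := F))), one_mul, one_mul]
      have hs1 : ‖gaussSum ((lam ^ (n+1))⁻¹) ψ‖ ^ 2 ≤ Real.sqrt qn ^ 2 :=
        pow_le_pow_left₀ (norm_nonneg _) (abs_gaussSum_le _ hψ1) 2
      have hs2 : ‖gaussSum lam ψ‖ ^ (n+1) ≤ Real.sqrt qn ^ (n+1) :=
        pow_le_pow_left₀ (norm_nonneg _) (abs_gaussSum_le _ hψ1) (n+1)
      calc ‖gaussSum ((lam ^ (n+1))⁻¹) ψ‖ ^ 2 * ‖gaussSum lam ψ‖ ^ (n+1)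
          ≤ Real.sqrt qn ^ 2 * Real.sqrt qn ^ (n+1) := by
            exact mul_le_mul hs1 hs2 (pow_nonneg (norm_nonneg _) _)
              (pow_nonneg (Real.sqrt_nonneg _) _)
        _ = Real.sqrt qn ^ (n+3) := by ring
    calc ‖S‖ ≤ ∑ lam : MulChar F ℂ,
        ‖lam ((b⁻¹ : Fˣ) : F) * ((lam ^ (n+1))⁻¹ (-1)
          * gaussSum ((lam ^ (n+1))⁻¹) ψ ^ 2 * gaussSum lam ψ ^ (n+1))‖ := by
          rw [hS]; exact norm_sum_le _ _
      _ ≤ ∑ _lam : MulChar F ℂ, Real.sqrt qn ^ (n+3) :=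
          Finset.sum_le_sum fun lam _ => hterm lam
      _ = ((qn:ℝ) - 1) * Real.sqrt qn ^ (n+3) := by
          rw [Finset.sum_const, Finset.card_univ, card_mulChar, nsmul_eq_mul,
            Nat.cast_sub (by omega : 1 ≤ qn), Nat.cast_one]
  -- final numeric computation
  have hqpos : (0:ℝ) < (qn:ℝ) := by positivity
  have hq1pos : (0:ℝ) < (qn:ℝ) - 1 := by
    have : (2:ℝ) ≤ (qn:ℝ) := by exact_mod_cast hq2
    linarith
  have hsq : Real.sqrt qn ^ 2 = (qn:ℝ) := Real.sq_sqrt hqpos.le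
  have hfin : ((qn:ℝ) - 1) * Real.sqrt qn ^ (n+3) / ((qn:ℝ) * ((qn:ℝ)-1))
      = Real.sqrt qn ^ (n+1) := by
    have : Real.sqrt qn ^ (n+3) = Real.sqrt qn ^ (n+1) * (qn:ℝ) := by
      rw [show n+3 = (n+1)+2 from by omega, pow_add, hsq]
    rw [this]
    field_simp
  have hrpow : Real.sqrt qn ^ (n+1) = (qn:ℝ) ^ (((n:ℝ) + 1)/2) := by
    rw [Real.sqrt_eq_rpow, ← Real.rpow_natCast ((qn:ℝ) ^ ((1:ℝ)/2)) (n+1),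
      ← Real.rpow_mul hqpos.le]
    congr 1
    push_cast
    ring
  calc ‖S‖ / ((qn:ℝ) * ((qn:ℝ)-1))
      ≤ ((qn:ℝ) - 1) * Real.sqrt qn ^ (n+3) / ((qn:ℝ) * ((qn:ℝ)-1)) := by
        apply div_le_div_of_nonneg_right habsS (by positivity) |>.trans_eq rfl
    _ = Real.sqrt qn ^ (n+1) := hfin
    _ = (qn:ℝ) ^ (((n:ℝ) + 1)/2) := hrpow
end

section
/- If χ_i ≠ χ_j for some i ≠ j (with 1 ≤ i, j ≤ n+1), then |S_n(χ,b)| ≤ q^{(n+1)/2}. -/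
open Finset

namespace InvKloosAux

set_option linter.unusedSectionVars false

variable {F : Type} [Field F] [Fintype F] [DecidableEq F]

/-! ### Basic norm facts -/

lemma unitHom_norm (μ : Fˣ →* ℂˣ) (u : Fˣ) : ‖((μ u : ℂˣ) : ℂ)‖ = 1 := by
  refine Complex.norm_eq_one_of_pow_eq_one (n := Fintype.card Fˣ) ?_ Fintype.card_ne_zero
  rw [← Units.val_pow_eq_pow_val, ← map_pow, pow_card_eq_one, map_one, Units.val_one]

lemma sum_units_eq (f : F → ℂ) :
    ∑ u : Fˣ, f ↑u = ∑ a ∈ univ.filter (fun a : F => a ≠ 0), f a := by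
  refine Finset.sum_bij (fun (u : Fˣ) _ => (u : F)) ?_ ?_ ?_ ?_
  · intro u _; simp [Units.ne_zero]
  · intro u _ v _ h; exact Units.ext h
  · intro a ha
    exact ⟨Units.mk0 a (by simpa using (Finset.mem_filter.mp ha).2), Finset.mem_univ _, rfl⟩
  · intro u _; rfl

lemma sum_unitHom_eq_zero {μ : Fˣ →* ℂˣ} (hμ : μ ≠ 1) :
    ∑ u : Fˣ, ((μ u : ℂˣ) : ℂ) = 0 := by
  obtain ⟨u0, hu0⟩ : ∃ u0, μ u0 ≠ 1 := by
    by_contra h; push_neg at h; exact hμ (MonoidHom.ext fun u => (h u))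
  refine eq_zero_of_mul_eq_self_left (a := ∑ u : Fˣ, ((μ u : ℂˣ) : ℂ))
    (b := ((μ u0 : ℂˣ) : ℂ)) (fun h => hu0 (Units.ext (by simpa using h))) ?_
  rw [Finset.mul_sum]
  exact Fintype.sum_bijective (fun u => u0 * u) (Group.mulLeft_bijective u0) _ _
    (fun u => by rw [map_mul, Units.val_mul])

/-! ### Gauss sum bound -/

lemma gauss_bound (ψ' : AddChar F ℂ) (hψ' : ψ' ≠ 1) (μ : Fˣ →* ℂˣ) :
    ‖∑ u : Fˣ, ((μ u : ℂˣ) : ℂ) * ψ' ↑u‖ ≤ Real.sqrt (Fintype.card F) := by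
  have hq1 : (1 : ℝ) ≤ Fintype.card F := by exact_mod_cast Fintype.card_pos
  by_cases hμ : μ = 1
  · subst hμ
    have h1 : ∑ u : Fˣ, (((1 : Fˣ →* ℂˣ) u : ℂˣ) : ℂ) * ψ' ↑u = ∑ u : Fˣ, ψ' ↑u := by
      simp
    have h2 : ∑ u : Fˣ, ψ' ↑u = ∑ a ∈ univ.filter (fun a : F => a ≠ 0), ψ' a :=
      sum_units_eq _
    have h3 : ∑ a ∈ univ.filter (fun a : F => a ≠ 0), ψ' a = (∑ a : F, ψ' a) - ψ' 0 := by
      rw [Finset.filter_ne', Finset.sum_erase_eq_sub (Finset.mem_univ 0)]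
    have h4 : ∑ a : F, ψ' a = 0 := by
      rw [AddChar.sum_eq_zero_iff_ne_zero]
      exact hψ'
    rw [h1, h2, h3, h4, AddChar.map_zero_eq_one, zero_sub, norm_neg, norm_one]
    exact Real.one_le_sqrt.mpr hq1
  · have hprim : ψ'.IsPrimitive := AddChar.IsPrimitive.of_ne_one hψ'
    set Mχ : MulChar F ℂ := MulChar.ofUnitHom μ with hMχ
    have hMcoe : ∀ u : Fˣ, Mχ ↑u = ((μ u : ℂˣ) : ℂ) := fun u => MulChar.ofUnitHom_coe μ u
    have hM : Mχ ≠ 1 := by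
      intro h
      refine hμ (MonoidHom.ext fun u => Units.ext ?_)
      rw [← hMcoe u, h]
      simp
    have hgs : gaussSum Mχ ψ' = ∑ u : Fˣ, ((μ u : ℂˣ) : ℂ) * ψ' ↑u := by
      rw [gaussSum, ← Finset.sum_filter_of_ne (p := fun a : F => a ≠ 0) (s := univ)
        (f := fun a => Mχ a * ψ' a) ?_, ← sum_units_eq (fun a => Mχ a * ψ' a)]
      · exact Finset.sum_congr rfl fun u _ => by rw [hMcoe]
      · intro a _ h ha
        subst ha
        exact h (by show Mχ 0 * ψ' 0 = 0; rw [MulChar.map_nonunit Mχ (by simp), zero_mul])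
    have key : gaussSum Mχ ψ' * gaussSum Mχ⁻¹ ψ'⁻¹ = Fintype.card F :=
      gaussSum_mul_gaussSum_eq_card hM hprim
    have hconj : gaussSum Mχ⁻¹ ψ'⁻¹ = (starRingEnd ℂ) (gaussSum Mχ ψ') := by
      rw [gaussSum, gaussSum, map_sum]
      refine Finset.sum_congr rfl fun a _ => ?_
      rw [map_mul]
      congr 1
      · rw [MulChar.inv_apply_eq_inv']
        by_cases ha : a = 0
        · subst ha
          rw [MulChar.map_nonunit Mχ (by simp)]
          simp
        · have hn : ‖Mχ a‖ = 1 := by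
            have := unitHom_norm μ (Units.mk0 a ha)
            rwa [← hMcoe (Units.mk0 a ha), Units.val_mk0] at this
          exact Complex.inv_eq_conj hn
      · have hchar : 0 < ringChar F :=
          Nat.pos_of_ne_zero (CharP.ringChar_ne_zero_of_finite F)
        exact (AddChar.starComp_apply hchar a).symm
    have hnorm : ‖gaussSum Mχ ψ'‖ = Real.sqrt (Fintype.card F) := by
      have h6 : ((Complex.normSq (gaussSum Mχ ψ') : ℝ) : ℂ) = (Fintype.card F : ℂ) := by
        rw [← Complex.mul_conj, ← hconj, key]
      have h5 : Complex.normSq (gaussSum Mχ ψ') = (Fintype.card F : ℝ) := by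
        exact_mod_cast h6
      rw [Complex.norm_def, h5]
    rw [← hgs, hnorm]

/-! ### Characters of `Fˣ` with values in `ℂˣ` -/

noncomputable instance instFintypeUnitsHom : Fintype (Fˣ →* ℂˣ) := by
  haveI : NeZero (Monoid.exponent Fˣ) := ⟨Monoid.exponent_ne_zero_of_finite⟩
  haveI : Finite (Fˣ →* ℂˣ) :=
    Finite.of_equiv _ (CommGroup.monoidHom_mulEquiv_of_hasEnoughRootsOfUnity Fˣ ℂ).some.symm.toEquiv
  exact Fintype.ofFinite _

lemma card_units_hom : Fintype.card (Fˣ →* ℂˣ) = Fintype.card F - 1 := by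
  haveI : NeZero (Monoid.exponent Fˣ) := ⟨Monoid.exponent_ne_zero_of_finite⟩
  have e := (CommGroup.monoidHom_mulEquiv_of_hasEnoughRootsOfUnity Fˣ ℂ).some
  rw [← Fintype.card_units (α := F)]
  exact Fintype.card_congr e.toEquiv

lemma sum_chars (a : Fˣ) :
    ∑ η : Fˣ →* ℂˣ, ((η a : ℂˣ) : ℂ)
      = if a = 1 then ((Fintype.card F - 1 : ℕ) : ℂ) else 0 := by
  haveI : NeZero (Monoid.exponent Fˣ) := ⟨Monoid.exponent_ne_zero_of_finite⟩
  split_ifs with ha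
  · subst ha
    simp [card_units_hom]
  · obtain ⟨η0, hη0⟩ : ∃ η0 : Fˣ →* ℂˣ, η0 a ≠ 1 :=
      CommGroup.exists_apply_ne_one_of_hasEnoughRootsOfUnity Fˣ ℂ ha
    refine eq_zero_of_mul_eq_self_left (b := ((η0 a : ℂˣ) : ℂ))
      (fun h => hη0 (Units.ext (by simpa using h))) ?_
    rw [Finset.mul_sum]
    exact Fintype.sum_bijective (fun η => η0 * η) (Group.mulLeft_bijective η0) _ _
      (fun η => by rw [MonoidHom.mul_apply, Units.val_mul])

/-! ### The `T` bound -/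

lemma addChar_map_sum (ψ : AddChar F ℂ) {ι : Type*} (s : Finset ι) (g : ι → F) :
    ψ (∑ i ∈ s, g i) = ∏ i ∈ s, ψ (g i) := by
  induction s using Finset.cons_induction with
  | empty => simp
  | cons i s hi ih => rw [Finset.sum_cons, Finset.prod_cons, AddChar.map_add_eq_mul, ih]

theorem T_bound (ψ : AddChar F ℂ) (hψ : ψ ≠ 1) {n : ℕ} (lam : Fin (n + 1) → (Fˣ →* ℂˣ))
    (hlam : ∃ i, lam i ≠ 1) :
    ‖∑ y ∈ univ.filter (fun y : Fin (n + 1) → Fˣ => (∑ i, ((y i : F))) = 1),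
        ∏ i, ((lam i (y i) : ℂˣ) : ℂ)‖ ≤ Real.sqrt (Fintype.card F) ^ n := by
  have hq0 : (0 : ℝ) < Fintype.card F := by exact_mod_cast Fintype.card_pos
  have hprim : ψ.IsPrimitive := AddChar.IsPrimitive.of_ne_one hψ
  set T : ℂ := ∑ y ∈ univ.filter (fun y : Fin (n + 1) → Fˣ => (∑ i, ((y i : F))) = 1),
      ∏ i, ((lam i (y i) : ℂˣ) : ℂ) with hT
  set g : Fin (n + 1) → ℂ := fun i => ∑ t : Fˣ, ((lam i t : ℂˣ) : ℂ) * ψ ↑t with hg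
  set Lam : Fˣ →* ℂˣ := ∏ i, lam i with hLam
  set A : ℂ := ∑ a : Fˣ, ((Lam⁻¹ a : ℂˣ) : ℂ) * ψ (-(a : F)) with hA
  set h : F → ℂ := fun a => ψ (-a) * ∏ i, (∑ t : Fˣ, ((lam i t : ℂˣ) : ℂ) * ψ (a * ↑t)) with hh
  have step1 : ∑ a : F, h a = (Fintype.card F : ℂ) * T := by
    have expand : ∀ a : F, ∏ i, (∑ t : Fˣ, ((lam i t : ℂˣ) : ℂ) * ψ (a * ↑t))
        = ∑ y : Fin (n + 1) → Fˣ, (∏ i, ((lam i (y i) : ℂˣ) : ℂ)) * ψ (a * ∑ i, ((y i : F))) := by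
      intro a
      rw [Finset.prod_univ_sum]
      rw [Fintype.piFinset_univ]
      refine Finset.sum_congr rfl fun y _ => ?_
      rw [Finset.prod_mul_distrib]
      congr 1
      rw [Finset.mul_sum, addChar_map_sum]
    calc ∑ a : F, h a
        = ∑ a : F, ∑ y : Fin (n + 1) → Fˣ,
            (∏ i, ((lam i (y i) : ℂˣ) : ℂ)) * ψ (a * ((∑ i, ((y i : F))) - 1)) := by
          refine Finset.sum_congr rfl fun a _ => ?_
          rw [hh]
          simp only
          rw [expand a, Finset.mul_sum]
          refine Finset.sum_congr rfl fun y _ => ?_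
          rw [mul_sub, mul_one, sub_eq_add_neg, AddChar.map_add_eq_mul]
          ring
      _ = ∑ y : Fin (n + 1) → Fˣ, (∏ i, ((lam i (y i) : ℂˣ) : ℂ)) *
            ∑ a : F, ψ (a * ((∑ i, ((y i : F))) - 1)) := by
          rw [Finset.sum_comm]
          exact Finset.sum_congr rfl fun y _ => by rw [Finset.mul_sum]
      _ = ∑ y : Fin (n + 1) → Fˣ, (∏ i, ((lam i (y i) : ℂˣ) : ℂ)) *
            (if (∑ i, ((y i : F))) = 1 then (Fintype.card F : ℂ) else 0) := by
          refine Finset.sum_congr rfl fun y _ => ?_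
          rw [AddChar.sum_mulShift _ hprim]
          congr 1
          simp [sub_eq_zero]
      _ = (Fintype.card F : ℂ) * T := by
          rw [hT, Finset.sum_filter, Finset.mul_sum]
          refine Finset.sum_congr rfl fun y _ => ?_
          split_ifs <;> ring
  have step2 : h 0 = 0 := by
    obtain ⟨i0, hi0⟩ := hlam
    rw [hh]
    simp only
    rw [Finset.prod_eq_zero (Finset.mem_univ i0), mul_zero]
    have h7 : ∑ t : Fˣ, ((lam i0 t : ℂˣ) : ℂ) * ψ ((0 : F) * ↑t)
        = ∑ t : Fˣ, ((lam i0 t : ℂˣ) : ℂ) := by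
      refine Finset.sum_congr rfl fun t _ => ?_
      rw [zero_mul, AddChar.map_zero_eq_one, mul_one]
    rw [h7, sum_unitHom_eq_zero hi0]
  have step3 : ∑ u : Fˣ, h ↑u = (Fintype.card F : ℂ) * T := by
    rw [sum_units_eq h, ← step1]
    rw [Finset.filter_ne', Finset.sum_erase_eq_sub (Finset.mem_univ 0), step2, sub_zero]
  have step4 : ∀ u : Fˣ, h ↑u = (((Lam⁻¹ u : ℂˣ) : ℂ) * ψ (-(u : F))) * ∏ i, g i := by
    intro u
    have inner : ∀ i, ∑ t : Fˣ, ((lam i t : ℂˣ) : ℂ) * ψ ((u : F) * ↑t)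
        = (((lam i u)⁻¹ : ℂˣ) : ℂ) * g i := by
      intro i
      rw [hg]
      simp only
      rw [Finset.mul_sum]
      refine Fintype.sum_bijective (fun s : Fˣ => u * s) (Group.mulLeft_bijective u) _ _
        fun x => ?_
      have h1 : ((lam i (u * x) : ℂˣ) : ℂ) = ((lam i u : ℂˣ) : ℂ) * ((lam i x : ℂˣ) : ℂ) := by
        rw [map_mul, Units.val_mul]
      rw [h1, Units.val_inv_eq_inv_val, Units.val_mul, mul_assoc,
        inv_mul_cancel_left₀ (Units.ne_zero _)]
    rw [hh]
    simp only
    rw [Finset.prod_congr rfl fun i _ => inner i, Finset.prod_mul_distrib]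
    have hprodinv : ∏ i, (((lam i u)⁻¹ : ℂˣ) : ℂ) = ((Lam⁻¹ u : ℂˣ) : ℂ) := by
      have h2 : Lam⁻¹ u = ∏ i, (lam i u)⁻¹ := by
        rw [MonoidHom.inv_apply, hLam, MonoidHom.finset_prod_apply, ← Finset.prod_inv_distrib]
      rw [h2]
      exact (map_prod (Units.coeHom ℂ) (fun i => (lam i u)⁻¹) univ).symm
    rw [hprodinv]
    ring
  have step5 : (Fintype.card F : ℂ) * T = A * ∏ i, g i := by
    rw [← step3, Finset.sum_congr rfl fun u _ => step4 u, ← Finset.sum_mul, hA]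
  have hψinv : (ψ⁻¹ : AddChar F ℂ) ≠ 1 := fun hc => hψ (by rw [← inv_inv ψ, hc, inv_one])
  have hAbound : ‖A‖ ≤ Real.sqrt (Fintype.card F) := by
    have h8 : A = ∑ u : Fˣ, ((Lam⁻¹ u : ℂˣ) : ℂ) * (ψ⁻¹ : AddChar F ℂ) ↑u := by
      rw [hA]
      exact Finset.sum_congr rfl fun u _ => by rw [AddChar.inv_apply]
    rw [h8]
    exact gauss_bound _ hψinv _
  have hgbound : ∀ i, ‖g i‖ ≤ Real.sqrt (Fintype.card F) := fun i => gauss_bound ψ hψ (lam i)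
  have hnorm : (Fintype.card F : ℝ) * ‖T‖ ≤ Real.sqrt (Fintype.card F) ^ (n + 2) := by
    have h9 : ‖(Fintype.card F : ℂ) * T‖ = (Fintype.card F : ℝ) * ‖T‖ := by
      rw [norm_mul, Complex.norm_natCast]
    rw [← h9, step5]
    rw [norm_mul, norm_prod]
    calc ‖A‖ * ∏ i, ‖g i‖ ≤ Real.sqrt (Fintype.card F) * ∏ i, Real.sqrt (Fintype.card F) := by
          refine mul_le_mul hAbound
            (Finset.prod_le_prod (fun i _ => norm_nonneg _) fun i _ => hgbound i)
            (Finset.prod_nonneg fun i _ => norm_nonneg _) (Real.sqrt_nonneg _)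
      _ = Real.sqrt (Fintype.card F) ^ (n + 2) := by
          rw [Finset.prod_const, Finset.card_univ, Fintype.card_fin]
          ring
  have hsq : Real.sqrt (Fintype.card F) ^ (n + 2)
      = Real.sqrt (Fintype.card F) ^ n * (Fintype.card F : ℝ) := by
    rw [pow_add, pow_two, Real.mul_self_sqrt hq0.le]
  rw [hsq] at hnorm
  refine (mul_le_mul_iff_right₀ hq0).mp ?_
  calc (Fintype.card F : ℝ) * ‖T‖ ≤ Real.sqrt (Fintype.card F) ^ n * (Fintype.card F : ℝ) :=
        hnorm
    _ = (Fintype.card F : ℝ) * Real.sqrt (Fintype.card F) ^ n := mul_comm _ _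

/-! ### Reparametrization -/

lemma chi_ne_zero {n : ℕ} (χ : Fin (n + 1) → (Fˣ →* ℂ)) (i : Fin (n + 1)) (v : Fˣ) :
    χ i v ≠ 0 :=
  left_ne_zero_of_mul_eq_one (a := χ i v) (b := χ i v⁻¹)
    (by rw [← map_mul, mul_inv_cancel, map_one])

lemma step_A (ψ : AddChar F ℂ) {n : ℕ} (χ : Fin (n + 1) → (Fˣ →* ℂ)) (b : Fˣ) :
    invKloosSum ψ n χ b
      = ∑ u : Fˣ, (ψ ↑u * (∏ i, χ i u)⁻¹) *
          ∑ y ∈ univ.filter (fun y : Fin (n + 1) → Fˣ =>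
              (∑ i, ((y i : F))) = 1 ∧ (∏ i, y i) = u ^ (n + 1) * b),
            ∏ i, χ i (y i) := by
  have hRHS : ∑ u : Fˣ, (ψ ↑u * (∏ i, χ i u)⁻¹) *
          ∑ y ∈ univ.filter (fun y : Fin (n + 1) → Fˣ =>
              (∑ i, ((y i : F))) = 1 ∧ (∏ i, y i) = u ^ (n + 1) * b),
            ∏ i, χ i (y i)
      = ∑ p ∈ (univ : Finset (Fˣ × (Fin (n + 1) → Fˣ))).filter
          (fun p => (∑ i, ((p.2 i : F))) = 1 ∧ (∏ i, p.2 i) = p.1 ^ (n + 1) * b),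
          (ψ ↑p.1 * (∏ i, χ i p.1)⁻¹) * ∏ i, χ i (p.2 i) := by
    rw [Finset.sum_filter, Fintype.sum_prod_type]
    refine Finset.sum_congr rfl fun u _ => ?_
    rw [Finset.mul_sum, Finset.sum_filter]
  rw [hRHS, invKloosSum]
  refine Finset.sum_bij'
    (fun x hx =>
      ((Units.mk0 (∑ i, ((x i : F))) (Finset.mem_filter.mp hx).2.2)⁻¹,
        fun k => (Units.mk0 (∑ i, ((x i : F))) (Finset.mem_filter.mp hx).2.2)⁻¹ * x k))
    (fun p hp => fun k => p.1⁻¹ * p.2 k) ?_ ?_ ?_ ?_ ?_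
  · intro x hx
    obtain ⟨-, hprod, hsum⟩ := Finset.mem_filter.mp hx
    rw [Finset.mem_filter]
    dsimp only
    refine ⟨Finset.mem_univ _, ?_, ?_⟩
    · simp only [Units.val_mul, ← Finset.mul_sum]
      rw [Units.val_inv_eq_inv_val, Units.val_mk0]
      exact inv_mul_cancel₀ hsum
    · rw [Finset.prod_mul_distrib, Finset.prod_const, Finset.card_univ, Fintype.card_fin]
      simp only [hprod]
  · intro p hp
    obtain ⟨-, hsum, hprod⟩ := Finset.mem_filter.mp hp
    rw [Finset.mem_filter]
    dsimp only
    refine ⟨Finset.mem_univ _, ?_, ?_⟩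
    · rw [Finset.prod_mul_distrib, Finset.prod_const, Finset.card_univ, Fintype.card_fin, hprod,
        ← mul_assoc, ← mul_pow, inv_mul_cancel, one_pow, one_mul]
    · simp only [Units.val_mul, ← Finset.mul_sum]
      rw [hsum, mul_one]
      exact Units.ne_zero _
  · intro x hx
    funext k
    simp only
    rw [inv_mul_cancel_left]
  · intro p hp
    obtain ⟨-, hsum, hprod⟩ := Finset.mem_filter.mp hp
    have hval : (∑ i, (((p.1⁻¹ * p.2 i : Fˣ) : F))) = ((p.1⁻¹ : Fˣ) : F) := by
      simp only [Units.val_mul, ← Finset.mul_sum]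
      rw [hsum, mul_one]
    have hu : ∀ h : (∑ i, (((p.1⁻¹ * p.2 i : Fˣ) : F))) ≠ 0,
        (Units.mk0 (∑ i, (((p.1⁻¹ * p.2 i : Fˣ) : F))) h)⁻¹ = p.1 := by
      intro h
      apply Units.ext
      rw [Units.val_inv_eq_inv_val, Units.val_mk0, hval, Units.val_inv_eq_inv_val, inv_inv]
    dsimp only
    refine Prod.ext (hu _) ?_
    funext k
    simp only
    rw [hu, mul_inv_cancel_left]
  · intro x hx
    dsimp only
    set u0 : Fˣ := (Units.mk0 (∑ i, ((x i : F))) (Finset.mem_filter.mp hx).2.2)⁻¹ with hu0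
    have hcoe : (u0 : F) = (∑ i, ((x i : F)))⁻¹ := by
      rw [hu0, Units.val_inv_eq_inv_val, Units.val_mk0]
    rw [hcoe]
    have hexp : ∏ i, χ i (u0 * x i) = (∏ i, χ i u0) * ∏ i, χ i (x i) := by
      rw [← Finset.prod_mul_distrib]
      exact Finset.prod_congr rfl fun i _ => by rw [map_mul]
    rw [hexp]
    have hc : (∏ i, χ i u0) ≠ 0 := Finset.prod_ne_zero_iff.mpr fun i _ => chi_ne_zero χ i _
    field_simp

/-! ### Orthogonality expansion -/

lemma step_B {n : ℕ} (χ : Fin (n + 1) → (Fˣ →* ℂ)) (c : Fˣ) :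
    ∑ y ∈ univ.filter (fun y : Fin (n + 1) → Fˣ =>
        (∑ i, ((y i : F))) = 1 ∧ (∏ i, y i) = c), ∏ i, χ i (y i)
      = ((Fintype.card F - 1 : ℕ) : ℂ)⁻¹ *
        ∑ η : Fˣ →* ℂˣ, ((η c⁻¹ : ℂˣ) : ℂ) *
          ∑ y ∈ univ.filter (fun y : Fin (n + 1) → Fˣ => (∑ i, ((y i : F))) = 1),
            ∏ i, ((((χ i).toHomUnits * η) (y i) : ℂˣ) : ℂ) := by
  have hq2 : ((Fintype.card F - 1 : ℕ) : ℂ) ≠ 0 := by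
    have : 1 < Fintype.card F := Fintype.one_lt_card
    exact_mod_cast Nat.sub_ne_zero_of_lt this
  have key : ∑ η : Fˣ →* ℂˣ, ((η c⁻¹ : ℂˣ) : ℂ) *
          ∑ y ∈ univ.filter (fun y : Fin (n + 1) → Fˣ => (∑ i, ((y i : F))) = 1),
            ∏ i, ((((χ i).toHomUnits * η) (y i) : ℂˣ) : ℂ)
      = ((Fintype.card F - 1 : ℕ) : ℂ) *
        ∑ y ∈ univ.filter (fun y : Fin (n + 1) → Fˣ =>
            (∑ i, ((y i : F))) = 1 ∧ (∏ i, y i) = c), ∏ i, χ i (y i) := by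
    have hfac : ∀ (η : Fˣ →* ℂˣ) (y : Fin (n + 1) → Fˣ),
        ∏ i, ((((χ i).toHomUnits * η) (y i) : ℂˣ) : ℂ)
          = (∏ i, χ i (y i)) * ((η (∏ i, y i) : ℂˣ) : ℂ) := by
      intro η y
      have h1 : ∀ i, ((((χ i).toHomUnits * η) (y i) : ℂˣ) : ℂ)
          = χ i (y i) * ((η (y i) : ℂˣ) : ℂ) := by
        intro i
        rw [MonoidHom.mul_apply, Units.val_mul, MonoidHom.coe_toHomUnits]
      rw [Finset.prod_congr rfl fun i _ => h1 i, Finset.prod_mul_distrib]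
      congr 1
      rw [map_prod η]
      exact (map_prod (Units.coeHom ℂ) _ _).symm
    calc ∑ η : Fˣ →* ℂˣ, ((η c⁻¹ : ℂˣ) : ℂ) *
          ∑ y ∈ univ.filter (fun y : Fin (n + 1) → Fˣ => (∑ i, ((y i : F))) = 1),
            ∏ i, ((((χ i).toHomUnits * η) (y i) : ℂˣ) : ℂ)
        = ∑ η : Fˣ →* ℂˣ, ∑ y ∈ univ.filter (fun y : Fin (n + 1) → Fˣ =>
              (∑ i, ((y i : F))) = 1), ((η c⁻¹ : ℂˣ) : ℂ) *
            ∏ i, ((((χ i).toHomUnits * η) (y i) : ℂˣ) : ℂ) :=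
          Finset.sum_congr rfl fun η _ => Finset.mul_sum _ _ _
      _ = ∑ y ∈ univ.filter (fun y : Fin (n + 1) → Fˣ => (∑ i, ((y i : F))) = 1),
            (∏ i, χ i (y i)) * ∑ η : Fˣ →* ℂˣ, ((η (c⁻¹ * ∏ i, y i) : ℂˣ) : ℂ) := by
          rw [Finset.sum_comm]
          refine Finset.sum_congr rfl fun y _ => ?_
          rw [Finset.mul_sum]
          refine Finset.sum_congr rfl fun η _ => ?_
          rw [hfac η y, map_mul, Units.val_mul]
          ring
      _ = ∑ y ∈ univ.filter (fun y : Fin (n + 1) → Fˣ => (∑ i, ((y i : F))) = 1),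
            (∏ i, χ i (y i)) *
              (if (∏ i, y i) = c then ((Fintype.card F - 1 : ℕ) : ℂ) else 0) := by
          refine Finset.sum_congr rfl fun y _ => ?_
          rw [sum_chars]
          congr 1
          simp [inv_mul_eq_one, eq_comm]
      _ = ((Fintype.card F - 1 : ℕ) : ℂ) *
          ∑ y ∈ univ.filter (fun y : Fin (n + 1) → Fˣ =>
              (∑ i, ((y i : F))) = 1 ∧ (∏ i, y i) = c), ∏ i, χ i (y i) := by
          conv_rhs => rw [Finset.mul_sum, ← Finset.filter_filter, Finset.sum_filter]
          exact Finset.sum_congr rfl fun y _ => by split_ifs <;> ring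
  rw [key, inv_mul_cancel_left₀ hq2]

end InvKloosAux

open InvKloosAux in
theorem stmt1 (p m n : ℕ) (hp : p.Prime) (hm : 0 < m) (hn : 1 ≤ n)
    (F : Type) [Field F] [Fintype F] [DecidableEq F]
    (hq : Fintype.card F = p ^ m)
    (ψ : AddChar F ℂ) (hψ : ∃ a : F, ψ a ≠ 1)
    (χ : Fin (n + 1) → (Fˣ →* ℂ)) (b : Fˣ)
    (hχ : ∃ i j, i ≠ j ∧ χ i ≠ χ j) :
    ‖invKloosSum ψ n χ b‖
      ≤ (Fintype.card F : ℝ) ^ (((n : ℝ) + 1) / 2) := by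
  classical
  have hψ1 : ψ ≠ 1 := by
    obtain ⟨a, ha⟩ := hψ
    intro h
    exact ha (by rw [h, AddChar.one_apply])
  have hq1 : 1 < Fintype.card F := Fintype.one_lt_card
  have hq0 : (0 : ℝ) < Fintype.card F := by exact_mod_cast Nat.lt_of_lt_of_le Nat.zero_lt_one hq1.le
  have hQne : ((Fintype.card F - 1 : ℕ) : ℝ) ≠ 0 := by
    exact_mod_cast Nat.sub_ne_zero_of_lt hq1
  set T : (Fˣ →* ℂˣ) → ℂ := fun η =>
    ∑ y ∈ univ.filter (fun y : Fin (n + 1) → Fˣ => (∑ i, ((y i : F))) = 1),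
      ∏ i, ((((χ i).toHomUnits * η) (y i) : ℂˣ) : ℂ) with hTdef
  set μ : (Fˣ →* ℂˣ) → (Fˣ →* ℂˣ) := fun η =>
    ((∏ i, (χ i).toHomUnits) * η ^ (n + 1))⁻¹ with hμdef
  set G : (Fˣ →* ℂˣ) → ℂ := fun η => ∑ u : Fˣ, ((μ η u : ℂˣ) : ℂ) * ψ ↑u with hGdef
  have hKey : invKloosSum ψ n χ b
      = ((Fintype.card F - 1 : ℕ) : ℂ)⁻¹ *
          ∑ η : Fˣ →* ℂˣ, G η * (((η b⁻¹ : ℂˣ) : ℂ) * T η) := by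
    calc invKloosSum ψ n χ b
        = ∑ u : Fˣ, (ψ ↑u * (∏ i, χ i u)⁻¹) *
            (((Fintype.card F - 1 : ℕ) : ℂ)⁻¹ *
              ∑ η : Fˣ →* ℂˣ, ((η ((u ^ (n + 1) * b)⁻¹) : ℂˣ) : ℂ) * T η) := by
          rw [step_A ψ χ b]
          exact Finset.sum_congr rfl fun u _ => by rw [step_B χ (u ^ (n + 1) * b)]
      _ = ((Fintype.card F - 1 : ℕ) : ℂ)⁻¹ * ∑ u : Fˣ, ∑ η : Fˣ →* ℂˣ,
            (ψ ↑u * (∏ i, χ i u)⁻¹) * (((η ((u ^ (n + 1) * b)⁻¹) : ℂˣ) : ℂ) * T η) := by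
          rw [Finset.mul_sum]
          refine Finset.sum_congr rfl fun u _ => ?_
          rw [← mul_assoc, mul_comm (ψ ↑u * (∏ i, χ i u)⁻¹) _, mul_assoc, Finset.mul_sum]
      _ = ((Fintype.card F - 1 : ℕ) : ℂ)⁻¹ * ∑ η : Fˣ →* ℂˣ, ∑ u : Fˣ,
            (ψ ↑u * (∏ i, χ i u)⁻¹) * (((η ((u ^ (n + 1) * b)⁻¹) : ℂˣ) : ℂ) * T η) := by
          rw [Finset.sum_comm]
      _ = ((Fintype.card F - 1 : ℕ) : ℂ)⁻¹ *
            ∑ η : Fˣ →* ℂˣ, G η * (((η b⁻¹ : ℂˣ) : ℂ) * T η) := by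
          congr 1
          refine Finset.sum_congr rfl fun η _ => ?_
          rw [hGdef]
          simp only
          rw [Finset.sum_mul]
          refine Finset.sum_congr rfl fun u _ => ?_
          have hμcoe : ((μ η u : ℂˣ) : ℂ)
              = (∏ i, χ i u)⁻¹ * (((η (u ^ (n + 1)) : ℂˣ) : ℂ))⁻¹ := by
            rw [hμdef]
            simp only
            rw [MonoidHom.inv_apply, MonoidHom.mul_apply, mul_inv, Units.val_mul]
            congr 1
            · rw [Units.val_inv_eq_inv_val]
              congr 1
              rw [MonoidHom.finset_prod_apply]
              exact (map_prod (Units.coeHom ℂ) (fun i => (χ i).toHomUnits u) univ).trans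
                (Finset.prod_congr rfl fun i _ => MonoidHom.coe_toHomUnits (χ i) u)
            · rw [Units.val_inv_eq_inv_val]
              congr 2
              rw [MonoidHom.pow_apply, map_pow]
          have hηsplit : ((η ((u ^ (n + 1) * b)⁻¹) : ℂˣ) : ℂ)
              = (((η (u ^ (n + 1)) : ℂˣ) : ℂ))⁻¹ * ((η b⁻¹ : ℂˣ) : ℂ) := by
            rw [mul_inv, map_mul, Units.val_mul, map_inv, Units.val_inv_eq_inv_val]
          rw [hμcoe, hηsplit]
          ring
  have hlam : ∀ η : Fˣ →* ℂˣ, ∃ i, (χ i).toHomUnits * η ≠ 1 := by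
    intro η
    obtain ⟨i, j, hij, hne⟩ := hχ
    by_contra hcon
    push_neg at hcon
    have h1 : ∀ k, (χ k).toHomUnits = η⁻¹ := fun k => MonoidHom.ext fun t => by
      rw [MonoidHom.inv_apply]
      exact eq_inv_of_mul_eq_one_left (by rw [← MonoidHom.mul_apply, hcon k, MonoidHom.one_apply])
    refine hne (MonoidHom.ext fun t => ?_)
    have h2 : ((χ i).toHomUnits t : ℂ) = ((χ j).toHomUnits t : ℂ) := by rw [h1 i, h1 j]
    simpa [MonoidHom.coe_toHomUnits] using h2
  have hTbound : ∀ η : Fˣ →* ℂˣ, ‖T η‖ ≤ Real.sqrt (Fintype.card F) ^ n := by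
    intro η
    exact T_bound ψ hψ1 (fun i => (χ i).toHomUnits * η) (hlam η)
  rw [hKey]
  have hbound : ‖∑ η : Fˣ →* ℂˣ, G η * (((η b⁻¹ : ℂˣ) : ℂ) * T η)‖
      ≤ ((Fintype.card F - 1 : ℕ) : ℝ) *
          (Real.sqrt (Fintype.card F) * Real.sqrt (Fintype.card F) ^ n) := by
    calc ‖∑ η : Fˣ →* ℂˣ, G η * (((η b⁻¹ : ℂˣ) : ℂ) * T η)‖
        ≤ ∑ η : Fˣ →* ℂˣ, ‖G η * (((η b⁻¹ : ℂˣ) : ℂ) * T η)‖ := norm_sum_le _ _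
      _ ≤ ∑ _η : Fˣ →* ℂˣ, Real.sqrt (Fintype.card F) * Real.sqrt (Fintype.card F) ^ n := by
          refine Finset.sum_le_sum fun η _ => ?_
          rw [norm_mul, norm_mul, unitHom_norm η b⁻¹, one_mul]
          exact mul_le_mul (gauss_bound ψ hψ1 (μ η)) (hTbound η) (norm_nonneg _)
            (Real.sqrt_nonneg _)
      _ = ((Fintype.card F - 1 : ℕ) : ℝ) *
            (Real.sqrt (Fintype.card F) * Real.sqrt (Fintype.card F) ^ n) := by
          rw [Finset.sum_const, Finset.card_univ, card_units_hom, nsmul_eq_mul]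
  calc ‖((Fintype.card F - 1 : ℕ) : ℂ)⁻¹ * ∑ η : Fˣ →* ℂˣ, G η * (((η b⁻¹ : ℂˣ) : ℂ) * T η)‖
      ≤ ((Fintype.card F - 1 : ℕ) : ℝ)⁻¹ *
          (((Fintype.card F - 1 : ℕ) : ℝ) *
            (Real.sqrt (Fintype.card F) * Real.sqrt (Fintype.card F) ^ n)) := by
        rw [norm_mul, norm_inv, Complex.norm_natCast]
        exact mul_le_mul_of_nonneg_left hbound (by positivity)
    _ = Real.sqrt (Fintype.card F) ^ (n + 1) := by
        rw [inv_mul_cancel_left₀ hQne, pow_succ, mul_comm]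
    _ = (Fintype.card F : ℝ) ^ (((n : ℝ) + 1) / 2) := by
        rw [Real.sqrt_eq_rpow, ← Real.rpow_natCast ((Fintype.card F : ℝ) ^ ((1 : ℝ) / 2)) (n + 1),
          ← Real.rpow_mul hq0.le]
        congr 1
        push_cast
        ring
end

section
/- For every integer k ≥ 1, q^k · S_{k,n}(b) = −(q^k − 1)^n + S_k*(f), as complex numbers. -/
open Finset

/-- The untwisted inverted `n`-variable Kloosterman sum over the extension `E` of `F`. -/
noncomputable def invKloosSumExt (F : Type) [Field F] (E : Type) [Field E] [Fintype E]
    [DecidableEq E] [Algebra F E] (ψ : AddChar F ℂ) (n : ℕ) (b : Fˣ) : ℂ :=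
  ∑ x ∈ Finset.univ.filter
      (fun x : Fin n → Eˣ =>
        (∑ i, (x i : E)) + algebraMap F E (b : F) / (∏ i, (x i : E)) ≠ 0),
    ψ (Algebra.trace F E
      (((∑ i, (x i : E)) + algebraMap F E (b : F) / (∏ i, (x i : E)))⁻¹))

/-- The toric exponential sum
`S_k*(f) = ∑_{(x_1,…,x_{n+2}) ∈ (Eˣ)^{n+2}}
  ψ(Tr(x_{n+2} + x_{n+1}(1 − x_{n+2}(x_1+⋯+x_n + b/(x_1⋯x_n)))))`,
where `y` plays the role of `x_{n+1}` and `z` that of `x_{n+2}`. -/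
noncomputable def toricSumExt (F : Type) [Field F] (E : Type) [Field E] [Fintype E]
    [DecidableEq E] [Algebra F E] (ψ : AddChar F ℂ) (n : ℕ) (b : Fˣ) : ℂ :=
  ∑ x : Fin n → Eˣ, ∑ y : Eˣ, ∑ z : Eˣ,
    ψ (Algebra.trace F E
      ((z : E) + (y : E) * (1 - (z : E) *
        ((∑ i, (x i : E)) + algebraMap F E (b : F) / (∏ i, (x i : E))))))

section Aux

variable {E : Type} [Field E] [Fintype E] [DecidableEq E]

lemma aux_sum_units (g : E → ℂ) :
    ∑ z : Eˣ, g (z : E) = ∑ e ∈ Finset.univ.filter (fun e : E => e ≠ 0), g e := by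
  rw [Finset.sum_subtype (p := fun e : E => e ≠ 0) _ (fun e => by simp)]
  exact Fintype.sum_equiv unitsEquivNeZero _ _ (fun z => rfl)

lemma aux_sum_units_char (χ : AddChar E ℂ) (hχ : χ ≠ 1) :
    ∑ z : Eˣ, χ (z : E) = -1 := by
  have h0 : ∑ e : E, χ e = 0 := AddChar.sum_eq_zero_of_ne_one hχ
  rw [aux_sum_units, Finset.filter_ne', Finset.sum_erase_eq_sub (Finset.mem_univ _), h0,
    AddChar.map_zero_eq_one]
  ring

lemma aux_sum_mul (χ : AddChar E ℂ) (hχ : χ ≠ 1) (c : E) :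
    ∑ y : Eˣ, χ ((y : E) * c) =
      (if c = 0 then (Fintype.card E : ℂ) else 0) - 1 := by
  rcases eq_or_ne c 0 with hc | hc
  · simp only [hc, mul_zero, AddChar.map_zero_eq_one, Finset.sum_const, Finset.card_univ,
      nsmul_eq_mul, mul_one, if_pos rfl]
    rw [Fintype.card_units, Nat.cast_sub Fintype.card_pos]
    simp
  · rw [if_neg hc]
    have := Fintype.sum_equiv (Equiv.mulRight (Units.mk0 c hc)) (fun y : Eˣ => χ ((y : E) * c))
        (fun y : Eˣ => χ (y : E)) ?_
    · rw [this, aux_sum_units_char χ hχ]; ring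
    · intro y; simp [Units.val_mul]

end Aux

theorem stmt7 (p m n : ℕ) (hp : p.Prime) (hm : 0 < m) (hn : 1 ≤ n)
    (F : Type) [Field F] [Fintype F]
    (hq : Fintype.card F = p ^ m)
    (ψ : AddChar F ℂ) (hψ : ∃ a : F, ψ a ≠ 1)
    (b : Fˣ)
    (k : ℕ) (hk : 1 ≤ k)
    (E : Type) [Field E] [Fintype E] [DecidableEq E] [Algebra F E]
    (hE : Module.finrank F E = k) :
    (Fintype.card E : ℂ) * invKloosSumExt F E ψ n b
      = -((Fintype.card E : ℂ) - 1) ^ n + toricSumExt F E ψ n b := by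
  haveI : FiniteDimensional F E := FiniteDimensional.of_finrank_pos (by omega)
  -- the additive character of E obtained by composing with the trace
  set χ : AddChar E ℂ := ψ.compAddMonoidHom (Algebra.trace F E).toAddMonoidHom with hχdef
  have hχap : ∀ e : E, χ e = ψ (Algebra.trace F E e) := fun e => rfl
  have hχ : χ ≠ 1 := by
    obtain ⟨a, ha⟩ := hψ
    obtain ⟨e, he⟩ := Algebra.trace_surjective F E a
    rw [AddChar.ne_one_iff]
    exact ⟨e, by rw [hχap, he]; exact ha⟩
  -- abbreviation for the argument
  set A : (Fin n → Eˣ) → E := fun x =>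
    (∑ i, (x i : E)) + algebraMap F E (b : F) / (∏ i, (x i : E)) with hA
  -- compute the inner double sum for each x
  have key : ∀ x : Fin n → Eˣ,
      (∑ y : Eˣ, ∑ z : Eˣ, χ ((z : E) + (y : E) * (1 - (z : E) * A x)))
        = (Fintype.card E : ℂ) * (if A x ≠ 0 then χ (A x)⁻¹ else 0) + 1 := by
    intro x
    rw [Finset.sum_comm]
    have step1 : ∀ z : Eˣ,
        (∑ y : Eˣ, χ ((z : E) + (y : E) * (1 - (z : E) * A x)))
          = χ (z : E) * ((if (z : E) * A x = 1 then (Fintype.card E : ℂ) else 0) - 1) := by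
      intro z
      have : ∑ y : Eˣ, χ ((z : E) + (y : E) * (1 - (z : E) * A x))
          = χ (z : E) * ∑ y : Eˣ, χ ((y : E) * (1 - (z : E) * A x)) := by
        rw [Finset.mul_sum]
        exact Finset.sum_congr rfl fun y _ => AddChar.map_add_eq_mul χ _ _
      rw [this, aux_sum_mul χ hχ]
      simp only [sub_eq_zero]
      congr 2
      exact if_congr eq_comm rfl rfl
    calc ∑ z : Eˣ, ∑ y : Eˣ, χ ((z : E) + (y : E) * (1 - (z : E) * A x))
        = ∑ z : Eˣ, (χ (z : E) * ((if (z : E) * A x = 1 then (Fintype.card E : ℂ) else 0) - 1)) := by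
          exact Finset.sum_congr rfl fun z _ => step1 z
      _ = (∑ z : Eˣ, (if (z : E) * A x = 1 then (Fintype.card E : ℂ) * χ (z : E) else 0))
            - ∑ z : Eˣ, χ (z : E) := by
          rw [← Finset.sum_sub_distrib]
          refine Finset.sum_congr rfl fun z _ => ?_
          by_cases h : (z : E) * A x = 1 <;> simp [h] <;> ring
      _ = (Fintype.card E : ℂ) * (if A x ≠ 0 then χ (A x)⁻¹ else 0) + 1 := by
          rw [aux_sum_units_char χ hχ, sub_neg_eq_add]
          congr 1
          rcases eq_or_ne (A x) 0 with hAx | hAx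
          · simp [hAx]
          · rw [if_pos hAx]
            have hcond : ∀ z : Eˣ, (z : E) * A x = 1 ↔ z = Units.mk0 (A x)⁻¹ (inv_ne_zero hAx) := by
              intro z
              rw [Units.ext_iff]
              simp only [Units.val_mk0]
              constructor
              · intro h; field_simp at h ⊢; linear_combination h
              · intro h; rw [h]; field_simp
            simp only [hcond]
            rw [Fintype.sum_ite_eq' (Units.mk0 (A x)⁻¹ (inv_ne_zero hAx))
              (fun z : Eˣ => (Fintype.card E : ℂ) * χ (z : E))]
            simp
  -- sum over x
  have htoric : toricSumExt F E ψ n b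
      = ∑ x : Fin n → Eˣ, ((Fintype.card E : ℂ) * (if A x ≠ 0 then χ (A x)⁻¹ else 0) + 1) := by
    unfold toricSumExt
    exact Finset.sum_congr rfl fun x _ => key x
  have hcardfun : (∑ x : Fin n → Eˣ, (1 : ℂ)) = ((Fintype.card E : ℂ) - 1) ^ n := by
    rw [Finset.sum_const, Finset.card_univ, nsmul_eq_mul, mul_one, Fintype.card_fun,
      Fintype.card_units, Nat.cast_pow, Nat.cast_sub Fintype.card_pos]
    simp
  have hklos : (∑ x : Fin n → Eˣ, (if A x ≠ 0 then χ (A x)⁻¹ else 0))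
      = invKloosSumExt F E ψ n b := by
    rw [invKloosSumExt, ← Finset.sum_filter]
    rfl
  rw [htoric, Finset.sum_add_distrib, hcardfun, ← Finset.mul_sum, hklos]
  ring
end

section
/- If χ_1 = χ_2 = ⋯ = χ_{n+1}, then q·S_n(χ,b) = −(q−1)^n·χ_1(b) + χ_1(b)·E_n(χ,b). -/
open Finset

/-- The twisted toric exponential sum
`E_n(χ,b) = ∑_{y,z,x_1,…,x_n ∈ Fˣ} (χ_1 χ_{n+1}⁻¹)(x_1)⋯(χ_n χ_{n+1}⁻¹)(x_n)
  ψ(z + y(1 − z(x_1+⋯+x_n + b/(x_1⋯x_n))))`. -/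
noncomputable def twistedToricSum {F : Type} [Field F] [Fintype F] [DecidableEq F]
    (ψ : AddChar F ℂ) (n : ℕ) (χ : Fin (n + 1) → (Fˣ →* ℂ)) (b : Fˣ) : ℂ :=
  ∑ y : Fˣ, ∑ z : Fˣ, ∑ x : Fin n → Fˣ,
    (∏ i, χ i.castSucc (x i) * (χ (Fin.last n) (x i))⁻¹) *
      ψ ((z : F) + (y : F) *
        (1 - (z : F) * ((∑ i, (x i : F)) + (b : F) / (∏ i, (x i : F)))))


lemma unitA {F : Type} [Field F] [Fintype F] [DecidableEq F] (ψ : AddChar F ℂ)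
    (hψ : ψ.IsPrimitive) (c : F) :
    ∑ y : Fˣ, ψ ((y : F) * c) = (if c = 0 then (Fintype.card F : ℂ) else 0) - 1 := by
  have h1 : ∑ y : F, ψ (y * c) = ψ (0 * c) + ∑ y ∈ Finset.univ.erase 0, ψ (y * c) :=
    (Finset.add_sum_erase Finset.univ _ (Finset.mem_univ 0)).symm
  have h2 : ∑ y ∈ Finset.univ.erase 0, ψ (y * c) = ∑ y : Fˣ, ψ ((y : F) * c) := by
    apply Finset.sum_nbij' (fun y : F => if h : y = 0 then 1 else Units.mk0 y h)
      (fun y : Fˣ => (y : F))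
    · intro a ha; exact Finset.mem_univ _
    · intro a ha
      simp only [Finset.mem_erase, Finset.mem_univ, and_true]
      exact a.ne_zero
    · intro a ha
      rw [dif_neg (Finset.mem_erase.mp ha).1]
      rfl
    · intro a ha
      rw [dif_neg a.ne_zero]
      ext; rfl
    · intro a ha
      rw [dif_neg (Finset.mem_erase.mp ha).1]
      rfl
  rw [h2] at h1
  rw [AddChar.sum_mulShift c hψ] at h1
  simp only [zero_mul, AddChar.map_zero_eq_one] at h1
  push_cast at h1
  rw [h1]; ring

lemma unitB {F : Type} [Field F] [Fintype F] [DecidableEq F] (ψ : AddChar F ℂ)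
    (hψ : ψ.IsPrimitive) (T : F) :
    ∑ z : Fˣ, ψ (z : F) * ((if 1 - (z : F) * T = 0 then (Fintype.card F : ℂ) else 0) - 1)
      = (if T = 0 then 0 else (Fintype.card F : ℂ) * ψ T⁻¹) + 1 := by
  have hsum1 : ∑ z : Fˣ, ψ (z : F) = -1 := by
    have := unitA ψ hψ 1
    simp only [mul_one, if_neg (one_ne_zero : (1:F) ≠ 0), zero_sub] at this
    exact this
  simp_rw [mul_sub, mul_one, Finset.sum_sub_distrib, hsum1, sub_neg_eq_add]
  congr 1
  by_cases hT : T = 0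
  · simp [hT]
  · rw [if_neg hT]
    rw [Finset.sum_eq_single (Units.mk0 T⁻¹ (inv_ne_zero hT))]
    · rw [if_pos (by rw [Units.val_mk0, inv_mul_cancel₀ hT, sub_self])]
      simp [mul_comm]
    · intro z _ hz
      rw [if_neg, mul_zero]
      intro h
      apply hz
      have : (z : F) = T⁻¹ :=
        eq_inv_of_mul_eq_one_left ((sub_eq_zero.mp h).symm)
      ext; simpa using this
    · intro h; exact absurd (Finset.mem_univ _) h

lemma val_prod_units {F : Type} [Field F] {n : ℕ} (x : Fin n → Fˣ) :
    ((∏ i, x i : Fˣ) : F) = ∏ i, (x i : F) :=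
  map_prod (Units.coeHom F) x Finset.univ

lemma val_snoc_unit {F : Type} [Field F] {n : ℕ} (b : Fˣ) (x : Fin n → Fˣ) :
    ((b * (∏ i, x i)⁻¹ : Fˣ) : F) = (b : F) / (∏ i, (x i : F)) := by
  rw [Units.val_mul, div_eq_mul_inv]
  congr 1
  rw [← val_prod_units x]
  exact Units.val_inv_eq_inv_val _

lemma sum_eq_T {F : Type} [Field F] {n : ℕ} (b : Fˣ) (w : Fin (n + 1) → Fˣ)
    (hw : ∏ i, w i = b) :
    (∑ i, (w i : F)) = (∑ i : Fin n, (w (Fin.castSucc i) : F))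
      + (b : F) / (∏ i : Fin n, (w (Fin.castSucc i) : F)) := by
  have hlast : w (Fin.last n) = b * (∏ i : Fin n, w (Fin.castSucc i))⁻¹ := by
    rw [eq_mul_inv_iff_mul_eq, mul_comm, ← Fin.prod_univ_castSucc]
    exact hw
  rw [Fin.sum_univ_castSucc, hlast, val_snoc_unit]

lemma bijLemma {F : Type} [Field F] [Fintype F] [DecidableEq F] (n : ℕ) (b : Fˣ)
    (f : F → ℂ) :
    ∑ w ∈ Finset.univ.filter
        (fun w : Fin (n + 1) → Fˣ => (∏ i, w i) = b ∧ (∑ i, (w i : F)) ≠ 0),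
      f (∑ i, (w i : F))
    = ∑ x ∈ Finset.univ.filter
        (fun x : Fin n → Fˣ => (∑ i, (x i : F)) + (b : F) / (∏ i, (x i : F)) ≠ 0),
      f ((∑ i, (x i : F)) + (b : F) / (∏ i, (x i : F))) := by
  apply Finset.sum_nbij' (fun w : Fin (n + 1) → Fˣ => fun j : Fin n => w j.castSucc)
    (fun x : Fin n → Fˣ => Fin.snoc x (b * (∏ i, x i)⁻¹))
  · intro w hw
    obtain ⟨hw1, hw2⟩ := (Finset.mem_filter.mp hw).2
    rw [Finset.mem_filter]
    refine ⟨Finset.mem_univ _, ?_⟩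
    simp only
    rw [← sum_eq_T b w hw1]
    exact hw2
  · intro x hx
    have hx2 := (Finset.mem_filter.mp hx).2
    rw [Finset.mem_filter]
    refine ⟨Finset.mem_univ _, ?_, ?_⟩
    · rw [Fin.prod_univ_castSucc]
      simp only [Fin.snoc_castSucc, Fin.snoc_last]
      rw [mul_comm b, ← mul_assoc, mul_inv_cancel, one_mul]
    · rw [Fin.sum_univ_castSucc]
      simp only [Fin.snoc_castSucc, Fin.snoc_last]
      rw [val_snoc_unit]
      exact hx2
  · intro w hw
    obtain ⟨hw1, hw2⟩ := (Finset.mem_filter.mp hw).2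
    have hlast : b * (∏ i : Fin n, w (Fin.castSucc i))⁻¹ = w (Fin.last n) := by
      rw [eq_comm, eq_mul_inv_iff_mul_eq, mul_comm, ← Fin.prod_univ_castSucc]
      exact hw1
    rw [hlast]
    exact Fin.snoc_init_self w
  · intro x hx
    funext j
    exact Fin.snoc_castSucc _ _ _
  · intro w hw
    obtain ⟨hw1, hw2⟩ := (Finset.mem_filter.mp hw).2
    simp only
    rw [sum_eq_T b w hw1]

theorem stmt11 (p m n : ℕ) (hp : p.Prime) (hm : 0 < m) (hn : 1 ≤ n)
    (F : Type) [Field F] [Fintype F] [DecidableEq F]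
    (hq : Fintype.card F = p ^ m)
    (ψ : AddChar F ℂ) (hψ : ∃ a : F, ψ a ≠ 1)
    (χ : Fin (n + 1) → (Fˣ →* ℂ)) (b : Fˣ)
    (hχ : ∀ i j, χ i = χ j) :
    (Fintype.card F : ℂ) * invKloosSum ψ n χ b
      = -((Fintype.card F : ℂ) - 1) ^ n * χ 0 b
        + χ 0 b * twistedToricSum ψ n χ b := by
  classical
  have hψ1 : ψ ≠ 1 := by
    rintro rfl
    obtain ⟨a, ha⟩ := hψ
    exact ha rfl
  have hprim : ψ.IsPrimitive := AddChar.IsPrimitive.of_ne_one hψ1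
  set q : ℂ := (Fintype.card F : ℂ) with hqdef
  set T : (Fin n → Fˣ) → F :=
    fun x => (∑ i, (x i : F)) + (b : F) / (∏ i, (x i : F)) with hTdef
  set S : ℂ := ∑ x ∈ Finset.univ.filter (fun x : Fin n → Fˣ => T x ≠ 0), ψ (T x)⁻¹
    with hSdef
  -- the character factor in the toric sum is trivial
  have hone : ∀ x : Fin n → Fˣ,
      (∏ i, χ i.castSucc (x i) * (χ (Fin.last n) (x i))⁻¹) = 1 := by
    intro x
    apply Finset.prod_eq_one
    intro i _
    rw [hχ i.castSucc (Fin.last n)]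
    apply mul_inv_cancel₀
    intro h
    have h1 : χ (Fin.last n) (x i) * χ (Fin.last n) (x i)⁻¹ = 1 := by
      rw [← map_mul]; simp
    rw [h, zero_mul] at h1
    exact zero_ne_one h1
  -- compute the toric sum
  have hE : twistedToricSum ψ n χ b = q * S + (q - 1) ^ n := by
    have step1 : twistedToricSum ψ n χ b
        = ∑ z : Fˣ, ∑ x : Fin n → Fˣ, ψ (z : F) *
            ((if 1 - (z : F) * T x = 0 then q else 0) - 1) := by
      rw [twistedToricSum, Finset.sum_comm]
      refine Finset.sum_congr rfl fun z _ => ?_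
      rw [Finset.sum_comm]
      refine Finset.sum_congr rfl fun x _ => ?_
      have : ∑ y : Fˣ,
          (∏ i, χ i.castSucc (x i) * (χ (Fin.last n) (x i))⁻¹) *
            ψ ((z : F) + (y : F) * (1 - (z : F) * T x))
          = ψ (z : F) * ∑ y : Fˣ, ψ ((y : F) * (1 - (z : F) * T x)) := by
        rw [Finset.mul_sum]
        refine Finset.sum_congr rfl fun y _ => ?_
        rw [hone x, one_mul, AddChar.map_add_eq_mul]
      rw [this, unitA ψ hprim]
    rw [step1, Finset.sum_comm]
    have step2 : ∀ x : Fin n → Fˣ,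
        ∑ z : Fˣ, ψ (z : F) * ((if 1 - (z : F) * T x = 0 then q else 0) - 1)
          = (if T x = 0 then 0 else q * ψ (T x)⁻¹) + 1 :=
      fun x => unitB ψ hprim (T x)
    rw [Finset.sum_congr rfl fun x _ => step2 x, Finset.sum_add_distrib]
    congr 1
    · rw [hSdef, Finset.mul_sum, Finset.sum_filter]
      refine Finset.sum_congr rfl fun x _ => ?_
      by_cases h : T x = 0 <;> simp [h]
    · rw [Finset.sum_const, Finset.card_univ, nsmul_eq_mul, mul_one]
      have hcard : Fintype.card (Fin n → Fˣ) = (Fintype.card F - 1) ^ n := by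
        rw [Fintype.card_fun, Fintype.card_units, Fintype.card_fin]
      rw [hcard, Nat.cast_pow, Nat.cast_sub Fintype.card_pos, Nat.cast_one]
  -- compute the Kloosterman sum
  have hK : invKloosSum ψ n χ b = χ 0 b * S := by
    rw [invKloosSum]
    have step1 : ∀ w ∈ Finset.univ.filter
        (fun w : Fin (n + 1) → Fˣ => (∏ i, w i) = b ∧ (∑ i, (w i : F)) ≠ 0),
        (∏ i, χ i (w i)) * ψ ((∑ i, (w i : F))⁻¹)
          = χ 0 b * ψ ((∑ i, (w i : F))⁻¹) := by
      intro w hw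
      obtain ⟨hw1, hw2⟩ := (Finset.mem_filter.mp hw).2
      congr 1
      calc ∏ i, χ i (w i) = ∏ i, χ 0 (w i) :=
            Finset.prod_congr rfl fun i _ => by rw [hχ i 0]
        _ = χ 0 (∏ i, w i) := (map_prod (χ 0) _ _).symm
        _ = χ 0 b := by rw [hw1]
    rw [Finset.sum_congr rfl step1, ← Finset.mul_sum]
    congr 1
    have := bijLemma n b (fun s : F => ψ s⁻¹)
    exact this
  rw [hK, hE]
  ring
end

section
/- If χ_i ≠ χ_j for some i ≠ j (with 1 ≤ i, j ≤ n+1), then q·S_n(χ,b) = χ_{n+1}(b)·E_n(χ,b). -/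
open Finset

section Aux
variable {F : Type} [Field F] [Fintype F] [DecidableEq F]

lemma hom_sum_eq_zero {G : Type*} [CommGroup G] [Fintype G] (h : G →* ℂ) (hh : h ≠ 1) :
    ∑ g, h g = 0 := by
  obtain ⟨a, ha⟩ : ∃ a, h a ≠ 1 := by
    by_contra hc
    push_neg at hc
    exact hh (MonoidHom.ext fun g => (hc g).trans rfl)
  have key : h a * ∑ g, h g = ∑ g, h g := by
    rw [Finset.mul_sum]
    simp_rw [← map_mul]
    exact Fintype.sum_bijective (a * ·) (Group.mulLeft_bijective a) _ _ (fun g => rfl)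
  have h0 := sub_eq_zero.mpr key
  rw [← sub_one_mul] at h0
  rcases mul_eq_zero.mp h0 with h1 | h2
  · exact absurd (by linear_combination h1 : h a = 1) ha
  · exact h2

lemma sum_units_eq (f : F → ℂ) :
    ∑ u : Fˣ, f u = ∑ x ∈ Finset.univ.erase (0:F), f x := by
  refine Finset.sum_bij' (fun u _ => (u : F)) (fun x hx => Units.mk0 x (Finset.ne_of_mem_erase hx)) ?_ ?_ ?_ ?_ ?_
  · intro u _; exact Finset.mem_erase.mpr ⟨u.ne_zero, Finset.mem_univ _⟩
  · intro x hx; exact Finset.mem_univ _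
  · intro u _; exact Units.ext rfl
  · intro x hx; rfl
  · intro u _; rfl

lemma minv_apply (φ : Fˣ →* ℂ) (t : Fˣ) : (φ t)⁻¹ = φ t⁻¹ :=
  (eq_inv_of_mul_eq_one_left (by rw [← map_mul]; simp)).symm

lemma sum_units_psi (ψ : AddChar F ℂ) (hprim : ψ.IsPrimitive) (T : F) :
    ∑ y : Fˣ, ψ ((y : F) * T) = (if T = 0 then (Fintype.card F : ℂ) else 0) - 1 := by
  have h1 : ∑ x : F, ψ (x * T) = if T = 0 then (Fintype.card F : ℂ) else 0 := by
    rw [AddChar.sum_mulShift T hprim]; split <;> simp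
  have h2 : ∑ x : F, ψ (x * T) = ψ (0 * T) + ∑ x ∈ Finset.univ.erase (0:F), ψ (x * T) :=
    (Finset.add_sum_erase _ _ (Finset.mem_univ 0)).symm
  rw [sum_units_eq (fun x => ψ (x * T))]
  rw [h1] at h2
  simp only [zero_mul, AddChar.map_zero_eq_one] at h2
  rw [h2]; ring

end Aux

theorem stmt12 (p m n : ℕ) (hp : p.Prime) (hm : 0 < m) (hn : 1 ≤ n)
    (F : Type) [Field F] [Fintype F] [DecidableEq F]
    (hq : Fintype.card F = p ^ m)
    (ψ : AddChar F ℂ) (hψ : ∃ a : F, ψ a ≠ 1)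
    (χ : Fin (n + 1) → (Fˣ →* ℂ)) (b : Fˣ)
    (hχ : ∃ i j, i ≠ j ∧ χ i ≠ χ j) :
    (Fintype.card F : ℂ) * invKloosSum ψ n χ b
      = χ (Fin.last n) b * twistedToricSum ψ n χ b := by
  classical
  obtain ⟨i0, hi0⟩ : ∃ i : Fin n, χ i.castSucc ≠ χ (Fin.last n) := by
    by_contra hcon
    push_neg at hcon
    obtain ⟨i, j, hij, hne⟩ := hχ
    have hall : ∀ k : Fin (n+1), χ k = χ (Fin.last n) := by
      intro k
      rcases Fin.eq_castSucc_or_eq_last k with ⟨k', rfl⟩ | rfl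
      · exact hcon k'
      · rfl
    exact hne ((hall i).trans (hall j).symm)
  have hψ1 : ψ ≠ 1 := AddChar.ne_one_iff.mpr hψ
  have hprim : ψ.IsPrimitive := AddChar.IsPrimitive.of_ne_one hψ1
  set c : (Fin n → Fˣ) → ℂ := fun x => ∏ i, χ i.castSucc (x i) * (χ (Fin.last n) (x i))⁻¹ with hc
  set u : (Fin n → Fˣ) → F := fun x => (∑ i, (x i : F)) + (b : F) / (∏ i, (x i : F)) with hu
  set S0 : ℂ := ∑ x : Fin n → Fˣ, if u x = 0 then 0 else c x * ψ ((u x)⁻¹) with hS0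
  have hvan : ∑ t : Fˣ, χ i0.castSucc t * (χ (Fin.last n) t)⁻¹ = 0 := by
    have heq : ∀ t : Fˣ, χ i0.castSucc t * (χ (Fin.last n) t)⁻¹
        = ((χ i0.castSucc) * ((χ (Fin.last n)).comp (invMonoidHom))) t := by
      intro t
      rw [minv_apply]; rfl
    simp_rw [heq]
    apply hom_sum_eq_zero
    intro hcon
    apply hi0
    ext t
    have := DFunLike.congr_fun hcon t
    simp only [MonoidHom.mul_apply, MonoidHom.comp_apply, invMonoidHom_apply,
      MonoidHom.one_apply] at this
    rw [← minv_apply] at this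
    have hmul : χ (Fin.last n) t * χ (Fin.last n) t⁻¹ = 1 := by rw [← map_mul]; simp
    exact (mul_inv_eq_one₀ (left_ne_zero_of_mul_eq_one hmul)).mp this
  have hL : invKloosSum ψ n χ b = χ (Fin.last n) b * S0 := by
    rw [invKloosSum, Finset.sum_filter]
    rw [← Equiv.sum_comp (Fin.snocEquiv (fun _ : Fin (n+1) => Fˣ))]
    rw [Fintype.sum_prod_type]
    rw [Finset.sum_comm]
    rw [hS0, Finset.mul_sum]
    apply Finset.sum_congr rfl
    intro x' _
    simp only [Fin.snocEquiv_apply, Fin.prod_univ_castSucc, Fin.sum_univ_castSucc,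
      Fin.snoc_castSucc, Fin.snoc_last, Fin.prod_snoc]
    rw [Finset.sum_eq_single ((∏ i, x' i)⁻¹ * b)]
    · have hcast : (((∏ i, x' i)⁻¹ * b : Fˣ) : F) = (b:F) / (∏ i, ((x' i : F))) := by
        push_cast; ring
      simp only [mul_inv_cancel_left, hcast, eq_self_iff_true, true_and, hu, hc]
      have hlast : χ (Fin.last n) ((∏ i, x' i)⁻¹ * b)
          = (∏ i, χ (Fin.last n) (x' i))⁻¹ * χ (Fin.last n) b := by
        rw [map_mul, ← minv_apply, map_prod]
      split_ifs with h h2 h2 <;>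
        try first
          | exact absurd (not_not.mp h) h2
          | exact absurd h2 (by simpa using h)
          | ring
      rw [hlast, Finset.prod_mul_distrib, Finset.prod_inv_distrib]
      ring
    · intro t _ ht
      rw [if_neg]
      rintro ⟨h1, -⟩
      exact ht (by rw [← h1, inv_mul_cancel_left])
    · intro habs
      exact absurd (Finset.mem_univ _) habs
  have hR : twistedToricSum ψ n χ b = (Fintype.card F : ℂ) * S0 := by
    have step1 : twistedToricSum ψ n χ b
        = ∑ z : Fˣ, ∑ x : Fin n → Fˣ, (c x * ψ (z : F)) *
            ((if (1 - (z:F) * u x) = 0 then (Fintype.card F : ℂ) else 0) - 1) := by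
      rw [twistedToricSum, Finset.sum_comm]
      apply Finset.sum_congr rfl
      intro z _
      rw [Finset.sum_comm]
      apply Finset.sum_congr rfl
      intro x _
      rw [← sum_units_psi ψ hprim, Finset.mul_sum]
      apply Finset.sum_congr rfl
      intro y _
      simp only [hc, hu]
      rw [AddChar.map_add_eq_mul]
      ring
    have hcx : ∑ x : Fin n → Fˣ, c x = 0 := by
      simp only [hc]
      rw [← Fintype.prod_sum fun (i : Fin n) (t : Fˣ) => χ i.castSucc t * (χ (Fin.last n) t)⁻¹]
      exact Finset.prod_eq_zero (Finset.mem_univ i0) hvan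
    have key : ∀ x : Fin n → Fˣ, ∑ z : Fˣ, (c x * ψ (z:F)) *
          (if (1 - (z:F) * u x) = 0 then (Fintype.card F:ℂ) else 0)
        = (Fintype.card F:ℂ) * (if u x = 0 then 0 else c x * ψ ((u x)⁻¹)) := by
      intro x
      rcases eq_or_ne (u x) 0 with h | h
      · rw [h, if_pos rfl, mul_zero]
        apply Finset.sum_eq_zero
        intro z _
        rw [mul_zero, sub_zero, if_neg one_ne_zero, mul_zero]
      · rw [if_neg h, Finset.sum_eq_single (Units.mk0 (u x)⁻¹ (inv_ne_zero h))]
        · rw [if_pos, Units.val_mk0]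
          · ring
          · rw [Units.val_mk0, inv_mul_cancel₀ h, sub_self]
        · intro z _ hz
          rw [if_neg, mul_zero]
          intro hcon
          apply hz
          refine Units.ext ?_
          rw [Units.val_mk0]
          exact eq_inv_of_mul_eq_one_left (by linear_combination -hcon)
        · intro habs
          exact absurd (Finset.mem_univ _) habs
    rw [step1]
    simp_rw [mul_sub, mul_one, Finset.sum_sub_distrib]
    have h2 : ∑ z : Fˣ, ∑ x : Fin n → Fˣ, c x * ψ (z:F) = 0 := by
      apply Finset.sum_eq_zero
      intro z _
      rw [← Finset.sum_mul, hcx, zero_mul]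
    rw [h2, sub_zero, Finset.sum_comm]
    calc ∑ x : Fin n → Fˣ, ∑ z : Fˣ, (c x * ψ (z:F)) *
          (if (1 - (z:F) * u x) = 0 then (Fintype.card F:ℂ) else 0)
        = ∑ x : Fin n → Fˣ, (Fintype.card F:ℂ) * (if u x = 0 then 0 else c x * ψ ((u x)⁻¹)) :=
          Finset.sum_congr rfl (fun x _ => key x)
      _ = (Fintype.card F : ℂ) * S0 := by rw [hS0, Finset.mul_sum]
  rw [hL, hR]; ring
end

section
/- The determinant of the (n+2)×(n+2) integer matrix M(δ_1) whose columns are V_1, …, V_{n+2} equals −(n+1), and the determinant of the (n+2)×(n+2) integer matrix M(δ_2) whose columns are V_1, …, V_{n+1}, V_{n+3} equals n+1. -/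
/-- The lattice points `V_1, …, V_{n+3}` in `ℤ^{n+2}` (0-indexed: `Vlat n j` is `V_{j+1}`):
`V_i = e_i + e_{n+1} + e_{n+2}` for `1 ≤ i ≤ n`,
`V_{n+1} = −(e_1+⋯+e_n) + e_{n+1} + e_{n+2}`, `V_{n+2} = e_{n+1}`, `V_{n+3} = e_{n+2}`. -/
def Vlat (n : ℕ) (j : Fin (n + 3)) (i : Fin (n + 2)) : ℤ :=
  if (j : ℕ) < n then
    (if (i : ℕ) = (j : ℕ) then 1 else 0) + (if (i : ℕ) = n then 1 else 0) +
      (if (i : ℕ) = n + 1 then 1 else 0)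
  else if (j : ℕ) = n then (if (i : ℕ) < n then -1 else 1)
  else if (j : ℕ) = n + 1 then (if (i : ℕ) = n then 1 else 0)
  else (if (i : ℕ) = n + 1 then 1 else 0)

def Mm (n m : ℕ) : Matrix (Fin (n + 2)) (Fin (n + 2)) ℤ :=
  Matrix.of fun i j =>
    if (j : ℕ) < n then
      (if (i : ℕ) = (j : ℕ) then 1 else 0) + (if (i : ℕ) = n then 1 else 0) +
        (if (i : ℕ) = n + 1 then 1 else 0)
    else if (j : ℕ) = n then (if (i : ℕ) < n then -1 else 1)
    else (if (i : ℕ) = m then 1 else 0)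

lemma step1_s14 (n m : ℕ) : ∀ k, k ≤ n →
    (Mm n m).det = ((Mm n m).updateCol ⟨n, by omega⟩
      (fun i => if (i : ℕ) < k then 0 else if (i : ℕ) < n then -1 else (k : ℤ) + 1)).det := by
  intro k
  induction k with
  | zero =>
    intro _
    congr 1
    ext i j
    by_cases hj : j = (⟨n, by omega⟩ : Fin (n + 2)) <;>
      simp [Matrix.updateCol_apply, hj, Mm] <;> omega
  | succ k ih =>
    intro hk
    rw [ih (by omega)]
    have hne : (⟨n, by omega⟩ : Fin (n + 2)) ≠ ⟨k, by omega⟩ := by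
      simp only [ne_eq, Fin.mk.injEq]; omega
    rw [← Matrix.det_updateCol_add_self _ hne]
    congr 1
    ext i j
    by_cases hj : j = (⟨n, by omega⟩ : Fin (n + 2))
    · subst hj
      simp only [Matrix.updateCol_self, Matrix.updateCol_apply, if_pos rfl,
        if_neg hne.symm, Mm, Matrix.of_apply]
      push_cast
      rw [if_pos (show k < n by omega)]
      split_ifs <;> omega
    · simp [Matrix.updateCol_apply, hj]

/-- the lower-triangular matrix reached in the second case. -/
def T2 (n : ℕ) : Matrix (Fin (n + 2)) (Fin (n + 2)) ℤ :=
  Matrix.of fun i j =>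
    if (j : ℕ) < n then
      (if (i : ℕ) = (j : ℕ) then 1 else 0) + (if (i : ℕ) = n then 1 else 0) +
        (if (i : ℕ) = n + 1 then 1 else 0)
    else if (j : ℕ) = n then (if (i : ℕ) = n then (n : ℤ) + 1 else 0)
    else (if (i : ℕ) = n + 1 then 1 else 0)

/-- the lower-triangular matrix reached in the first case (after a column swap). -/
def T1 (n : ℕ) : Matrix (Fin (n + 2)) (Fin (n + 2)) ℤ :=
  Matrix.of fun i j =>
    if (j : ℕ) < n then
      (if (i : ℕ) = (j : ℕ) then 1 else 0) + (if (i : ℕ) = n then 1 else 0) +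
        (if (i : ℕ) = n + 1 then 1 else 0)
    else if (j : ℕ) = n then (if (i : ℕ) = n then 1 else 0)
    else (if (i : ℕ) = n + 1 then (n : ℤ) + 1 else 0)

lemma detT2 (n : ℕ) : (T2 n).det = (n : ℤ) + 1 := by
  have hlow : (T2 n).BlockTriangular OrderDual.toDual := by
    intro i j hij
    have hij' : (i : ℕ) < (j : ℕ) := hij
    simp only [T2, Matrix.of_apply]
    split_ifs <;> omega
  rw [Matrix.det_of_lowerTriangular _ hlow]
  have hdiag : ∀ i : Fin (n + 2), (T2 n) i i = if i = (⟨n, by omega⟩ : Fin (n + 2))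
      then (n : ℤ) + 1 else 1 := by
    intro i
    simp only [T2, Matrix.of_apply, Fin.ext_iff]
    split_ifs <;> omega
  rw [Finset.prod_congr rfl (fun i _ => hdiag i)]
  rw [Finset.prod_ite_eq' Finset.univ (⟨n, by omega⟩ : Fin (n + 2)) (fun _ => (n : ℤ) + 1)]
  simp

lemma detT1 (n : ℕ) : (T1 n).det = (n : ℤ) + 1 := by
  have hlow : (T1 n).BlockTriangular OrderDual.toDual := by
    intro i j hij
    have hij' : (i : ℕ) < (j : ℕ) := hij
    simp only [T1, Matrix.of_apply]
    split_ifs <;> omega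
  rw [Matrix.det_of_lowerTriangular _ hlow]
  have hdiag : ∀ i : Fin (n + 2), (T1 n) i i = if i = (⟨n + 1, by omega⟩ : Fin (n + 2))
      then (n : ℤ) + 1 else 1 := by
    intro i
    simp only [T1, Matrix.of_apply, Fin.ext_iff]
    split_ifs <;> omega
  rw [Finset.prod_congr rfl (fun i _ => hdiag i)]
  rw [Finset.prod_ite_eq' Finset.univ (⟨n + 1, by omega⟩ : Fin (n + 2)) (fun _ => (n : ℤ) + 1)]
  simp

lemma key2 (n : ℕ) (hn : 1 ≤ n) : (Mm n (n + 1)).det = (n : ℤ) + 1 := by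
  rw [step1_s14 n (n + 1) n le_rfl]
  set cn : Fin (n + 2) := ⟨n, by omega⟩ with hcn
  set cn1 : Fin (n + 2) := ⟨n + 1, by omega⟩ with hcn1
  have e1 : (cn : ℕ) = n := rfl
  have e2 : (cn1 : ℕ) = n + 1 := rfl
  set A : Matrix (Fin (n + 2)) (Fin (n + 2)) ℤ :=
    (Mm n (n + 1)).updateCol cn
      (fun i => if (i : ℕ) < n then 0 else if (i : ℕ) < n then -1 else (n : ℤ) + 1) with hA
  have hne : cn ≠ cn1 := by simp only [hcn, hcn1, ne_eq, Fin.mk.injEq]; omega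
  have hAcn : ∀ i, A i cn = if (i : ℕ) < n then 0 else (n : ℤ) + 1 := by
    intro i
    rw [hA, Matrix.updateCol_apply, if_pos rfl]
    split_ifs <;> rfl
  have hAelse : ∀ i j, j ≠ cn → A i j = Mm n (n + 1) i j := by
    intro i j hj
    rw [hA, Matrix.updateCol_apply, if_neg hj]
  have hMmcn1 : ∀ i, Mm n (n + 1) i cn1 = if (i : ℕ) = n + 1 then 1 else 0 := by
    intro i
    simp only [Mm, Matrix.of_apply, e2]
    rw [if_neg (by omega), if_neg (by omega)]
  rw [← Matrix.det_updateCol_add_smul_self A hne (-((n : ℤ) + 1))]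
  have hEq : (A.updateCol cn fun k => A k cn + (-((n : ℤ) + 1)) • A k cn1) = T2 n := by
    ext i j
    rw [Matrix.updateCol_apply]
    by_cases hj : j = cn
    · subst hj
      rw [if_pos rfl, hAcn i, hAelse i cn1 (Ne.symm hne), hMmcn1 i, smul_eq_mul]
      simp only [T2, Matrix.of_apply, e1]
      rw [if_neg (by omega : ¬ n < n), if_pos trivial]
      split_ifs <;> first | ring1 | (exfalso; omega)
    · rw [if_neg hj, hAelse i j hj]
      have hjn : (j : ℕ) ≠ n := by
        intro h
        exact hj (by rw [hcn]; exact Fin.ext h)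
      simp only [Mm, T2, Matrix.of_apply]
      split_ifs <;> first | rfl | (exfalso; omega)
  rw [hEq, detT2]

lemma key1 (n : ℕ) (hn : 1 ≤ n) : (Mm n n).det = -((n : ℤ) + 1) := by
  rw [step1_s14 n n n le_rfl]
  set cn : Fin (n + 2) := ⟨n, by omega⟩ with hcn
  set cn1 : Fin (n + 2) := ⟨n + 1, by omega⟩ with hcn1
  have e1 : (cn : ℕ) = n := rfl
  have e2 : (cn1 : ℕ) = n + 1 := rfl
  set A : Matrix (Fin (n + 2)) (Fin (n + 2)) ℤ :=
    (Mm n n).updateCol cn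
      (fun i => if (i : ℕ) < n then 0 else if (i : ℕ) < n then -1 else (n : ℤ) + 1) with hA
  have hne : cn ≠ cn1 := by simp only [hcn, hcn1, ne_eq, Fin.mk.injEq]; omega
  have hAcn : ∀ i, A i cn = if (i : ℕ) < n then 0 else (n : ℤ) + 1 := by
    intro i
    rw [hA, Matrix.updateCol_apply, if_pos rfl]
    split_ifs <;> rfl
  have hAelse : ∀ i j, j ≠ cn → A i j = Mm n n i j := by
    intro i j hj
    rw [hA, Matrix.updateCol_apply, if_neg hj]
  have hMmcn1 : ∀ i, Mm n n i cn1 = if (i : ℕ) = n then 1 else 0 := by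
    intro i
    simp only [Mm, Matrix.of_apply, e2]
    rw [if_neg (by omega), if_neg (by omega)]
  rw [← Matrix.det_updateCol_add_smul_self A hne (-((n : ℤ) + 1))]
  have hEq : (A.updateCol cn fun k => A k cn + (-((n : ℤ) + 1)) • A k cn1) =
      (T1 n).submatrix id (Equiv.swap cn cn1) := by
    ext i j
    rw [Matrix.submatrix_apply, id_eq, Matrix.updateCol_apply]
    by_cases hj : j = cn
    · subst hj
      rw [if_pos rfl, Equiv.swap_apply_left, hAcn i, hAelse i cn1 (Ne.symm hne),
        hMmcn1 i, smul_eq_mul]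
      simp only [T1, Matrix.of_apply, e2]
      rw [if_neg (by omega : ¬ n + 1 < n), if_neg (by omega : ¬ n + 1 = n)]
      split_ifs <;> first | ring1 | (exfalso; omega)
    · rw [if_neg hj, hAelse i j hj]
      have hjn : (j : ℕ) ≠ n := by
        intro h
        exact hj (by rw [hcn]; exact Fin.ext h)
      by_cases hj1 : j = cn1
      · subst hj1
        rw [Equiv.swap_apply_right]
        simp only [Mm, T1, Matrix.of_apply, e1, e2]
        rw [if_neg (by omega : ¬ n + 1 < n), if_neg (by omega : ¬ n + 1 = n),
          if_neg (by omega : ¬ n < n), if_pos trivial]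
      · rw [Equiv.swap_apply_of_ne_of_ne hj hj1]
        have hjn1 : (j : ℕ) ≠ n + 1 := by
          intro h
          exact hj1 (by rw [hcn1]; exact Fin.ext h)
        simp only [Mm, T1, Matrix.of_apply]
        split_ifs <;> first | rfl | (exfalso; omega)
  rw [hEq, Matrix.det_permute' (Equiv.swap cn cn1) (T1 n), Equiv.Perm.sign_swap hne, detT1]
  simp


theorem stmt14 (n : ℕ) (hn : 1 ≤ n) :
    (Matrix.of fun i j : Fin (n + 2) => Vlat n j.castSucc i).det = -((n : ℤ) + 1) ∧
    (Matrix.of fun i j : Fin (n + 2) =>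
        if (j : ℕ) ≤ n then Vlat n j.castSucc i else Vlat n (Fin.last (n + 2)) i).det
      = (n : ℤ) + 1 := by
  constructor
  · have h1 : (Matrix.of fun i j : Fin (n + 2) => Vlat n j.castSucc i) = Mm n n := by
      ext i j
      simp only [Matrix.of_apply, Vlat, Mm, Fin.coe_castSucc]
      split_ifs <;> first | rfl | ring1 | (exfalso; omega)
    rw [h1]
    exact key1 n hn
  · have h2 : (Matrix.of fun i j : Fin (n + 2) =>
        if (j : ℕ) ≤ n then Vlat n j.castSucc i else Vlat n (Fin.last (n + 2)) i)
        = Mm n (n + 1) := by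
      ext i j
      simp only [Matrix.of_apply, Vlat, Mm, Fin.coe_castSucc, Fin.val_last]
      split_ifs <;> first | rfl | ring1 | (exfalso; omega)
    rw [h2]
    exact key2 n hn
end

section
/- For every integer k ≥ 0, the number of lattice points of ℤ^{n+2} lying in the dilate k·Δ_1, where Δ_1 is the convex hull of the origin and V_1, …, V_{n+2}, equals Σ_{j=0}^{min(k,n)} C(k−j+n+2, n+2), where C(m, r) denotes the binomial coefficient. -/
open Finset
open scoped Pointwise

/-- The points `V_1, …, V_{n+2}` in `ℝ^{n+2}` (0-indexed: `Vpt1 n j` is `V_{j+1}`):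
`V_i = e_i + e_{n+1} + e_{n+2}` for `1 ≤ i ≤ n`,
`V_{n+1} = −(e_1+⋯+e_n) + e_{n+1} + e_{n+2}`, `V_{n+2} = e_{n+1}`. -/
def Vpt1 (n : ℕ) (j : Fin (n + 2)) (i : Fin (n + 2)) : ℝ :=
  if (j : ℕ) < n then
    (if (i : ℕ) = (j : ℕ) then 1 else 0) + (if (i : ℕ) = n then 1 else 0) +
      (if (i : ℕ) = n + 1 then 1 else 0)
  else if (j : ℕ) = n then (if (i : ℕ) < n then -1 else 1)
  else (if (i : ℕ) = n then 1 else 0)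

namespace Stmt18Aux

variable {n : ℕ}

/-- index `n` in `Fin (n+2)` -/
def eN (n : ℕ) : Fin (n + 2) := ⟨n, by omega⟩
/-- index `n+1` in `Fin (n+2)` -/
def eN1 (n : ℕ) : Fin (n + 2) := ⟨n + 1, by omega⟩
/-- embedding `Fin n → Fin (n+2)` -/
def emb {n : ℕ} (i : Fin n) : Fin (n + 2) := ⟨i.1, by omega⟩

lemma sum_split {M : Type*} [AddCommMonoid M] (f : Fin (n + 2) → M) :
    ∑ j, f j = (∑ j : Fin n, f (emb j)) + f (eN n) + f (eN1 n) := by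
  rw [Fin.sum_univ_castSucc, Fin.sum_univ_castSucc]
  have e2 : (Fin.last n).castSucc = eN n := by ext; simp [eN]
  have e3 : Fin.last (n+1) = eN1 n := by ext; simp [eN1]
  rw [e2, e3]
  have : (∑ i : Fin n, f (i.castSucc.castSucc)) = ∑ j : Fin n, f (emb j) :=
    Finset.sum_congr rfl fun j _ => rfl
  rw [this]

lemma V_lt (j : Fin (n + 2)) (hj : (j : ℕ) < n) (i : Fin (n + 2)) :
    Vpt1 n j i = (if (i : ℕ) = (j : ℕ) then 1 else 0) + (if (i : ℕ) = n then 1 else 0) +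
      (if (i : ℕ) = n + 1 then 1 else 0) := by
  rw [Vpt1, if_pos hj]

lemma V_n (j : Fin (n + 2)) (hj : (j : ℕ) = n) (i : Fin (n + 2)) :
    Vpt1 n j i = (if (i : ℕ) < n then -1 else 1) := by
  rw [Vpt1, if_neg (by omega), if_pos hj]

lemma V_n1 (j : Fin (n + 2)) (hj : (j : ℕ) = n + 1) (i : Fin (n + 2)) :
    Vpt1 n j i = (if (i : ℕ) = n then 1 else 0) := by
  rw [Vpt1, if_neg (by omega), if_neg (by omega)]

lemma sum_mul_V_lt (μ : Fin (n + 2) → ℝ) {i : Fin (n + 2)} (hi : (i : ℕ) < n) :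
    ∑ j, μ j * Vpt1 n j i = μ ⟨i.1, by omega⟩ - μ (eN n) := by
  rw [sum_split (fun j => μ j * Vpt1 n j i)]
  have h1 : (∑ j : Fin n, μ (emb j) * Vpt1 n (emb j) i)
      = ∑ j : Fin n, (if (⟨i.1, hi⟩ : Fin n) = j then μ (emb j) else 0) := by
    refine Finset.sum_congr rfl fun j _ => ?_
    rw [V_lt (emb j) j.2 i]
    have : (emb j : ℕ) = (j : ℕ) := rfl
    have hin : ¬((i : ℕ) = n) := by omega
    have hin1 : ¬((i : ℕ) = n + 1) := by omega
    rw [this, if_neg hin, if_neg hin1]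
    by_cases h : (i : ℕ) = (j : ℕ)
    · rw [if_pos h, if_pos (by ext; exact h)]; ring
    · rw [if_neg h, if_neg (by simp only [Fin.ext_iff]; exact fun hc => h hc)]; ring
  rw [h1, Finset.sum_ite_eq, if_pos (Finset.mem_univ _)]
  have hN : ((eN n : Fin (n+2)) : ℕ) = n := rfl
  have hN1 : ((eN1 n : Fin (n+2)) : ℕ) = n + 1 := rfl
  have hin : ¬((i : ℕ) = n) := by omega
  rw [V_n (eN n) hN i, V_n1 (eN1 n) hN1 i, if_pos hi, if_neg hin]
  have : emb (⟨i.1, hi⟩ : Fin n) = ⟨i.1, by omega⟩ := rfl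
  rw [this]; ring

lemma sum_mul_V_n (μ : Fin (n + 2) → ℝ) {i : Fin (n + 2)} (hi : (i : ℕ) = n) :
    ∑ j, μ j * Vpt1 n j i = ∑ j, μ j := by
  rw [sum_split (fun j => μ j * Vpt1 n j i), sum_split μ]
  have h1 : (∑ j : Fin n, μ (emb j) * Vpt1 n (emb j) i) = ∑ j : Fin n, μ (emb j) := by
    refine Finset.sum_congr rfl fun j _ => ?_
    rw [V_lt (emb j) j.2 i]
    have : (emb j : ℕ) = (j : ℕ) := rfl
    have hij : ¬((i : ℕ) = (j : ℕ)) := by omega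
    have hin1 : ¬((i : ℕ) = n + 1) := by omega
    rw [this, if_neg hij, if_pos hi, if_neg hin1]; ring
  have hlt : ¬((i : ℕ) < n) := by omega
  rw [h1, V_n (eN n) rfl i, V_n1 (eN1 n) rfl i, if_neg hlt, if_pos hi]; ring

lemma sum_mul_V_n1 (μ : Fin (n + 2) → ℝ) {i : Fin (n + 2)} (hi : (i : ℕ) = n + 1) :
    ∑ j, μ j * Vpt1 n j i = (∑ j, μ j) - μ (eN1 n) := by
  rw [sum_split (fun j => μ j * Vpt1 n j i), sum_split μ]
  have h1 : (∑ j : Fin n, μ (emb j) * Vpt1 n (emb j) i) = ∑ j : Fin n, μ (emb j) := by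
    refine Finset.sum_congr rfl fun j _ => ?_
    rw [V_lt (emb j) j.2 i]
    have : (emb j : ℕ) = (j : ℕ) := rfl
    have hij : ¬((i : ℕ) = (j : ℕ)) := by omega
    have hin : ¬((i : ℕ) = n) := by omega
    rw [this, if_neg hij, if_neg hin, if_pos hi]; ring
  have hlt : ¬((i : ℕ) < n) := by omega
  have hin : ¬((i : ℕ) = n) := by omega
  rw [h1, V_n (eN n) rfl i, V_n1 (eN1 n) rfl i, if_neg hlt, if_neg hin]; ring


lemma mem_hull_iff (v : Fin (n + 2) → ℝ) :
    v ∈ convexHull ℝ (insert (0 : Fin (n + 2) → ℝ) (Set.range (Vpt1 n))) ↔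
      ∃ μ : Fin (n + 2) → ℝ, (∀ j, 0 ≤ μ j) ∧ (∑ j, μ j) ≤ 1 ∧
        ∀ i, v i = ∑ j, μ j * Vpt1 n j i := by
  constructor
  · intro hv
    suffices hsub : convexHull ℝ (insert (0 : Fin (n + 2) → ℝ) (Set.range (Vpt1 n))) ⊆
        {w : Fin (n + 2) → ℝ | ∃ μ : Fin (n + 2) → ℝ, (∀ j, 0 ≤ μ j) ∧ (∑ j, μ j) ≤ 1 ∧
          ∀ i, w i = ∑ j, μ j * Vpt1 n j i} from hsub hv
    refine convexHull_min ?_ ?_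
    · intro w hw
      rcases hw with rfl | ⟨j₀, rfl⟩
      · exact ⟨0, fun j => le_refl 0, by simp, by simp⟩
      · refine ⟨fun j => if j = j₀ then 1 else 0, fun j => by dsimp only; split <;> norm_num, by simp, ?_⟩
        intro i
        rw [show (∑ j, (if j = j₀ then (1:ℝ) else 0) * Vpt1 n j i)
            = ∑ j, (if j = j₀ then Vpt1 n j i else 0) from
          Finset.sum_congr rfl fun j _ => by split <;> ring]
        rw [Finset.sum_ite_eq', if_pos (Finset.mem_univ _)]
    · intro w₁ h₁ w₂ h₂ a b ha hb hab
      obtain ⟨μ₁, hμ₁0, hμ₁s, hμ₁⟩ := h₁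
      obtain ⟨μ₂, hμ₂0, hμ₂s, hμ₂⟩ := h₂
      refine ⟨fun j => a * μ₁ j + b * μ₂ j, fun j => add_nonneg (mul_nonneg ha (hμ₁0 j)) (mul_nonneg hb (hμ₂0 j)), ?_, ?_⟩
      · rw [Finset.sum_add_distrib, ← Finset.mul_sum, ← Finset.mul_sum]
        calc a * (∑ j, μ₁ j) + b * (∑ j, μ₂ j) ≤ a * 1 + b * 1 := by gcongr
          _ = 1 := by rw [mul_one, mul_one, hab]
      · intro i
        have : (a • w₁ + b • w₂) i = a * w₁ i + b * w₂ i := rfl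
        rw [this, hμ₁ i, hμ₂ i, Finset.mul_sum, Finset.mul_sum, ← Finset.sum_add_distrib]
        exact Finset.sum_congr rfl fun j _ => by ring
  · rintro ⟨μ, hμ0, hμs, hv⟩
    set z : Option (Fin (n + 2)) → (Fin (n + 2) → ℝ) :=
      fun o => Option.elim o (0 : Fin (n + 2) → ℝ) (Vpt1 n) with hz
    set w : Option (Fin (n + 2)) → ℝ := fun o => Option.elim o (1 - ∑ j, μ j) μ with hwdef
    have hw0 : ∀ o, 0 ≤ w o := by
      rintro (_ | j)
      · simpa [w] using hμs
      · exact hμ0 j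
    have hws : (∑ o : Option (Fin (n + 2)), w o) = 1 := by
      rw [Fintype.sum_option]; simp [w]
    have hmem := Finset.centerMass_mem_convexHull (Finset.univ : Finset (Option (Fin (n + 2))))
      (fun o _ => hw0 o) (by rw [hws]; norm_num)
      (s := insert (0 : Fin (n + 2) → ℝ) (Set.range (Vpt1 n))) (z := z)
      (by rintro (_ | j) _
          · exact Set.mem_insert _ _
          · exact Set.mem_insert_of_mem _ ⟨j, rfl⟩)
    rw [Finset.centerMass_eq_of_sum_1 _ _ hws] at hmem
    have hveq : v = ∑ o : Option (Fin (n + 2)), w o • z o := by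
      funext i
      rw [Finset.sum_apply, hv i, Fintype.sum_option]
      simp only [z, w, Option.elim, Pi.smul_apply, smul_eq_mul, Pi.zero_apply, mul_zero, zero_add]
    rw [hveq]
    exact hmem

lemma mem_smul_hull_iff (k : ℕ) (v : Fin (n + 2) → ℝ) :
    v ∈ (k : ℝ) • convexHull ℝ (insert (0 : Fin (n + 2) → ℝ) (Set.range (Vpt1 n))) ↔
      ∃ μ : Fin (n + 2) → ℝ, (∀ j, 0 ≤ μ j) ∧ (∑ j, μ j) ≤ k ∧
        ∀ i, v i = ∑ j, μ j * Vpt1 n j i := by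
  rcases Nat.eq_zero_or_pos k with rfl | hk
  · rw [Nat.cast_zero, Set.zero_smul_set ⟨0, subset_convexHull ℝ _ (Set.mem_insert _ _)⟩]
    constructor
    · intro h
      have hv : v = 0 := h
      exact ⟨0, fun j => le_refl _, by simp, fun i => by simp [hv]⟩
    · rintro ⟨μ, hμ0, hμs, hv⟩
      have hs0 : (∑ j, μ j) = 0 :=
        le_antisymm (by simpa using hμs) (Finset.sum_nonneg fun j _ => hμ0 j)
      have hall : ∀ j ∈ Finset.univ, μ j = 0 :=
        (Finset.sum_eq_zero_iff_of_nonneg (fun j _ => hμ0 j)).1 hs0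
      show v ∈ (0 : Set (Fin (n + 2) → ℝ))
      have : v = 0 := by
        funext i
        rw [hv i]
        exact Finset.sum_eq_zero fun j hj => by rw [hall j hj, zero_mul]
      simp [this]
  · have hk0 : (k : ℝ) ≠ 0 := (Nat.cast_pos.2 hk).ne'
    rw [Set.mem_smul_set_iff_inv_smul_mem₀ hk0, mem_hull_iff]
    constructor
    · rintro ⟨ν, hν0, hνs, hν⟩
      have hkpos : (0:ℝ) < k := Nat.cast_pos.2 hk
      refine ⟨fun j => k * ν j, fun j => mul_nonneg hkpos.le (hν0 j), ?_, ?_⟩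
      · rw [← Finset.mul_sum]
        calc (k:ℝ) * (∑ j, ν j) ≤ k * 1 := by gcongr
          _ = k := mul_one _
      · intro i
        have h := hν i
        rw [Pi.smul_apply, smul_eq_mul] at h
        have h2 : (∑ j, (k:ℝ) * ν j * Vpt1 n j i) = (k:ℝ) * ∑ j, ν j * Vpt1 n j i := by
          rw [Finset.mul_sum]; exact Finset.sum_congr rfl fun j _ => by ring
        rw [h2, ← h]; field_simp
    · rintro ⟨μ, hμ0, hμs, hμ⟩
      have hkpos : (0:ℝ) < k := Nat.cast_pos.2 hk
      refine ⟨fun j => μ j / k, fun j => div_nonneg (hμ0 j) hkpos.le, ?_, ?_⟩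
      · rw [← Finset.sum_div]
        exact (div_le_one hkpos).2 hμs
      · intro i
        rw [Pi.smul_apply, smul_eq_mul, hμ i, Finset.mul_sum]
        exact Finset.sum_congr rfl fun j _ => by field_simp


/-- Sum of the first `n` coordinates. -/
def Sx {n : ℕ} (x : Fin (n + 2) → ℤ) : ℤ := ∑ i : Fin n, x (emb i)

/-- Integer characterization of membership in `k • Δ₁`. -/
def Q (n k : ℕ) (x : Fin (n + 2) → ℤ) : Prop :=
  Sx x ≤ x (eN1 n) ∧ (∀ i : Fin n, 0 ≤ ((n : ℤ) + 1) * x (emb i) + x (eN1 n) - Sx x) ∧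
    x (eN1 n) ≤ x (eN n) ∧ x (eN n) ≤ (k : ℤ)

lemma mem_iff_Q (k : ℕ) (x : Fin (n + 2) → ℤ) :
    ((fun i => (x i : ℝ)) ∈
      (k : ℝ) • convexHull ℝ (insert (0 : Fin (n + 2) → ℝ) (Set.range (Vpt1 n)))) ↔ Q n k x := by
  rw [mem_smul_hull_iff]
  constructor
  · rintro ⟨μ, hμ0, hμs, hv⟩
    have hA : ((x (eN n) : ℤ) : ℝ) = ∑ j, μ j := (hv (eN n)).trans (sum_mul_V_n μ rfl)
    have hB : ((x (eN1 n) : ℤ) : ℝ) = (∑ j, μ j) - μ (eN1 n) :=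
      (hv (eN1 n)).trans (sum_mul_V_n1 μ rfl)
    have hC : ∀ i : Fin n, ((x (emb i) : ℤ) : ℝ) = μ (emb i) - μ (eN n) := fun i =>
      (hv (emb i)).trans (sum_mul_V_lt μ i.2)
    have hsplit : (∑ j, μ j) = (∑ i : Fin n, μ (emb i)) + μ (eN n) + μ (eN1 n) := sum_split μ
    have hS : ((Sx x : ℤ) : ℝ) = (∑ i : Fin n, μ (emb i)) - n * μ (eN n) := by
      rw [Sx]; push_cast
      rw [show (∑ i : Fin n, ((x (emb i) : ℤ) : ℝ)) = ∑ i : Fin n, (μ (emb i) - μ (eN n)) from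
        Finset.sum_congr rfl fun i _ => hC i]
      rw [Finset.sum_sub_distrib, Finset.sum_const, Finset.card_univ, Fintype.card_fin,
        nsmul_eq_mul]
    refine ⟨?_, ?_, ?_, ?_⟩
    · have : ((Sx x : ℤ) : ℝ) ≤ ((x (eN1 n) : ℤ) : ℝ) := by
        rw [hS, hB, hsplit]
        have h0 := hμ0 (eN n)
        have : (0:ℝ) ≤ ((n:ℝ) + 1) * μ (eN n) := by positivity
        linarith
      exact_mod_cast this
    · intro i
      have : (0:ℝ) ≤ ((n : ℝ) + 1) * ((x (emb i) : ℤ) : ℝ) + ((x (eN1 n) : ℤ):ℝ)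
          - ((Sx x : ℤ):ℝ) := by
        rw [hS, hB, hC i, hsplit]
        have key : ((n : ℝ) + 1) * (μ (emb i) - μ (eN n)) +
            ((∑ i : Fin n, μ (emb i)) + μ (eN n) + μ (eN1 n) - μ (eN1 n)) -
            ((∑ i : Fin n, μ (emb i)) - n * μ (eN n)) = ((n:ℝ) + 1) * μ (emb i) := by ring
        rw [key]
        have := hμ0 (emb i)
        positivity
      exact_mod_cast this
    · have : ((x (eN1 n) : ℤ) : ℝ) ≤ ((x (eN n) : ℤ) : ℝ) := by
        rw [hA, hB]
        have := hμ0 (eN1 n)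
        linarith
      exact_mod_cast this
    · have : ((x (eN n) : ℤ) : ℝ) ≤ ((k : ℕ) : ℝ) := by rw [hA]; exact hμs
      exact_mod_cast this
  · rintro ⟨h1, h2, h3, h4⟩
    set c : ℝ := ((x (eN1 n) - Sx x : ℤ) : ℝ) / ((n : ℝ) + 1) with hcdef
    have hnpos : (0:ℝ) < (n:ℝ) + 1 := by positivity
    have hc0 : 0 ≤ c := div_nonneg (by exact_mod_cast sub_nonneg.2 h1) hnpos.le
    have hcmul : ((n:ℝ) + 1) * c = ((x (eN1 n) : ℤ) : ℝ) - ((Sx x : ℤ) : ℝ) := by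
      rw [hcdef, mul_div_cancel₀ _ hnpos.ne']; push_cast; ring
    set μf : Fin (n + 2) → ℝ := fun j => if h : (j : ℕ) < n then ((x ⟨j.1, by omega⟩ : ℤ) : ℝ) + c
      else if (j : ℕ) = n then c else ((x (eN n) - x (eN1 n) : ℤ) : ℝ) with hμfdef
    have hemb : ∀ i : Fin n, μf (emb i) = ((x (emb i) : ℤ) : ℝ) + c := fun i => by
      simp only [μf]; rw [dif_pos (show ((emb i : Fin (n + 2)) : ℕ) < n from i.2)]
    have heN : μf (eN n) = c := by
      simp only [μf]
      rw [dif_neg (by simp [eN]), if_pos (by simp [eN])]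
    have heN1 : μf (eN1 n) = ((x (eN n) : ℤ) : ℝ) - ((x (eN1 n) : ℤ) : ℝ) := by
      simp only [μf]
      rw [dif_neg (by simp [eN1]), if_neg (by simp [eN1])]
      push_cast; ring
    have hSxc : (∑ i : Fin n, ((x (emb i) : ℤ) : ℝ)) = ((Sx x : ℤ) : ℝ) := by
      rw [Sx, Int.cast_sum]
    have hμsum : (∑ j, μf j) = ((x (eN n) : ℤ) : ℝ) := by
      rw [sum_split μf, heN, heN1,
        Finset.sum_congr rfl (fun i _ => hemb i), Finset.sum_add_distrib, Finset.sum_const,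
        Finset.card_univ, Fintype.card_fin, nsmul_eq_mul, hSxc]
      linear_combination hcmul
    refine ⟨μf, ?_, ?_, ?_⟩
    · intro j
      simp only [μf]
      split
      · rename_i h
        have heq : ((x ⟨j.1, by omega⟩ : ℤ) : ℝ) + c
            = ((((n:ℤ)+1) * x (emb ⟨j.1, h⟩) + x (eN1 n) - Sx x : ℤ) : ℝ) / ((n:ℝ) + 1) := by
          rw [eq_div_iff hnpos.ne']
          have : (emb (⟨j.1, h⟩ : Fin n)) = (⟨j.1, by omega⟩ : Fin (n + 2)) := rfl
          rw [this]
          push_cast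
          linear_combination hcmul
        rw [heq]
        exact div_nonneg (by exact_mod_cast h2 ⟨j.1, ‹(j:ℕ) < n›⟩) hnpos.le
      · split
        · exact hc0
        · exact_mod_cast sub_nonneg.2 h3
    · rw [hμsum]; exact_mod_cast h4
    · intro i
      by_cases hi : (i : ℕ) < n
      · rw [sum_mul_V_lt μf hi]
        simp only [Fin.eta]
        have hii : emb (⟨i.1, hi⟩ : Fin n) = i := Fin.ext rfl
        have h' := hemb ⟨i.1, hi⟩
        rw [hii] at h'
        rw [h', heN]
        ring
      · by_cases hi2 : (i : ℕ) = n
        · rw [sum_mul_V_n μf hi2, hμsum]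
          rw [show i = eN n from Fin.ext (by simpa [eN] using hi2)]
        · have hi3 : (i : ℕ) = n + 1 := by omega
          rw [sum_mul_V_n1 μf hi3, hμsum, heN1]
          rw [show i = eN1 n from Fin.ext (by simpa [eN1] using hi3)]
          ring


lemma card_tuple : ∀ (d m : ℕ), (Finset.Nat.antidiagonalTuple (d + 1) m).card = (m + d).choose d := by
  intro d
  induction d with
  | zero => intro m; simp
  | succ d ih =>
    intro m
    have hbij : (Finset.Nat.antidiagonalTuple (d + 2) m).card
        = ((Finset.range (m + 1)).sigma
            (fun a => Finset.Nat.antidiagonalTuple (d + 1) (m - a))).card := by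
      refine (Finset.card_bij' (fun (x : Fin (d + 2) → ℕ) (_ : x ∈ Finset.Nat.antidiagonalTuple (d + 2) m) => (⟨x 0, Fin.tail x⟩ : (_ : ℕ) × (Fin (d + 1) → ℕ)))
        (fun (p : (_ : ℕ) × (Fin (d + 1) → ℕ)) _ => (Fin.cons p.1 p.2 : Fin (d + 2) → ℕ)) ?_ ?_ ?_ ?_)
      · intro x hx
        rw [Finset.Nat.mem_antidiagonalTuple] at hx
        rw [Fin.sum_univ_succ] at hx
        rw [Finset.mem_sigma, Finset.mem_range, Finset.Nat.mem_antidiagonalTuple]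
        have hfst : ((⟨x 0, Fin.tail x⟩ : (_ : ℕ) × (Fin (d + 1) → ℕ))).fst = x 0 := rfl
        have hsnd : ((⟨x 0, Fin.tail x⟩ : (_ : ℕ) × (Fin (d + 1) → ℕ))).snd = Fin.tail x := rfl
        rw [hfst, hsnd]
        constructor
        · omega
        · have : ∑ i : Fin (d + 1), Fin.tail x i = ∑ i : Fin (d + 1), x i.succ := rfl
          rw [this]; omega
      · intro p hp
        rw [Finset.mem_sigma, Finset.mem_range, Finset.Nat.mem_antidiagonalTuple] at hp
        rw [Finset.Nat.mem_antidiagonalTuple, Fin.sum_cons]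
        omega
      · intro x _
        exact Fin.cons_self_tail x
      · intro p _
        rfl
    rw [hbij, Finset.card_sigma]
    have : (∑ a ∈ Finset.range (m + 1), (Finset.Nat.antidiagonalTuple (d + 1) (m - a)).card)
        = ∑ a ∈ Finset.range (m + 1), (m - a + d).choose d := by
      exact Finset.sum_congr rfl fun a _ => ih (m - a)
    rw [this]
    have hrefl := Finset.sum_range_reflect (fun b => (b + d).choose d) (m + 1)
    have : (∑ a ∈ Finset.range (m + 1), (m - a + d).choose d)
        = ∑ b ∈ Finset.range (m + 1), (b + d).choose d := by
      rw [← hrefl]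
      exact Finset.sum_congr rfl fun a ha => by
        rw [Finset.mem_range] at ha; congr 2 <;> omega
    rw [this, Nat.sum_range_add_choose m d]
    congr 1


def jj {n : ℕ} (i : Fin n) : Fin (n + 3) := ⟨i.1, Nat.lt_of_lt_of_le i.2 (by omega)⟩
def jN (n : ℕ) : Fin (n + 3) := ⟨n, by omega⟩
def jN1 (n : ℕ) : Fin (n + 3) := ⟨n + 1, by omega⟩
def jN2 (n : ℕ) : Fin (n + 3) := ⟨n + 2, by omega⟩

lemma sum_split3 {M : Type*} [AddCommMonoid M] (f : Fin (n + 3) → M) :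
    ∑ j, f j = (∑ j : Fin n, f (jj j)) + f (jN n) + f (jN1 n) + f (jN2 n) := by
  rw [Fin.sum_univ_castSucc, Fin.sum_univ_castSucc, Fin.sum_univ_castSucc]
  have e1 : ((Fin.last n).castSucc.castSucc) = jN n := by ext; simp [jN]
  have e2 : ((Fin.last (n + 1)).castSucc) = jN1 n := by ext; simp [jN1]
  have e3 : (Fin.last (n + 2)) = jN2 n := by ext; simp [jN2]
  rw [e1, e2, e3]
  have : (∑ i : Fin n, f (i.castSucc.castSucc.castSucc)) = ∑ j : Fin n, f (jj j) :=
    Finset.sum_congr rfl fun j _ => rfl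
  rw [this]

/-- sum of the first `n` entries of `z`, as an integer -/
def zS {n : ℕ} (z : Fin (n + 3) → ℕ) : ℤ := ∑ i : Fin n, (z (jj i) : ℤ)

/-- the map from parameters `(r, z)` to lattice points -/
def g (n : ℕ) (p : (_ : ℕ) × (Fin (n + 3) → ℕ)) : Fin (n + 2) → ℤ := fun i =>
  if h : (i : ℕ) < n then (p.2 (jj ⟨i.1, h⟩) : ℤ) - (p.2 (jN n) : ℤ)
  else if (i : ℕ) = n then zS p.2 + (p.2 (jN n) : ℤ) + (p.1 : ℤ) + (p.2 (jN1 n) : ℤ)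
  else zS p.2 + (p.2 (jN n) : ℤ) + (p.1 : ℤ)

lemma g_emb (p : (_ : ℕ) × (Fin (n + 3) → ℕ)) (i : Fin n) :
    g n p (emb i) = (p.2 (jj i) : ℤ) - (p.2 (jN n) : ℤ) := by
  simp only [g]
  rw [dif_pos (show ((emb i : Fin (n + 2)) : ℕ) < n from i.2)]
  rfl

lemma g_eN (p : (_ : ℕ) × (Fin (n + 3) → ℕ)) :
    g n p (eN n) = zS p.2 + (p.2 (jN n) : ℤ) + (p.1 : ℤ) + (p.2 (jN1 n) : ℤ) := by
  simp only [g]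
  rw [dif_neg (by simp [eN]), if_pos (by simp [eN])]

lemma g_eN1 (p : (_ : ℕ) × (Fin (n + 3) → ℕ)) :
    g n p (eN1 n) = zS p.2 + (p.2 (jN n) : ℤ) + (p.1 : ℤ) := by
  simp only [g]
  rw [dif_neg (by simp [eN1]), if_neg (by simp [eN1])]

lemma Sx_g (p : (_ : ℕ) × (Fin (n + 3) → ℕ)) :
    Sx (g n p) = zS p.2 - (n : ℤ) * (p.2 (jN n) : ℤ) := by
  rw [Sx, Finset.sum_congr rfl (fun i _ => g_emb p i), Finset.sum_sub_distrib,
    Finset.sum_const, Finset.card_univ, Fintype.card_fin, nsmul_eq_mul, zS]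


lemma sumZ {k : ℕ} (p : (_ : ℕ) × (Fin (n + 3) → ℕ)) (hrk : p.1 ≤ k)
    (hsum : ∑ i, p.2 i = k - p.1) :
    zS p.2 + (p.2 (jN n) : ℤ) + (p.2 (jN1 n) : ℤ) + (p.2 (jN2 n) : ℤ) = (k : ℤ) - (p.1 : ℤ) := by
  have h0 : ((∑ i, p.2 i : ℕ) : ℤ) = ((k - p.1 : ℕ) : ℤ) := by exact_mod_cast congrArg (fun m : ℕ => (m : ℤ)) hsum
  rw [Nat.cast_sum, sum_split3 (fun i => (p.2 i : ℤ))] at h0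
  rw [Nat.cast_sub hrk] at h0
  exact h0

lemma Q_g {k : ℕ} (p : (_ : ℕ) × (Fin (n + 3) → ℕ)) (hrk : p.1 ≤ k) (hrn : p.1 ≤ n)
    (hsum : ∑ i, p.2 i = k - p.1) : Q n k (g n p) := by
  have hsZ := sumZ p hrk hsum
  refine ⟨?_, ?_, ?_, ?_⟩
  · rw [Sx_g, g_eN1]
    have h : (0:ℤ) ≤ ((n:ℤ) + 1) * (p.2 (jN n) : ℤ) + (p.1 : ℤ) := by positivity
    linarith
  · intro i
    rw [g_emb, g_eN1, Sx_g]
    have key : ((n:ℤ) + 1) * ((p.2 (jj i) : ℤ) - (p.2 (jN n) : ℤ)) +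
        (zS p.2 + (p.2 (jN n) : ℤ) + (p.1 : ℤ)) - (zS p.2 - (n : ℤ) * (p.2 (jN n) : ℤ))
        = ((n:ℤ) + 1) * (p.2 (jj i) : ℤ) + (p.1 : ℤ) := by ring
    rw [key]
    positivity
  · rw [g_eN, g_eN1]
    have h : (0:ℤ) ≤ (p.2 (jN1 n) : ℤ) := by positivity
    linarith
  · rw [g_eN]
    have h : (0:ℤ) ≤ (p.2 (jN2 n) : ℤ) := by positivity
    linarith

lemma g_inj {k : ℕ} (p p' : (_ : ℕ) × (Fin (n + 3) → ℕ))
    (hrk : p.1 ≤ k) (hrn : p.1 ≤ n) (hsum : ∑ i, p.2 i = k - p.1)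
    (hrk' : p'.1 ≤ k) (hrn' : p'.1 ≤ n) (hsum' : ∑ i, p'.2 i = k - p'.1)
    (he : g n p = g n p') : p = p' := by
  have hs : zS p.2 + (p.2 (jN n) : ℤ) + (p.1 : ℤ) = zS p'.2 + (p'.2 (jN n) : ℤ) + (p'.1 : ℤ) := by
    have := congrFun he (eN1 n); rwa [g_eN1, g_eN1] at this
  have ht : zS p.2 + (p.2 (jN n) : ℤ) + (p.1 : ℤ) + (p.2 (jN1 n) : ℤ)
      = zS p'.2 + (p'.2 (jN n) : ℤ) + (p'.1 : ℤ) + (p'.2 (jN1 n) : ℤ) := by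
    have := congrFun he (eN n); rwa [g_eN, g_eN] at this
  have hSeq : zS p.2 - (n : ℤ) * (p.2 (jN n) : ℤ) = zS p'.2 - (n : ℤ) * (p'.2 (jN n) : ℤ) := by
    rw [← Sx_g, ← Sx_g, he]
  have hE : ((n:ℤ) + 1) * (p.2 (jN n) : ℤ) + (p.1 : ℤ)
      = ((n:ℤ) + 1) * (p'.2 (jN n) : ℤ) + (p'.1 : ℤ) := by linarith
  have hEn : (n + 1) * p.2 (jN n) + p.1 = (n + 1) * p'.2 (jN n) + p'.1 := by exact_mod_cast hE
  have hd1 : ((n + 1) * p.2 (jN n) + p.1) / (n + 1) = p.2 (jN n) ∧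
      ((n + 1) * p.2 (jN n) + p.1) % (n + 1) = p.1 :=
    (Nat.div_mod_unique (by omega)).2 ⟨by omega, by omega⟩
  have hd2 : ((n + 1) * p.2 (jN n) + p.1) / (n + 1) = p'.2 (jN n) ∧
      ((n + 1) * p.2 (jN n) + p.1) % (n + 1) = p'.1 := by
    rw [hEn]
    exact (Nat.div_mod_unique (by omega)).2 ⟨by omega, by omega⟩
  have hq : p.2 (jN n) = p'.2 (jN n) := hd1.1.symm.trans hd2.1
  have hr : p.1 = p'.1 := hd1.2.symm.trans hd2.2
  have hzSeq : zS p.2 = zS p'.2 := by rw [hq] at hSeq; linarith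
  have hu : p.2 (jN1 n) = p'.2 (jN1 n) := by
    have : (p.2 (jN1 n) : ℤ) = (p'.2 (jN1 n) : ℤ) := by
      rw [hq, hr, hzSeq] at ht; linarith
    exact_mod_cast this
  have hw : p.2 (jN2 n) = p'.2 (jN2 n) := by
    have h1 := sumZ p hrk hsum
    have h2 := sumZ p' hrk' hsum'
    have : (p.2 (jN2 n) : ℤ) = (p'.2 (jN2 n) : ℤ) := by
      rw [hq, hr, hzSeq, hu] at h1
      linarith
    exact_mod_cast this
  have hxe : ∀ i : Fin n, p.2 (jj i) = p'.2 (jj i) := by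
    intro i
    have h1 := congrFun he (emb i)
    rw [g_emb, g_emb] at h1
    have : (p.2 (jj i) : ℤ) = (p'.2 (jj i) : ℤ) := by rw [hq] at h1; linarith
    exact_mod_cast this
  refine Sigma.ext hr (heq_of_eq ?_)
  funext i
  rcases Nat.lt_or_ge i.1 n with h | h
  · have hi : i = jj ⟨i.1, h⟩ := Fin.ext rfl
    rw [hi]; exact hxe ⟨i.1, h⟩
  · have h3 : i.1 = n ∨ i.1 = n + 1 ∨ i.1 = n + 2 := by have := i.2; omega
    rcases h3 with h3 | h3 | h3
    · rw [show i = jN n from Fin.ext (by simpa [jN] using h3)]; exact hq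
    · rw [show i = jN1 n from Fin.ext (by simpa [jN1] using h3)]; exact hu
    · rw [show i = jN2 n from Fin.ext (by simpa [jN2] using h3)]; exact hw


lemma g_surj {k : ℕ} (x : Fin (n + 2) → ℤ) (hx : Q n k x) :
    ∃ p : (_ : ℕ) × (Fin (n + 3) → ℕ),
      (p.1 ≤ k ∧ p.1 ≤ n ∧ ∑ i, p.2 i = k - p.1) ∧ g n p = x := by
  obtain ⟨h1, h2, h3, h4⟩ := hx
  set D : ℤ := x (eN1 n) - Sx x with hD
  have hD0 : 0 ≤ D := by rw [hD]; linarith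
  set q : ℕ := D.toNat / (n + 1) with hqdef
  set r : ℕ := D.toNat % (n + 1) with hrdef
  have hrn : r < n + 1 := Nat.mod_lt _ (by omega)
  have hDn : ((n + 1) * q + r : ℕ) = D.toNat := Nat.div_add_mod D.toNat (n + 1)
  have hDqr : D = ((n:ℤ) + 1) * (q:ℤ) + (r:ℤ) := by
    have h := congrArg (fun m : ℕ => (m:ℤ)) hDn
    push_cast at h
    rw [Int.toNat_of_nonneg hD0] at h
    linarith
  have hq0 : (0:ℤ) ≤ (q:ℤ) := Int.ofNat_nonneg q
  have hy : ∀ i : Fin n, 0 ≤ x (emb i) + (q:ℤ) := by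
    intro i
    by_contra hc
    push_neg at hc
    have hc1 : x (emb i) + (q:ℤ) ≤ -1 := by omega
    have hm := mul_le_mul_of_nonneg_left hc1 (show (0:ℤ) ≤ (n:ℤ) + 1 by positivity)
    have h2i := h2 i
    have hD2 : (0:ℤ) ≤ ((n:ℤ) + 1) * x (emb i) + D := by rw [hD]; linarith
    rw [hDqr] at hD2
    have hrle : (r:ℤ) ≤ (n:ℤ) := by exact_mod_cast Nat.lt_succ_iff.mp hrn
    linarith
  have hSq : 0 ≤ Sx x + (n:ℤ) * (q:ℤ) := by
    have he : Sx x + (n:ℤ) * (q:ℤ) = ∑ i : Fin n, (x (emb i) + (q:ℤ)) := by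
      rw [Finset.sum_add_distrib, Finset.sum_const, Finset.card_univ, Fintype.card_fin,
        nsmul_eq_mul, Sx]
    rw [he]
    exact Finset.sum_nonneg fun i _ => hy i
  have hsr : (r:ℤ) ≤ x (eN1 n) := by
    have he : x (eN1 n) = Sx x + D := by rw [hD]; ring
    rw [he, hDqr]; linarith
  have hrk : (r:ℤ) ≤ (k:ℤ) := le_trans hsr (le_trans (by exact_mod_cast h3) (by exact_mod_cast h4))
  have hrkn : r ≤ k := by exact_mod_cast hrk
  set z : Fin (n + 3) → ℕ := fun i =>
    if h : (i : ℕ) < n then (x (emb ⟨i.1, h⟩) + (q:ℤ)).toNat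
    else if (i : ℕ) = n then q
    else if (i : ℕ) = n + 1 then (x (eN n) - x (eN1 n)).toNat
    else ((k:ℤ) - x (eN n)).toNat with hzdef
  have hzjj : ∀ i : Fin n, (z (jj i) : ℤ) = x (emb i) + (q:ℤ) := by
    intro i
    simp only [z]
    rw [dif_pos (show ((jj i : Fin (n + 3)) : ℕ) < n from i.2)]
    rw [Int.toNat_of_nonneg (hy ⟨(jj i : Fin (n+3)).1, i.2⟩)]
    rfl
  have hzjN : (z (jN n) : ℤ) = (q:ℤ) := by
    simp only [z]; rw [dif_neg (by simp [jN]), if_pos (by simp [jN])]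
  have hzjN1 : (z (jN1 n) : ℤ) = x (eN n) - x (eN1 n) := by
    simp only [z]; rw [dif_neg (by simp [jN1]), if_neg (by simp [jN1]), if_pos (by simp [jN1])]
    exact Int.toNat_of_nonneg (by linarith)
  have hzjN2 : (z (jN2 n) : ℤ) = (k:ℤ) - x (eN n) := by
    simp only [z]; rw [dif_neg (by simp [jN2]), if_neg (by simp [jN2]), if_neg (by simp [jN2])]
    exact Int.toNat_of_nonneg (by linarith)
  have hzS : (∑ j : Fin n, (z (jj j) : ℤ)) = Sx x + (n:ℤ) * (q:ℤ) := by
    rw [Finset.sum_congr rfl (fun i _ => hzjj i), Finset.sum_add_distrib, Finset.sum_const,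
      Finset.card_univ, Fintype.card_fin, nsmul_eq_mul, Sx]
  refine ⟨⟨r, z⟩, ⟨hrkn, show r ≤ n by omega, ?_⟩, ?_⟩
  · have hZ : (∑ i : Fin (n + 3), (z i : ℤ)) = (k:ℤ) - (r:ℤ) := by
      rw [sum_split3 (fun i => (z i : ℤ)), hzS, hzjN, hzjN1, hzjN2]
      linear_combination -hDqr
    have hfin : ((∑ i, z i : ℕ) : ℤ) = ((k - r : ℕ) : ℤ) := by
      rw [Nat.cast_sum, Nat.cast_sub hrkn]
      exact hZ
    exact_mod_cast hfin
  · have hp2 : ((⟨r, z⟩ : (_ : ℕ) × (Fin (n + 3) → ℕ))).snd = z := rfl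
    have hp1 : ((⟨r, z⟩ : (_ : ℕ) × (Fin (n + 3) → ℕ))).fst = r := rfl
    funext i
    by_cases hi : (i : ℕ) < n
    · have hie : i = emb ⟨i.1, hi⟩ := Fin.ext rfl
      rw [hie, g_emb, hp2, hzjj ⟨i.1, hi⟩, hzjN]
      ring
    · by_cases hi2 : (i : ℕ) = n
      · rw [show i = eN n from Fin.ext (by simpa [eN] using hi2), g_eN, hp2, hp1, hzjN, hzjN1]
        have e0 : zS z = Sx x + (n:ℤ) * (q:ℤ) := hzS
        rw [e0]
        linear_combination -hDqr
      · rw [show i = eN1 n from Fin.ext (by simpa [eN1] using (by omega : (i:ℕ) = n + 1)),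
          g_eN1, hp2, hp1, hzjN]
        have e0 : zS z = Sx x + (n:ℤ) * (q:ℤ) := hzS
        rw [e0]
        linear_combination -hDqr

end Stmt18Aux

theorem stmt18 (n : ℕ) (hn : 1 ≤ n) (k : ℕ) :
    Set.ncard {x : Fin (n + 2) → ℤ |
        (fun i => (x i : ℝ)) ∈
          (k : ℝ) • convexHull ℝ (insert (0 : Fin (n + 2) → ℝ) (Set.range (Vpt1 n)))}
      = ∑ j ∈ Finset.range (min k n + 1), (k - j + n + 2).choose (n + 2) := by
  classical
  set T : Finset ((_ : ℕ) × (Fin (n + 3) → ℕ)) :=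
    (Finset.range (min k n + 1)).sigma (fun r => Finset.Nat.antidiagonalTuple (n + 3) (k - r))
    with hT
  have hmemT : ∀ p : (_ : ℕ) × (Fin (n + 3) → ℕ),
      p ∈ T ↔ (p.1 ≤ k ∧ p.1 ≤ n ∧ ∑ i, p.2 i = k - p.1) := by
    intro p
    rw [hT, Finset.mem_sigma, Finset.mem_range, Finset.Nat.mem_antidiagonalTuple]
    constructor
    · rintro ⟨h1, h2⟩
      exact ⟨by omega, by omega, h2⟩
    · rintro ⟨h1, h2, h3⟩
      exact ⟨by omega, h3⟩
  have hset : {x : Fin (n + 2) → ℤ |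
      (fun i => (x i : ℝ)) ∈
        (k : ℝ) • convexHull ℝ (insert (0 : Fin (n + 2) → ℝ) (Set.range (Vpt1 n)))}
      = ↑(T.image (Stmt18Aux.g n)) := by
    ext x
    simp only [Set.mem_setOf_eq, Finset.coe_image, Set.mem_image, Finset.mem_coe]
    rw [Stmt18Aux.mem_iff_Q]
    constructor
    · intro hx
      obtain ⟨p, hp, he⟩ := Stmt18Aux.g_surj x hx
      exact ⟨p, (hmemT p).2 hp, he⟩
    · rintro ⟨p, hp, rfl⟩
      obtain ⟨h1, h2, h3⟩ := (hmemT p).1 hp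
      exact Stmt18Aux.Q_g p h1 h2 h3
  rw [hset, Set.ncard_coe_finset,
    Finset.card_image_of_injOn (fun p hp p' hp' he => by
      obtain ⟨a1, a2, a3⟩ := (hmemT p).1 (Finset.mem_coe.1 hp)
      obtain ⟨b1, b2, b3⟩ := (hmemT p').1 (Finset.mem_coe.1 hp')
      exact Stmt18Aux.g_inj p p' a1 a2 a3 b1 b2 b3 he),
    hT, Finset.card_sigma]
  refine Finset.sum_congr rfl fun r hr => ?_
  rw [Stmt18Aux.card_tuple (n + 2) (k - r)]
  congr 1
end

section
/- For every integer k ≥ 0, the number of lattice points of ℤ^{n+2} lying in the dilate k·Δ', where Δ' is the convex hull of the origin and V_1, …, V_{n+1}, equals Σ_{j=0}^{min(k,n)} C(k−j+n+1, n+1), where C(m, r) denotes the binomial coefficient. -/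
open Finset
open scoped Pointwise

/-- The points `V_1, …, V_{n+1}` in `ℝ^{n+2}` (0-indexed: `Vpt' n j` is `V_{j+1}`):
`V_i = e_i + e_{n+1} + e_{n+2}` for `1 ≤ i ≤ n`,
`V_{n+1} = −(e_1+⋯+e_n) + e_{n+1} + e_{n+2}`. -/
def Vpt' (n : ℕ) (j : Fin (n + 1)) (i : Fin (n + 2)) : ℝ :=
  if (j : ℕ) < n then
    (if (i : ℕ) = (j : ℕ) then 1 else 0) + (if (i : ℕ) = n then 1 else 0) +
      (if (i : ℕ) = n + 1 then 1 else 0)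
  else (if (i : ℕ) < n then -1 else 1)

lemma range_choose_eq (d k : ℕ) :
    ∑ x ∈ Finset.range (k+1), (d + x).choose d = (k + (d + 1)).choose (d + 1) := by
  have h1 : ∑ x ∈ Finset.range (k+1), (d + x).choose d = ∑ m ∈ Icc d (k+d), m.choose d := by
    refine Finset.sum_nbij' (fun x => d + x) (fun m => m - d) ?_ ?_ ?_ ?_ ?_ <;>
      intros <;> simp_all <;> omega
  rw [h1, Nat.sum_Icc_choose, show k + d + 1 = k + (d+1) by omega]

lemma sb (d : ℕ) : ∀ (k : ℕ), Nat.card {f : Fin d → ℕ // ∑ i, f i ≤ k} = (k + d).choose d := by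
  induction d with
  | zero =>
    intro k
    have : Nat.card {f : Fin 0 → ℕ // ∑ i, f i ≤ k} = 1 := by
      rw [Nat.card_eq_one_iff_unique]
      exact ⟨⟨fun a b => by ext i; exact i.elim0⟩, ⟨⟨fun i => i.elim0, by simp⟩⟩⟩
    simp [this]
  | succ d ih =>
    intro k
    have e : {f : Fin (d+1) → ℕ // ∑ i, f i ≤ k} ≃
        Σ a : Fin (k+1), {f : Fin d → ℕ // ∑ i, f i ≤ k - (a : ℕ)} := by
      refine ⟨fun f => ⟨⟨f.1 0, ?_⟩, ⟨Fin.tail f.1, ?_⟩⟩,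
        fun p => ⟨Fin.cons (p.1 : ℕ) p.2.1, ?_⟩, ?_, ?_⟩
      · have h := f.2; rw [Fin.sum_univ_succ] at h; omega
      · have h := f.2; rw [Fin.sum_univ_succ] at h; simp only [Fin.tail]; omega
      · have h := p.2.2
        have ha : (p.1 : ℕ) ≤ k := by omega
        rw [Fin.sum_univ_succ]
        simp only [Fin.cons_zero, Fin.cons_succ]
        omega
      · intro f; apply Subtype.ext; simp [Fin.cons_self_tail]
      · rintro ⟨a, f, h⟩; rfl
    rw [Nat.card_congr e]
    have hfin : ∀ a : Fin (k+1), Finite {f : Fin d → ℕ // ∑ i, f i ≤ k - (a:ℕ)} := by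
      intro a
      have hpos : 0 < Nat.card {f : Fin d → ℕ // ∑ i, f i ≤ k - (a:ℕ)} := by
        rw [ih _]; exact Nat.choose_pos (by omega)
      exact (Nat.card_pos_iff.mp hpos).2
    haveI := hfin
    haveI : ∀ a : Fin (k+1), Fintype {f : Fin d → ℕ // ∑ i, f i ≤ k - (a:ℕ)} :=
      fun a => Fintype.ofFinite _
    rw [Nat.card_eq_fintype_card, Fintype.card_sigma]
    have hc : ∀ a : Fin (k+1), Fintype.card {f : Fin d → ℕ // ∑ i, f i ≤ k - (a:ℕ)}
        = (k - (a:ℕ) + d).choose d := by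
      intro a; rw [← Nat.card_eq_fintype_card]; exact ih _
    rw [Finset.sum_congr rfl (fun a _ => hc a),
      Fin.sum_univ_eq_sum_range (fun a => (k - a + d).choose d),
      ← Finset.sum_range_reflect (fun j => (k - j + d).choose d) (k+1)]
    have hcg : ∀ j ∈ Finset.range (k+1), (k - (k + 1 - 1 - j) + d).choose d = (d + j).choose d := by
      intro j hj
      simp only [Finset.mem_range] at hj
      have : k - (k + 1 - 1 - j) + d = d + j := by omega
      rw [this]
    rw [Finset.sum_congr rfl hcg, range_choose_eq]


lemma rhs_eq (n k : ℕ) :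
    ∑ j ∈ Finset.range (min k n + 1), (k - j + n + 1).choose (n + 1) + (k+1).choose (n+2)
      = (k + n + 2).choose (n + 2) := by
  have htot : ∑ j ∈ Finset.range (k+1), (k - j + n + 1).choose (n+1)
      = (k + n + 2).choose (n + 2) := by
    rw [← Finset.sum_range_reflect (fun j => (k - j + n + 1).choose (n+1)) (k+1)]
    have : ∀ j ∈ Finset.range (k+1),
        (k - (k + 1 - 1 - j) + n + 1).choose (n+1) = ((n+1) + j).choose (n+1) := by
      intro j hj; simp only [Finset.mem_range] at hj
      rw [show k - (k + 1 - 1 - j) + n + 1 = (n+1) + j by omega]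
    rw [Finset.sum_congr rfl this, range_choose_eq, show k + (n+1+1) = k + n + 2 by omega]
  rcases le_or_gt k n with h | h
  · rw [min_eq_left h, Nat.choose_eq_zero_of_lt (by omega), Nat.add_zero, ← htot]
  · rw [min_eq_right (by omega : n ≤ k)]
    have hsplit : ∑ j ∈ Finset.range (n+1), (k - j + n + 1).choose (n+1)
        + ∑ j ∈ Finset.Ico (n+1) (k+1), (k - j + n + 1).choose (n+1)
        = ∑ j ∈ Finset.range (k+1), (k - j + n + 1).choose (n+1) := by
      rw [Finset.range_eq_Ico, Finset.range_eq_Ico]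
      exact Finset.sum_Ico_consecutive (fun j => (k - j + n + 1).choose (n+1)) (m := 0) (n := n+1) (k := k+1) (by omega) (by omega)
    have htail : ∑ j ∈ Finset.Ico (n+1) (k+1), (k - j + n + 1).choose (n+1)
        = (k+1).choose (n+2) := by
      have : ∑ j ∈ Finset.Ico (n+1) (k+1), (k - j + n + 1).choose (n+1)
          = ∑ m ∈ Icc (n+1) k, m.choose (n+1) := by
        refine Finset.sum_nbij' (fun j => k - j + n + 1) (fun m => k - m + n + 1) ?_ ?_ ?_ ?_ ?_ <;>
          intros <;> simp_all <;> omega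
      rw [this, Nat.sum_Icc_choose]
    omega


lemma sum_smul_Vpt_apply (n : ℕ) (l : Fin (n+1) → ℝ) (i : Fin (n+2)) :
    (∑ j, l j • Vpt' n j) i =
      if h : (i:ℕ) < n then l ⟨(i:ℕ), by omega⟩ - l (Fin.last n) else ∑ j, l j := by
  rw [Finset.sum_apply]
  simp only [Pi.smul_apply, smul_eq_mul]
  rw [Fin.sum_univ_castSucc]
  have hlast : Vpt' n (Fin.last n) i = if (i:ℕ) < n then -1 else 1 := by
    simp [Vpt', Fin.val_last]
  have hcast : ∀ j : Fin n, Vpt' n j.castSucc i =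
      (if (i : ℕ) = (j : ℕ) then 1 else 0) + (if (i : ℕ) = n then 1 else 0) +
      (if (i : ℕ) = n + 1 then 1 else 0) := by
    intro j
    simp [Vpt', j.isLt]
  by_cases h : (i:ℕ) < n
  · rw [dif_pos h, hlast, if_pos h]
    have hsum : ∑ j : Fin n, l j.castSucc * Vpt' n j.castSucc i = l ⟨(i:ℕ), by omega⟩ := by
      rw [Finset.sum_eq_single (⟨(i:ℕ), h⟩ : Fin n)]
      · rw [hcast, if_pos rfl, if_neg (by omega), if_neg (by omega)]
        norm_num
      · intro j _ hj
        have hne : ¬ ((i:ℕ) = (j:ℕ)) := by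
          intro hc
          exact hj (Fin.ext hc.symm)
        rw [hcast, if_neg hne, if_neg (by omega), if_neg (by omega)]
        ring
      · intro habs; exact absurd (Finset.mem_univ _) habs
    rw [hsum]; ring
  · rw [dif_neg h, hlast, if_neg h, mul_one]
    have hin : (i:ℕ) = n ∨ (i:ℕ) = n + 1 := by have := i.isLt; omega
    have hterm : ∀ j ∈ (Finset.univ : Finset (Fin n)), l j.castSucc * Vpt' n j.castSucc i = l j.castSucc := by
      intro j _
      have h1 : ¬ ((i:ℕ) = (j:ℕ)) := by have := j.isLt; omega
      rcases hin with h2 | h2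
      · rw [hcast, if_neg h1, if_pos h2, if_neg (by omega)]; ring
      · rw [hcast, if_neg h1, if_neg (by omega), if_pos h2]; ring
    rw [Finset.sum_congr rfl hterm, ← Fin.sum_univ_castSucc]


variable {E : Type*} [AddCommGroup E] [Module ℝ E]

lemma mem_convexHull_range_iff {m : ℕ} (v : Fin m → E) (y : E) :
    y ∈ convexHull ℝ (Set.range v) ↔
      ∃ w : Fin m → ℝ, (∀ i, 0 ≤ w i) ∧ ∑ i, w i = 1 ∧ ∑ i, w i • v i = y := by
  constructor
  · intro hy
    rw [convexHull_range_eq_exists_affineCombination] at hy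
    obtain ⟨s, w, h0, h1, hx⟩ := hy
    refine ⟨fun i => if i ∈ s then w i else 0, fun i => by
      by_cases h : i ∈ s <;> simp [h, h0 i] , ?_, ?_⟩
    · rw [Finset.sum_ite_mem, Finset.univ_inter, h1]
    · rw [← hx, affineCombination_eq_linear_combination s v w h1]
      rw [← Finset.sum_subset (Finset.subset_univ s) (fun i _ hi => by simp [hi])]
      exact Finset.sum_congr rfl fun i hi => by simp [hi]
  · rintro ⟨w, h0, h1, hx⟩
    exact mem_convexHull_of_exists_fintype w v h0 h1 (fun i => Set.mem_range_self i) hx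

lemma mem_ksmul_hull_iff (n k : ℕ) (x : Fin (n+2) → ℝ) :
    x ∈ (k : ℝ) • convexHull ℝ (insert (0 : Fin (n + 2) → ℝ) (Set.range (Vpt' n))) ↔
      ∃ l : Fin (n+1) → ℝ, (∀ j, 0 ≤ l j) ∧ ∑ j, l j ≤ k ∧ x = ∑ j, l j • Vpt' n j := by
  have hins : insert (0 : Fin (n + 2) → ℝ) (Set.range (Vpt' n))
      = Set.range (Fin.cons 0 (Vpt' n) : Fin (n+2) → (Fin (n+2) → ℝ)) := by
    rw [Fin.range_cons]
  rw [hins]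
  constructor
  · intro hx
    obtain ⟨y, hy, hky⟩ := Set.mem_smul_set.mp hx
    rw [mem_convexHull_range_iff] at hy
    obtain ⟨w, h0, h1, hx'⟩ := hy
    refine ⟨fun j => (k:ℝ) * w j.succ, fun j => mul_nonneg (Nat.cast_nonneg k) (h0 _), ?_, ?_⟩
    · have : ∑ j : Fin (n+1), (k:ℝ) * w j.succ = (k:ℝ) * (1 - w 0) := by
        rw [← Finset.mul_sum]
        congr 1
        have := h1
        rw [Fin.sum_univ_succ] at this
        linarith
      rw [this]
      nlinarith [h0 0, Nat.cast_nonneg (α := ℝ) k]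
    · rw [← hky, ← hx', Finset.smul_sum]
      rw [Fin.sum_univ_succ]
      simp only [Fin.cons_zero, Fin.cons_succ, smul_zero, smul_smul]
      rw [zero_add]
  · rintro ⟨l, h0, h1, rfl⟩
    rcases eq_or_ne (k:ℝ) 0 with hk | hk
    · have hl : ∀ j, l j = 0 := by
        intro j
        have hle : l j ≤ ∑ j, l j := Finset.single_le_sum (fun i _ => h0 i) (Finset.mem_univ j)
        have := h0 j
        rw [hk] at h1
        linarith
      have : (∑ j, l j • Vpt' n j) = 0 := by
        rw [Finset.sum_eq_zero]
        intro j _; rw [hl j, zero_smul]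
      rw [this]
      refine Set.mem_smul_set.mpr ⟨0, ?_, by rw [smul_zero]⟩
      exact subset_convexHull ℝ _ ⟨0, Fin.cons_zero _ _⟩
    · have hkpos : (0:ℝ) < k := lt_of_le_of_ne (Nat.cast_nonneg k) (Ne.symm hk)
      set w : Fin (n+2) → ℝ := Fin.cons (((k:ℝ) - ∑ j, l j)/k) (fun j => l j / k) with hw
      refine Set.mem_smul_set.mpr ⟨∑ i, w i • (Fin.cons 0 (Vpt' n) : Fin (n+2) → _) i, ?_, ?_⟩
      · rw [mem_convexHull_range_iff]
        refine ⟨w, ?_, ?_, rfl⟩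
        · intro i
          refine Fin.cases ?_ ?_ i
          · simp only [hw, Fin.cons_zero]
            apply div_nonneg _ (le_of_lt hkpos); linarith
          · intro j
            simp only [hw, Fin.cons_succ]
            exact div_nonneg (h0 j) (le_of_lt hkpos)
        · rw [Fin.sum_univ_succ]
          simp only [hw, Fin.cons_zero, Fin.cons_succ]
          rw [← Finset.sum_div]
          field_simp
          ring
      · rw [Finset.smul_sum, Fin.sum_univ_succ]
        simp only [Fin.cons_zero, Fin.cons_succ, smul_zero, smul_smul, zero_add]
        refine Finset.sum_congr rfl fun j _ => ?_
        simp only [hw, Fin.cons_succ]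
        rw [mul_div_cancel₀ _ hk]


def emb (n : ℕ) (i : Fin n) : Fin (n+2) := ⟨(i:ℕ), by omega⟩

def Pset (n : ℕ) (k : ℕ) : Set (Fin (n+2) → ℤ) :=
  {x | x ⟨n, by omega⟩ = x ⟨n+1, by omega⟩ ∧ 0 ≤ x ⟨n, by omega⟩ ∧ x ⟨n, by omega⟩ ≤ k ∧
       0 ≤ x ⟨n, by omega⟩ - ∑ i : Fin n, x (emb n i) ∧
       ∀ i0 : Fin n, ((n:ℤ)+1) * (- x (emb n i0)) ≤
          x ⟨n, by omega⟩ - ∑ i : Fin n, x (emb n i)}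

def Uset (n : ℕ) (k : ℕ) : Set (Fin (n+2) → ℕ) :=
  {f | ∑ i, f i ≤ k ∧ (f ⟨n, by omega⟩ = 0 ∨ ∃ i : Fin n, f (emb n i) = 0)}

/-- split a sum over `Fin (n+2)` -/
lemma sum_fin_split {M : Type*} [AddCommMonoid M] (n : ℕ) (g : Fin (n+2) → M) :
    ∑ i, g i = (∑ i : Fin n, g (emb n i)) + g ⟨n, by omega⟩ + g ⟨n+1, by omega⟩ := by
  rw [Fin.sum_univ_castSucc (f := g), Fin.sum_univ_castSucc (f := fun i : Fin (n+1) => g i.castSucc)]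
  rfl

def cmax (n : ℕ) (x : Fin (n+2) → ℤ) : ℤ :=
  (insert (0:ℤ) (Finset.image (fun i : Fin n => - x (emb n i)) Finset.univ)).max' (by simp)

lemma cmax_nonneg (n : ℕ) (x : Fin (n+2) → ℤ) : 0 ≤ cmax n x :=
  Finset.le_max' _ _ (Finset.mem_insert_self _ _)

lemma le_cmax (n : ℕ) (x : Fin (n+2) → ℤ) (i : Fin n) : - x (emb n i) ≤ cmax n x := by
  exact Finset.le_max' _ (-x (emb n i))
    (Finset.mem_insert_of_mem
      (Finset.mem_image_of_mem (fun i : Fin n => - x (emb n i)) (Finset.mem_univ i)))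

lemma cmax_cases (n : ℕ) (x : Fin (n+2) → ℤ) :
    cmax n x = 0 ∨ ∃ i : Fin n, cmax n x = - x (emb n i) := by
  have := Finset.max'_mem (insert (0:ℤ)
    (Finset.image (fun i : Fin n => - x (emb n i)) Finset.univ)) (by simp)
  rw [Finset.mem_insert] at this
  rcases this with h | h
  · exact Or.inl h
  · rw [Finset.mem_image] at h
    obtain ⟨i, _, hi⟩ := h
    exact Or.inr ⟨i, hi.symm⟩

def Phi (n : ℕ) (x : Fin (n+2) → ℤ) : Fin (n+2) → ℕ := fun i =>
  if h : (i:ℕ) < n then (x (emb n ⟨(i:ℕ), h⟩) + cmax n x).toNat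
  else if (i:ℕ) = n then (cmax n x).toNat
  else (x ⟨n, by omega⟩ - (∑ j : Fin n, x (emb n j)) - ((n:ℤ)+1) * cmax n x).toNat

def Psi (n : ℕ) (f : Fin (n+2) → ℕ) : Fin (n+2) → ℤ := fun i =>
  if (i:ℕ) < n then (f i : ℤ) - (f ⟨n, by omega⟩ : ℤ) else ((∑ j, f j : ℕ) : ℤ)

lemma Phi_emb (n : ℕ) (x : Fin (n+2) → ℤ) (i : Fin n) :
    Phi n x (emb n i) = (x (emb n i) + cmax n x).toNat := by
  have h : ((emb n i : Fin (n+2)) : ℕ) < n := i.isLt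
  rw [Phi, dif_pos h]
  have : emb n ⟨((emb n i : Fin (n+2)) : ℕ), h⟩ = emb n i := Fin.ext rfl
  rw [this]

lemma Phi_n (n : ℕ) (x : Fin (n+2) → ℤ) : Phi n x ⟨n, by omega⟩ = (cmax n x).toNat := by
  rw [Phi, dif_neg (by simp), if_pos rfl]

lemma Phi_n1 (n : ℕ) (x : Fin (n+2) → ℤ) : Phi n x ⟨n+1, by omega⟩ =
    (x ⟨n, by omega⟩ - (∑ j : Fin n, x (emb n j)) - ((n:ℤ)+1) * cmax n x).toNat := by
  rw [Phi, dif_neg (by simp), if_neg (by simp)]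

lemma cmaxD (n : ℕ) (x : Fin (n+2) → ℤ) (hx : x ∈ Pset n k) :
    ((n:ℤ)+1) * cmax n x ≤ x ⟨n, by omega⟩ - ∑ i : Fin n, x (emb n i) := by
  obtain ⟨he, h0s, hsk, hd0, hdi⟩ := hx
  rcases cmax_cases n x with h | ⟨i0, h⟩
  · rw [h, mul_zero]; exact hd0
  · rw [h]; exact hdi i0

lemma sum_Phi (n k : ℕ) (x : Fin (n+2) → ℤ) (hx : x ∈ Pset n k) :
    ((∑ i, Phi n x i : ℕ) : ℤ) = x ⟨n, by omega⟩ := by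
  obtain ⟨he, h0s, hsk, hd0, hdi⟩ := hx
  have hcD := cmaxD n x ⟨he, h0s, hsk, hd0, hdi⟩
  have hc0 := cmax_nonneg n x
  rw [sum_fin_split n (Phi n x)]
  push_cast
  rw [Phi_n, Phi_n1]
  rw [Finset.sum_congr rfl (fun i _ => congrArg _ (Phi_emb n x i))]
  push_cast
  rw [Int.toNat_of_nonneg hc0,
    Int.toNat_of_nonneg (by linarith),
    Finset.sum_congr rfl (fun i _ => Int.toNat_of_nonneg (by have := le_cmax n x i; omega)),
    Finset.sum_add_distrib]
  simp only [Finset.sum_const, Finset.card_univ, Fintype.card_fin, nsmul_eq_mul]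
  ring

lemma Phi_mem (n k : ℕ) (x : Fin (n+2) → ℤ) (hx : x ∈ Pset n k) : Phi n x ∈ Uset n k := by
  have hsum := sum_Phi n k x hx
  obtain ⟨he, h0s, hsk, hd0, hdi⟩ := hx
  constructor
  · have : ((∑ i, Phi n x i : ℕ) : ℤ) ≤ (k : ℤ) := by rw [hsum]; exact hsk
    exact_mod_cast this
  · rcases cmax_cases n x with h | ⟨i0, h⟩
    · left; rw [Phi_n, h]; rfl
    · right
      exact ⟨i0, by rw [Phi_emb n x i0, h]; simp⟩

set_option maxHeartbeats 1000000 in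
lemma Psi_mem (n k : ℕ) (hn : 1 ≤ n) (f : Fin (n+2) → ℕ) (hf : f ∈ Uset n k) :
    Psi n f ∈ Pset n k := by
  obtain ⟨hk, hcond⟩ := hf
  have hPn : Psi n f ⟨n, by omega⟩ = ((∑ j, f j : ℕ) : ℤ) := by
    rw [Psi, if_neg (by simp)]
  have hPn1 : Psi n f ⟨n+1, by omega⟩ = ((∑ j, f j : ℕ) : ℤ) := by
    rw [Psi, if_neg (by simp)]
  have hPemb : ∀ i : Fin n, Psi n f (emb n i) = (f (emb n i) : ℤ) - (f ⟨n, by omega⟩ : ℤ) := by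
    intro i
    rw [Psi, if_pos (by exact i.isLt)]
  have hsplit := sum_fin_split n (fun i => (f i : ℤ))
  have hD : Psi n f ⟨n, by omega⟩ - ∑ i : Fin n, Psi n f (emb n i)
      = ((n:ℤ)+1) * (f ⟨n, by omega⟩ : ℤ) + (f ⟨n+1, by omega⟩ : ℤ) := by
    rw [hPn, Finset.sum_congr rfl (fun i _ => hPemb i), Finset.sum_sub_distrib]
    simp only [Finset.sum_const, Finset.card_univ, Fintype.card_fin, nsmul_eq_mul]
    push_cast
    rw [hsplit]
    ring
  have hnn : ∀ m : ℕ, (0:ℤ) ≤ (m:ℤ) := fun m => Int.natCast_nonneg m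
  refine ⟨by rw [hPn, hPn1], by rw [hPn]; exact hnn _, ?_, ?_, ?_⟩
  · rw [hPn]; exact_mod_cast hk
  · rw [hD]
    have h1 := hnn (f ⟨n, by omega⟩)
    have h2 := hnn (f ⟨n+1, by omega⟩)
    nlinarith [hnn n]
  · intro i0
    rw [hD, hPemb i0]
    have h1 := hnn (f (emb n i0))
    have h2 := hnn (f ⟨n+1, by omega⟩)
    nlinarith [hnn n]

lemma Psi_Phi (n k : ℕ) (x : Fin (n+2) → ℤ) (hx : x ∈ Pset n k) : Psi n (Phi n x) = x := by
  have hsum := sum_Phi n k x hx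
  obtain ⟨he, h0s, hsk, hd0, hdi⟩ := hx
  funext i
  by_cases h : (i:ℕ) < n
  · rw [Psi, if_pos h]
    have hie : i = emb n ⟨(i:ℕ), h⟩ := Fin.ext rfl
    rw [Phi_n]
    have : Phi n x i = (x (emb n ⟨(i:ℕ), h⟩) + cmax n x).toNat := by
      conv_lhs => rw [hie]
      exact Phi_emb n x ⟨(i:ℕ), h⟩
    rw [this, Int.toNat_of_nonneg (by have := le_cmax n x ⟨(i:ℕ), h⟩; omega),
      Int.toNat_of_nonneg (cmax_nonneg n x)]
    rw [← hie]
    ring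
  · rw [Psi, if_neg h, hsum]
    have hi : i = ⟨n, by omega⟩ ∨ i = ⟨n+1, by omega⟩ := by
      have := i.isLt
      rcases Nat.lt_or_ge (i:ℕ) (n+1) with h' | h'
      · left; exact Fin.ext (show (i:ℕ) = n by omega)
      · right; exact Fin.ext (show (i:ℕ) = n + 1 by omega)
    rcases hi with h' | h'
    · rw [h']
    · rw [h', ← he]

set_option maxHeartbeats 1000000 in
lemma Phi_Psi (n k : ℕ) (hn : 1 ≤ n) (f : Fin (n+2) → ℕ) (hf : f ∈ Uset n k) :
    Phi n (Psi n f) = f := by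
  obtain ⟨hk, hcond⟩ := hf
  have hPn : Psi n f ⟨n, by omega⟩ = ((∑ j, f j : ℕ) : ℤ) := by
    rw [Psi, if_neg (by simp)]
  have hPemb : ∀ i : Fin n, Psi n f (emb n i) = (f (emb n i) : ℤ) - (f ⟨n, by omega⟩ : ℤ) := by
    intro i
    rw [Psi, if_pos (by exact i.isLt)]
  -- cmax of Psi f equals f ⟨n⟩
  have hc : cmax n (Psi n f) = (f ⟨n, by omega⟩ : ℤ) := by
    apply le_antisymm
    · rw [cmax]
      apply Finset.max'_le
      intro y hy
      rcases Finset.mem_insert.mp hy with rfl | hy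
      · exact Int.natCast_nonneg _
      · obtain ⟨i, _, rfl⟩ := Finset.mem_image.mp hy
        rw [hPemb i]
        have : (0:ℤ) ≤ f (emb n i) := Int.natCast_nonneg _
        omega
    · rcases hcond with h0 | ⟨i0, h0⟩
      · rw [h0]; exact_mod_cast cmax_nonneg n (Psi n f)
      · have := le_cmax n (Psi n f) i0
        rw [hPemb i0, h0] at this
        simpa using this
  funext i
  by_cases h : (i:ℕ) < n
  · have hie : i = emb n ⟨(i:ℕ), h⟩ := Fin.ext rfl
    rw [hie, Phi_emb, hc, hPemb]
    have : (f (emb n ⟨(i:ℕ), h⟩) : ℤ) - (f ⟨n, by omega⟩ : ℤ) + (f ⟨n, by omega⟩ : ℤ)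
        = (f (emb n ⟨(i:ℕ), h⟩) : ℤ) := by ring
    rw [this, Int.toNat_natCast]
  · have hi : i = ⟨n, by omega⟩ ∨ i = ⟨n+1, by omega⟩ := by
      have := i.isLt
      rcases Nat.lt_or_ge (i:ℕ) (n+1) with h' | h'
      · left; exact Fin.ext (show (i:ℕ) = n by omega)
      · right; exact Fin.ext (show (i:ℕ) = n + 1 by omega)
    rcases hi with h' | h'
    · rw [h', Phi_n, hc, Int.toNat_natCast]
    · rw [h', Phi_n1, hc, hPn, Finset.sum_congr rfl (fun i _ => hPemb i),
        Finset.sum_sub_distrib]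
      simp only [Finset.sum_const, Finset.card_univ, Fintype.card_fin, nsmul_eq_mul]
      have hsplit := sum_fin_split n (fun i => (f i : ℤ))
      push_cast at hsplit ⊢
      rw [hsplit]
      have : ∀ a b c : ℤ, a + b + c - (a - (n:ℤ) * b) - ((n:ℤ)+1) * b = c := by
        intro a b c; ring
      rw [this]
      exact Int.toNat_natCast _

lemma card_P_eq_U (n k : ℕ) (hn : 1 ≤ n) : Nat.card (Pset n k) = Nat.card (Uset n k) := by
  apply Nat.card_congr
  refine ⟨fun x => ⟨Phi n x.1, Phi_mem n k x.1 x.2⟩,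
    fun f => ⟨Psi n f.1, Psi_mem n k hn f.1 f.2⟩, ?_, ?_⟩
  · intro x; exact Subtype.ext (Psi_Phi n k x.1 x.2)
  · intro f; exact Subtype.ext (Phi_Psi n k hn f.1 f.2)



lemma Aset_card (d k : ℕ) : Set.ncard {f : Fin d → ℕ | ∑ i, f i ≤ k} = (k + d).choose d := by
  rw [← Nat.card_coe_set_eq]
  exact sb d k

lemma Aset_finite (d k : ℕ) : Set.Finite {f : Fin d → ℕ | ∑ i, f i ≤ k} := by
  rw [← Set.finite_coe_iff]
  have hpos : 0 < Nat.card ↥{f : Fin d → ℕ | ∑ i, f i ≤ k} := by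
    rw [Nat.card_coe_set_eq, Aset_card d k]
    exact Nat.choose_pos (by omega)
  exact (Nat.card_pos_iff.mp hpos).2

lemma ind_sum (n : ℕ) :
    ∑ i : Fin (n+2), (if (i:ℕ) < n+1 then 1 else 0) = n + 1 := by
  rw [sum_fin_split n (fun i : Fin (n+2) => if (i:ℕ) < n+1 then 1 else 0)]
  have h1 : ∀ i : Fin n, (if ((emb n i : Fin (n+2)) : ℕ) < n+1 then 1 else 0) = 1 := by
    intro i
    simp only [show ((emb n i : Fin (n+2)) : ℕ) = (i:ℕ) from rfl]
    rw [if_pos (by have := i.isLt; omega)]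
  rw [Finset.sum_congr rfl (fun i _ => h1 i)]
  simp

lemma Bcard (n k : ℕ) :
    Nat.card {f : Fin (n+2) → ℕ // ∑ i, f i ≤ k ∧ ∀ i : Fin (n+2), (i:ℕ) < n+1 → f i ≠ 0}
      = (k+1).choose (n+2) := by
  have e : {f : Fin (n+2) → ℕ // ∑ i, f i ≤ k ∧ ∀ i : Fin (n+2), (i:ℕ) < n+1 → f i ≠ 0}
      ≃ {g : Fin (n+2) → ℕ // ∑ i, g i + (n+1) ≤ k} := by
    refine ⟨fun f => ⟨fun i => f.1 i - (if (i:ℕ) < n+1 then 1 else 0), ?_⟩,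
      fun g => ⟨fun i => g.1 i + (if (i:ℕ) < n+1 then 1 else 0), ?_, ?_⟩, ?_, ?_⟩
    · obtain ⟨hk, hpos⟩ := f.2
      have hpt : ∀ i : Fin (n+2), (f.1 i - (if (i:ℕ) < n+1 then 1 else 0))
          + (if (i:ℕ) < n+1 then 1 else 0) = f.1 i := by
        intro i
        by_cases h : (i:ℕ) < n+1
        · have := hpos i h; simp [h]; omega
        · simp [h]
      have hsum2 : ∑ i, ((f.1 i - (if (i:ℕ) < n+1 then 1 else 0))
            + (if (i:ℕ) < n+1 then 1 else 0))
          = (∑ i, (f.1 i - (if (i:ℕ) < n+1 then 1 else 0)))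
            + ∑ i : Fin (n+2), (if (i:ℕ) < n+1 then 1 else 0) :=
        Finset.sum_add_distrib
      have h3 : ∑ i, ((f.1 i - (if (i:ℕ) < n+1 then 1 else 0))
            + (if (i:ℕ) < n+1 then 1 else 0)) = ∑ i, f.1 i :=
        Finset.sum_congr rfl (fun i _ => hpt i)
      have h4 := ind_sum n
      beta_reduce
      omega
    · have : ∑ i, (g.1 i + (if (i:ℕ) < n+1 then 1 else 0))
          = ∑ i, g.1 i + (n+1) := by
        rw [Finset.sum_add_distrib, ind_sum n]
      rw [this]
      exact g.2
    · intro i hi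
      by_cases h : (i:ℕ) < n+1
      · simp [h]
      · exact absurd hi h
    · intro f
      apply Subtype.ext
      funext i
      obtain ⟨hk, hpos⟩ := f.2
      by_cases h : (i:ℕ) < n+1
      · have := hpos i h; simp [h]; omega
      · simp [h]
    · intro g
      apply Subtype.ext
      funext i
      by_cases h : (i:ℕ) < n+1 <;> simp [h]
  rw [Nat.card_congr e]
  rcases Nat.lt_or_ge k (n+1) with h | h
  · have : IsEmpty {g : Fin (n+2) → ℕ // ∑ i, g i + (n+1) ≤ k} := by
      refine ⟨fun g => ?_⟩
      have := g.2
      omega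
    rw [Nat.card_of_isEmpty]
    exact (Nat.choose_eq_zero_of_lt (by omega)).symm
  · have e2 : {g : Fin (n+2) → ℕ // ∑ i, g i + (n+1) ≤ k}
        ≃ {g : Fin (n+2) → ℕ // ∑ i, g i ≤ k - (n+1)} :=
      Equiv.subtypeEquivRight (fun g => by omega)
    rw [Nat.card_congr e2, sb (n+2) (k - (n+1))]
    congr 1
    omega

lemma Ucard (n k : ℕ) (hn : 1 ≤ n) :
    Set.ncard (Uset n k) = (k + (n+2)).choose (n+2) - (k+1).choose (n+2) := by
  set A : Set (Fin (n+2) → ℕ) := {f | ∑ i, f i ≤ k} with hA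
  set B : Set (Fin (n+2) → ℕ) :=
    {f | ∑ i, f i ≤ k ∧ ∀ i : Fin (n+2), (i:ℕ) < n+1 → f i ≠ 0} with hB
  have hUeq : Uset n k = A \ B := by
    ext f
    simp only [Uset, hA, hB, Set.mem_setOf_eq, Set.mem_diff, Set.mem_setOf_eq]
    constructor
    · rintro ⟨hk, hcond⟩
      refine ⟨hk, ?_⟩
      rintro ⟨-, hpos⟩
      rcases hcond with h0 | ⟨i0, h0⟩
      · exact hpos ⟨n, by omega⟩ (by simp) h0
      · refine hpos (emb n i0) ?_ h0
        simp only [show ((emb n i0 : Fin (n+2)) : ℕ) = (i0:ℕ) from rfl]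
        have := i0.isLt; omega
    · rintro ⟨hk, hnb⟩
      refine ⟨hk, ?_⟩
      by_contra hc
      push_neg at hc
      obtain ⟨h1, h2⟩ := hc
      apply hnb
      refine ⟨hk, ?_⟩
      intro i hi
      by_cases h : (i:ℕ) < n
      · have : emb n ⟨(i:ℕ), h⟩ = i := Fin.ext rfl
        rw [← this]
        exact h2 ⟨(i:ℕ), h⟩
      · have : i = ⟨n, by omega⟩ := Fin.ext (show (i:ℕ) = n by omega)
        rw [this]
        exact h1
  have hBsubA : B ⊆ A := fun f hf => hf.1
  have hAfin : A.Finite := Aset_finite (n+2) k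
  rw [hUeq, Set.ncard_diff hBsubA (hAfin.subset hBsubA)]
  congr 1
  · exact Aset_card (n+2) k
  · rw [← Nat.card_coe_set_eq]
    exact Bcard n k


lemma mem_iff_int (n k : ℕ) (x : Fin (n+2) → ℤ) :
    ((fun i => (x i : ℝ)) ∈
        (k:ℝ) • convexHull ℝ (insert (0 : Fin (n+2) → ℝ) (Set.range (Vpt' n)))) ↔
      (x ⟨n, by omega⟩ = x ⟨n+1, by omega⟩ ∧ 0 ≤ x ⟨n, by omega⟩ ∧ x ⟨n, by omega⟩ ≤ k ∧
       0 ≤ x ⟨n, by omega⟩ - ∑ i : Fin n, x (emb n i) ∧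
       ∀ i0 : Fin n, ((n:ℤ)+1) * (- x (emb n i0)) ≤
          x ⟨n, by omega⟩ - ∑ i : Fin n, x (emb n i)) := by
  rw [mem_ksmul_hull_iff]
  constructor
  · rintro ⟨l, h0, h1, heq⟩
    have happ : ∀ i : Fin (n+2), (x i : ℝ) =
        if h : (i:ℕ) < n then l ⟨(i:ℕ), by omega⟩ - l (Fin.last n) else ∑ j, l j := by
      intro i
      rw [← sum_smul_Vpt_apply n l i, ← heq]
    have hs : (x ⟨n, by omega⟩ : ℝ) = ∑ j, l j := by
      rw [happ ⟨n, by omega⟩, dif_neg (by simp)]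
    have hs1 : (x ⟨n+1, by omega⟩ : ℝ) = ∑ j, l j := by
      rw [happ ⟨n+1, by omega⟩, dif_neg (by simp)]
    have hX : ∀ i : Fin n, (x (emb n i) : ℝ) = l i.castSucc - l (Fin.last n) := by
      intro i
      rw [happ (emb n i), dif_pos (by exact i.isLt)]
      rfl
    have hsum0 : (0:ℝ) ≤ ∑ j, l j := Finset.sum_nonneg fun j _ => h0 j
    have hd : ((x ⟨n, by omega⟩ - ∑ i : Fin n, x (emb n i) : ℤ) : ℝ)
        = ((n:ℝ)+1) * l (Fin.last n) := by
      push_cast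
      rw [hs, Finset.sum_congr rfl (fun i _ => hX i), Finset.sum_sub_distrib]
      rw [Fin.sum_univ_castSucc (f := l)]
      simp [Finset.sum_const, Finset.card_univ]
      ring
    refine ⟨?_, ?_, ?_, ?_, ?_⟩
    · have : (x ⟨n, by omega⟩ : ℝ) = (x ⟨n+1, by omega⟩ : ℝ) := by rw [hs, hs1]
      exact_mod_cast this
    · have : (0:ℝ) ≤ (x ⟨n, by omega⟩ : ℝ) := by rw [hs]; exact hsum0
      exact_mod_cast this
    · have : (x ⟨n, by omega⟩ : ℝ) ≤ (k:ℝ) := by rw [hs]; exact h1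
      exact_mod_cast this
    · have : (0:ℝ) ≤ ((x ⟨n, by omega⟩ - ∑ i : Fin n, x (emb n i) : ℤ) : ℝ) := by
        rw [hd]
        have := h0 (Fin.last n)
        positivity
      exact_mod_cast this
    · intro i0
      have : (((n:ℤ)+1) * (- x (emb n i0)) : ℤ) ≤ (x ⟨n, by omega⟩ - ∑ i : Fin n, x (emb n i) : ℤ) := by
        have hr : ((((n:ℤ)+1) * (- x (emb n i0)) : ℤ) : ℝ)
            ≤ (((x ⟨n, by omega⟩ - ∑ i : Fin n, x (emb n i) : ℤ)) : ℝ) := by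
          rw [hd]
          push_cast
          rw [hX i0]
          have h0' := h0 i0.castSucc
          have hnn : (0:ℝ) ≤ (n:ℝ) + 1 := by positivity
          nlinarith
        exact_mod_cast hr
      exact this
  · rintro ⟨he, h0s, hsk, hd0, hdi⟩
    set s : ℤ := x ⟨n, by omega⟩ with hsdef
    set D : ℤ := s - ∑ i : Fin n, x (emb n i) with hDdef
    set t : ℝ := (D : ℝ) / ((n:ℝ)+1) with htdef
    have hn1 : (0:ℝ) < (n:ℝ)+1 := by positivity
    have ht0 : 0 ≤ t := by
      apply div_nonneg _ (le_of_lt hn1)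
      exact_mod_cast hd0
    have hti : ∀ i : Fin n, -(x (emb n i) : ℝ) ≤ t := by
      intro i
      rw [htdef, le_div_iff₀ hn1]
      have := hdi i
      have : ((((n:ℤ)+1) * (- x (emb n i)) : ℤ) : ℝ) ≤ ((D : ℤ) : ℝ) := by exact_mod_cast this
      push_cast at this
      linarith
    set l : Fin (n+1) → ℝ := Fin.snoc (fun i : Fin n => (x (emb n i) : ℝ) + t) t with hldef
    have hlcs : ∀ i : Fin n, l i.castSucc = (x (emb n i) : ℝ) + t := by
      intro i; rw [hldef]; simp
    have hllast : l (Fin.last n) = t := by rw [hldef]; simp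
    have hsuml : ∑ j, l j = (s : ℝ) := by
      rw [Fin.sum_univ_castSucc (f := l), hllast,
        Finset.sum_congr rfl (fun i _ => hlcs i), Finset.sum_add_distrib]
      simp only [Finset.sum_const, Finset.card_univ, Fintype.card_fin, nsmul_eq_mul]
      have hD : (D:ℝ) = (s:ℝ) - ∑ i : Fin n, (x (emb n i) : ℝ) := by
        rw [hDdef]; push_cast; ring
      have : (n:ℝ) * t + t = (D:ℝ) := by
        rw [htdef]; field_simp
      linarith [hD, this]
    refine ⟨l, ?_, ?_, ?_⟩
    · intro j
      refine Fin.lastCases ?_ ?_ j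
      · rw [hllast]; exact ht0
      · intro i; rw [hlcs i]
        have := hti i; linarith
    · rw [hsuml]; exact_mod_cast hsk
    · funext i
      rw [sum_smul_Vpt_apply n l i]
      by_cases h : (i:ℕ) < n
      · rw [dif_pos h]
        have : (⟨(i:ℕ), by omega⟩ : Fin (n+1)) = (⟨(i:ℕ), h⟩ : Fin n).castSucc := rfl
        rw [this, hlcs, hllast]
        have : emb n ⟨(i:ℕ), h⟩ = i := by
          apply Fin.ext; rfl
        rw [this]; ring
      · rw [dif_neg h, hsuml]
        have : i = ⟨n, by omega⟩ ∨ i = ⟨n+1, by omega⟩ := by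
          have := i.isLt
          rcases Nat.lt_or_ge (i:ℕ) (n+1) with h' | h'
          · left; apply Fin.ext; simp; omega
          · right; apply Fin.ext; simp; omega
        rcases this with h' | h'
        · rw [h', hsdef]
        · rw [h', ← he, hsdef]


theorem stmt19 (n : ℕ) (hn : 1 ≤ n) (k : ℕ) :
    Set.ncard {x : Fin (n + 2) → ℤ |
        (fun i => (x i : ℝ)) ∈
          (k : ℝ) • convexHull ℝ (insert (0 : Fin (n + 2) → ℝ) (Set.range (Vpt' n)))}
      = ∑ j ∈ Finset.range (min k n + 1), (k - j + n + 1).choose (n + 1) := by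
  have hset : {x : Fin (n + 2) → ℤ |
      (fun i => (x i : ℝ)) ∈
        (k : ℝ) • convexHull ℝ (insert (0 : Fin (n + 2) → ℝ) (Set.range (Vpt' n)))}
      = Pset n k := by
    ext x
    exact mem_iff_int n k x
  rw [hset]
  have h1 : Set.ncard (Pset n k) = Set.ncard (Uset n k) := by
    rw [← Nat.card_coe_set_eq, ← Nat.card_coe_set_eq]
    exact card_P_eq_U n k hn
  rw [h1, Ucard n k hn, show k + (n+2) = k + n + 2 by omega]
  have h2 := rhs_eq n k
  omega
end
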